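/- arXiv:1502.00327 — 8 statements merged into one kernel-verified Lean document; each statement's English description precedes it below -/
import Mathlib

section
/- Let P = (p_1,...,p_S) be a probability distribution, n ≥ 1, a > 0, and define the multinomial random vector (X_1,...,X_S) ∼ Multinomial(n; p_1,...,p_S) and p̂_{B,i} = (X_i + a)/(n + Sa), p_{B,i} = (n p_i + a)/(n + Sa). Then E[D(P̂_B ‖ P_B)] ≤ ln(1 + (S-1)/(n + Sa)). -/
open Finset

/-- Expectation of `g` of the counts of a Multinomial(n; p) random vector. -/
noncomputable def mExp (n S : ℕ) (p : Fin S → ℝ) (g : (Fin S → ℕ) → ℝ) : ℝ :=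
  ∑ x : Fin S → Fin (n + 1),
    if (∑ i, ((x i : ℕ))) = n then
      ((n.factorial : ℝ) / ∏ i, ((x i : ℕ).factorial : ℝ)) *
        (∏ i, p i ^ (x i : ℕ)) * g (fun i => (x i : ℕ))
    else 0


lemma aux_gen (n S : ℕ) (p : Fin S → ℝ) (hps : ∑ i, p i = 1) (i : Fin S) (t : ℝ) :
    ∑ k ∈ piAntidiag (univ : Finset (Fin S)) n,
      ((Nat.multinomial univ k : ℝ) * ∏ j, p j ^ k j) * t ^ k i
    = (1 - p i + p i * t) ^ n := by
  set f : Fin S → ℝ := fun j => if j = i then p i * t else p j with hf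
  have h1 : ∑ j, f j = 1 - p i + p i * t := by
    have : ∀ j, f j = p j + (if j = i then p i * t - p i else 0) := by
      intro j; by_cases h : j = i <;> simp [hf, h]
    rw [Finset.sum_congr rfl fun j _ => this j, Finset.sum_add_distrib, hps,
      Finset.sum_ite_eq' univ i (fun _ => p i * t - p i)]
    simp; ring
  have h2 := Finset.sum_pow_eq_sum_piAntidiag (univ : Finset (Fin S)) f n
  rw [h1] at h2
  rw [h2]
  refine (Finset.sum_congr rfl fun k hk => ?_).symm
  have hprod : ∏ j, f j ^ k j = (∏ j, p j ^ k j) * t ^ k i := by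
    rw [← Finset.mul_prod_erase univ (fun j => f j ^ k j) (mem_univ i),
        ← Finset.mul_prod_erase univ (fun j => p j ^ k j) (mem_univ i)]
    have : ∏ j ∈ univ.erase i, f j ^ k j = ∏ j ∈ univ.erase i, p j ^ k j := by
      refine Finset.prod_congr rfl fun j hj => ?_
      rw [mem_erase] at hj
      simp [hf, hj.1]
    rw [this]
    simp only [hf, if_pos rfl]
    rw [mul_pow]; ring
  rw [hprod]; ring

lemma aux_M0 (n S : ℕ) [NeZero S] (p : Fin S → ℝ) (hps : ∑ i, p i = 1) :
    ∑ k ∈ piAntidiag (univ : Finset (Fin S)) n,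
      ((Nat.multinomial univ k : ℝ) * ∏ j, p j ^ k j) = 1 := by
  have := aux_gen n S p hps ⟨0, Nat.pos_of_ne_zero (NeZero.ne S)⟩ 1
  simpa using this

lemma aux_deriv1 (n S : ℕ) (p : Fin S → ℝ) (hps : ∑ i, p i = 1) (i : Fin S) (t : ℝ) :
    ∑ k ∈ piAntidiag (univ : Finset (Fin S)) n,
      ((Nat.multinomial univ k : ℝ) * ∏ j, p j ^ k j) * ((k i : ℝ) * t ^ (k i - 1))
    = (n : ℝ) * (1 - p i + p i * t) ^ (n - 1) * p i := by
  have hA : HasDerivAt (fun t : ℝ => ∑ k ∈ piAntidiag (univ : Finset (Fin S)) n,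
      ((Nat.multinomial univ k : ℝ) * ∏ j, p j ^ k j) * t ^ k i)
      (∑ k ∈ piAntidiag (univ : Finset (Fin S)) n,
      ((Nat.multinomial univ k : ℝ) * ∏ j, p j ^ k j) * ((k i : ℝ) * t ^ (k i - 1))) t := by
    refine HasDerivAt.fun_sum fun k _ => ?_
    simpa using (hasDerivAt_pow (k i) t).const_mul
      ((Nat.multinomial univ k : ℝ) * ∏ j, p j ^ k j)
  have hB : HasDerivAt (fun t : ℝ => (1 - p i + p i * t) ^ n)
      ((n : ℝ) * (1 - p i + p i * t) ^ (n - 1) * p i) t := by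
    have h0 : HasDerivAt (fun t : ℝ => 1 - p i + p i * t) (p i) t := by
      simpa using ((hasDerivAt_id t).const_mul (p i)).const_add (1 - p i)
    simpa [mul_comm] using h0.fun_pow n
  have heq : (fun t : ℝ => ∑ k ∈ piAntidiag (univ : Finset (Fin S)) n,
      ((Nat.multinomial univ k : ℝ) * ∏ j, p j ^ k j) * t ^ k i)
      = (fun t : ℝ => (1 - p i + p i * t) ^ n) := funext (aux_gen n S p hps i)
  exact hA.unique (heq ▸ hB)

lemma aux_deriv2 (n S : ℕ) (p : Fin S → ℝ) (hps : ∑ i, p i = 1) (i : Fin S) (t : ℝ) :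
    ∑ k ∈ piAntidiag (univ : Finset (Fin S)) n,
      ((Nat.multinomial univ k : ℝ) * ∏ j, p j ^ k j) *
        ((k i : ℝ) * (((k i - 1 : ℕ) : ℝ) * t ^ (k i - 1 - 1)))
    = (n : ℝ) * (((n - 1 : ℕ) : ℝ) * (1 - p i + p i * t) ^ (n - 1 - 1) * p i) * p i := by
  have hA : HasDerivAt (fun t : ℝ => ∑ k ∈ piAntidiag (univ : Finset (Fin S)) n,
      ((Nat.multinomial univ k : ℝ) * ∏ j, p j ^ k j) * ((k i : ℝ) * t ^ (k i - 1)))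
      (∑ k ∈ piAntidiag (univ : Finset (Fin S)) n,
      ((Nat.multinomial univ k : ℝ) * ∏ j, p j ^ k j) *
        ((k i : ℝ) * (((k i - 1 : ℕ) : ℝ) * t ^ (k i - 1 - 1)))) t := by
    refine HasDerivAt.fun_sum fun k _ => ?_
    have := ((hasDerivAt_pow (k i - 1) t).const_mul ((k i : ℝ))).const_mul
      ((Nat.multinomial univ k : ℝ) * ∏ j, p j ^ k j)
    simpa [mul_assoc, mul_comm, mul_left_comm] using this
  have hB : HasDerivAt (fun t : ℝ => (n : ℝ) * (1 - p i + p i * t) ^ (n - 1) * p i)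
      ((n : ℝ) * (((n - 1 : ℕ) : ℝ) * (1 - p i + p i * t) ^ (n - 1 - 1) * p i) * p i) t := by
    have h0 : HasDerivAt (fun t : ℝ => 1 - p i + p i * t) (p i) t := by
      simpa using ((hasDerivAt_id t).const_mul (p i)).const_add (1 - p i)
    have := ((h0.pow (n - 1)).const_mul ((n : ℝ))).mul_const (p i)
    simpa [mul_assoc, mul_comm, mul_left_comm] using this
  have heq : (fun t : ℝ => ∑ k ∈ piAntidiag (univ : Finset (Fin S)) n,
      ((Nat.multinomial univ k : ℝ) * ∏ j, p j ^ k j) * ((k i : ℝ) * t ^ (k i - 1)))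
      = (fun t : ℝ => (n : ℝ) * (1 - p i + p i * t) ^ (n - 1) * p i) :=
    funext (aux_deriv1 n S p hps i)
  exact hA.unique (heq ▸ hB)

lemma aux_sq (k : ℕ) : ((k : ℝ)) ^ 2 = (k : ℝ) * ((k - 1 : ℕ) : ℝ) + (k : ℝ) := by
  cases k with
  | zero => simp
  | succ m => push_cast [Nat.succ_sub_one]; ring

lemma aux_Msq (n S : ℕ) [NeZero S] (hn : 1 ≤ n) (p : Fin S → ℝ) (hps : ∑ i, p i = 1)
    (a : ℝ) (i : Fin S) :
    ∑ k ∈ piAntidiag (univ : Finset (Fin S)) n,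
      ((Nat.multinomial univ k : ℝ) * ∏ j, p j ^ k j) * (((k i : ℝ) + a)) ^ 2
    = (n : ℝ) * p i * (1 - p i) + ((n : ℝ) * p i + a) ^ 2 := by
  have hM1 : ∑ k ∈ piAntidiag (univ : Finset (Fin S)) n,
      ((Nat.multinomial univ k : ℝ) * ∏ j, p j ^ k j) * (k i : ℝ) = (n : ℝ) * p i := by
    have := aux_deriv1 n S p hps i 1
    simpa using this
  have hM2 : ∑ k ∈ piAntidiag (univ : Finset (Fin S)) n,
      ((Nat.multinomial univ k : ℝ) * ∏ j, p j ^ k j) * ((k i : ℝ) * ((k i - 1 : ℕ) : ℝ))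
      = (n : ℝ) * ((n - 1 : ℕ) : ℝ) * p i ^ 2 := by
    have := aux_deriv2 n S p hps i 1
    simpa [mul_assoc, mul_comm, mul_left_comm, sq] using this
  have hM0 := aux_M0 n S p hps
  have hexp : ∀ k : Fin S → ℕ,
      ((Nat.multinomial univ k : ℝ) * ∏ j, p j ^ k j) * (((k i : ℝ) + a)) ^ 2
      = ((Nat.multinomial univ k : ℝ) * ∏ j, p j ^ k j) * ((k i : ℝ) * ((k i - 1 : ℕ) : ℝ))
        + (1 + 2 * a) * (((Nat.multinomial univ k : ℝ) * ∏ j, p j ^ k j) * (k i : ℝ))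
        + a ^ 2 * ((Nat.multinomial univ k : ℝ) * ∏ j, p j ^ k j) := by
    intro k
    have h := aux_sq (k i)
    have : ((k i : ℝ) + a) ^ 2 = (k i : ℝ) * ((k i - 1 : ℕ) : ℝ) + (1 + 2*a) * (k i : ℝ) + a ^ 2 := by
      have : ((k i : ℝ)) ^ 2 = (k i : ℝ) * ((k i - 1 : ℕ) : ℝ) + (k i : ℝ) := h
      nlinarith [this]
    rw [this]; ring
  rw [Finset.sum_congr rfl fun k _ => hexp k]
  rw [Finset.sum_add_distrib, Finset.sum_add_distrib, ← Finset.mul_sum, ← Finset.mul_sum,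
    hM1, hM2, hM0]
  have hn1 : ((n - 1 : ℕ) : ℝ) = (n : ℝ) - 1 := by
    rw [Nat.cast_sub hn]; simp
  rw [hn1]; ring

lemma aux_mExp_eq (n S : ℕ) (p : Fin S → ℝ) (g : (Fin S → ℕ) → ℝ) :
    mExp n S p g = ∑ k ∈ piAntidiag (univ : Finset (Fin S)) n,
        ((Nat.multinomial univ k : ℝ) * ∏ i, p i ^ k i) * g k := by
  unfold mExp
  rw [← Finset.sum_filter]
  refine Finset.sum_nbij' (fun x => fun i => (x i : ℕ))
    (fun k => fun i => ⟨min (k i) n, Nat.lt_succ_of_le (min_le_right _ _)⟩) ?_ ?_ ?_ ?_ ?_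
  · intro x hx
    simp only [mem_filter] at hx
    simp [mem_piAntidiag, hx.2]
  · intro k hk
    simp only [mem_filter, mem_univ, true_and]
    rw [mem_piAntidiag] at hk
    have hle : ∀ i, k i ≤ n := fun i =>
      hk.1 ▸ Finset.single_le_sum (fun j _ => Nat.zero_le (k j)) (mem_univ i)
    calc ∑ i : Fin S, ↑((⟨min (k i) n, Nat.lt_succ_of_le (min_le_right _ _)⟩ : Fin (n+1))) 
          = ∑ i, k i := by
            refine Finset.sum_congr rfl fun i _ => ?_
            simp [min_eq_left (hle i)]
      _ = n := hk.1
  · intro x hx; funext i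
    exact Fin.ext (by simp [Nat.lt_succ_iff.mp (x i).isLt])
  · intro k hk; funext i
    rw [mem_piAntidiag] at hk
    have : k i ≤ n := hk.1 ▸ Finset.single_le_sum (fun j _ => Nat.zero_le (k j)) (mem_univ i)
    simp [Fin.ext_iff, min_eq_left this]
  · intro x hx
    simp only [mem_filter, mem_univ, true_and] at hx
    have hfac : (∏ i, ((x i : ℕ).factorial : ℝ)) ≠ 0 := by
      positivity
    have hspec := Nat.multinomial_spec (univ : Finset (Fin S)) (fun i => (x i : ℕ))
    have : ((Nat.multinomial univ (fun i => ((x i : ℕ))) : ℝ)) =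
        (n.factorial : ℝ) / ∏ i, ((x i : ℕ).factorial : ℝ) := by
      rw [eq_div_iff hfac, mul_comm]
      rw [← Nat.cast_prod, ← Nat.cast_mul, hspec, hx]
    rw [this]

/-- E[D(P̂_B ‖ P_B)] ≤ ln(1 + (S-1)/(n+Sa)) for the Dirichlet-smoothed estimate
p̂_{B,i} = (X_i + a)/(n + Sa) of a multinomial sample. -/
theorem stmt4 (n S : ℕ) (hn : 1 ≤ n) (hS : 2 ≤ S) (a : ℝ) (ha : 0 < a)
    (p : Fin S → ℝ) (hp : ∀ i, 0 ≤ p i) (hps : ∑ i, p i = 1) :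
    mExp n S p (fun x => ∑ i,
        (((x i : ℝ) + a) / ((n : ℝ) + S * a)) *
          Real.log ((((x i : ℝ) + a) / ((n : ℝ) + S * a)) /
            (((n : ℝ) * p i + a) / ((n : ℝ) + S * a))))
      ≤ Real.log (1 + ((S : ℝ) - 1) / ((n : ℝ) + S * a)) := by
  haveI : NeZero S := ⟨by omega⟩
  have hn1 : (1 : ℝ) ≤ (n : ℝ) := by exact_mod_cast hn
  have hS2 : (2 : ℝ) ≤ (S : ℝ) := by exact_mod_cast hS
  set N : ℝ := (n : ℝ) + S * a with hNdef
  have hN : 0 < N := by nlinarith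
  set K := piAntidiag (univ : Finset (Fin S)) n with hK
  set c : (Fin S → ℕ) → ℝ := fun k => (Nat.multinomial univ k : ℝ) * ∏ j, p j ^ k j with hc
  have hc0 : ∀ k, 0 ≤ c k := fun k => by
    apply mul_nonneg (Nat.cast_nonneg _)
    exact Finset.prod_nonneg fun j _ => pow_nonneg (hp j) _
  have hD : ∀ i, 0 < (n : ℝ) * p i + a := fun i => by
    have := hp i; nlinarith
  have hpt : ∀ (k : Fin S → ℕ) (i : Fin S),
      (0:ℝ) < (((k i : ℝ) + a) / N) / (((n : ℝ) * p i + a) / N) :=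
    fun k i => div_pos (div_pos (by positivity) hN) (div_pos (hD i) hN)
  have hsumk : ∀ k ∈ K, ∑ i, (k i : ℝ) = (n : ℝ) := by
    intro k hk
    rw [hK, mem_piAntidiag] at hk
    exact_mod_cast congrArg (Nat.cast : ℕ → ℝ) hk.1
  -- weights on product
  have hw1 : ∑ z ∈ K ×ˢ (univ : Finset (Fin S)), c z.1 * (((z.1 z.2 : ℝ) + a) / N) = 1 := by
    rw [Finset.sum_product]
    have : ∀ k ∈ K, ∑ i, c k * (((k i : ℝ) + a) / N) = c k := by
      intro k hk
      rw [← Finset.mul_sum, ← Finset.sum_div, Finset.sum_add_distrib, hsumk k hk]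
      simp only [Finset.sum_const, card_univ, Fintype.card_fin, nsmul_eq_mul]
      rw [← hNdef, div_self (ne_of_gt hN), mul_one]
    rw [Finset.sum_congr rfl this]
    exact aux_M0 n S p hps
  -- Jensen
  have hjensen :
      (∑ z ∈ K ×ˢ (univ : Finset (Fin S)), (c z.1 * (((z.1 z.2 : ℝ) + a) / N)) •
        Real.log ((((z.1 z.2 : ℝ) + a) / N) / (((n : ℝ) * p z.2 + a) / N)))
      ≤ Real.log (∑ z ∈ K ×ˢ (univ : Finset (Fin S)), (c z.1 * (((z.1 z.2 : ℝ) + a) / N)) •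
          ((((z.1 z.2 : ℝ) + a) / N) / (((n : ℝ) * p z.2 + a) / N))) := by
    refine (strictConcaveOn_log_Ioi.concaveOn).le_map_sum ?_ hw1 ?_
    · intro z _
      exact mul_nonneg (hc0 z.1) (by positivity)
    · intro z _
      exact hpt z.1 z.2
  -- LHS equals jensen LHS
  have hLHS : mExp n S p (fun x => ∑ i,
        (((x i : ℝ) + a) / ((n : ℝ) + S * a)) *
          Real.log ((((x i : ℝ) + a) / ((n : ℝ) + S * a)) /
            (((n : ℝ) * p i + a) / ((n : ℝ) + S * a))))
      = ∑ z ∈ K ×ˢ (univ : Finset (Fin S)), (c z.1 * (((z.1 z.2 : ℝ) + a) / N)) •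
        Real.log ((((z.1 z.2 : ℝ) + a) / N) / (((n : ℝ) * p z.2 + a) / N)) := by
    rw [aux_mExp_eq, Finset.sum_product]
    refine Finset.sum_congr rfl fun k _ => ?_
    rw [Finset.mul_sum]
    refine Finset.sum_congr rfl fun i _ => ?_
    simp only [smul_eq_mul, ← hNdef]
    ring
  -- compute the inner expectation bound
  set T : ℝ := ∑ z ∈ K ×ˢ (univ : Finset (Fin S)), (c z.1 * (((z.1 z.2 : ℝ) + a) / N)) •
          ((((z.1 z.2 : ℝ) + a) / N) / (((n : ℝ) * p z.2 + a) / N)) with hT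
  have hTeq : T = ∑ i, ((n : ℝ) * p i + a) / N
      + ∑ i, (n : ℝ) * p i * (1 - p i) / (((n : ℝ) * p i + a) * N) := by
    rw [hT, Finset.sum_product, Finset.sum_comm, ← Finset.sum_add_distrib]
    refine Finset.sum_congr rfl fun i _ => ?_
    have : ∀ k ∈ K, (c k * (((k i : ℝ) + a) / N)) •
          ((((k i : ℝ) + a) / N) / (((n : ℝ) * p i + a) / N))
        = (c k * ((k i : ℝ) + a) ^ 2) / (((n : ℝ) * p i + a) * N) := by
      intro k _
      rw [smul_eq_mul]
      field_simp
    rw [Finset.sum_congr rfl this, ← Finset.sum_div]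
    simp only [hc]
    rw [aux_Msq n S hn p hps a i]
    have hDi := hD i
    field_simp
    ring
  have hT1 : ∑ i, ((n : ℝ) * p i + a) / N = 1 := by
    rw [← Finset.sum_div, Finset.sum_add_distrib, ← Finset.mul_sum, hps]
    simp only [Finset.sum_const, card_univ, Fintype.card_fin, nsmul_eq_mul]
    rw [mul_one, ← hNdef, div_self (ne_of_gt hN)]
  have hple : ∀ i, p i ≤ 1 := by
    intro i
    rw [← hps]
    exact Finset.single_le_sum (fun j _ => hp j) (mem_univ i)
  have hterm_nonneg : ∀ i : Fin S, 0 ≤ (n : ℝ) * p i * (1 - p i) / (((n : ℝ) * p i + a) * N) := by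
    intro i
    apply div_nonneg _ (le_of_lt (mul_pos (hD i) hN))
    have h1 : (0:ℝ) ≤ 1 - p i := by linarith [hple i]
    have h2 : (0:ℝ) ≤ (n : ℝ) * p i := mul_nonneg (by positivity) (hp i)
    exact mul_nonneg h2 h1
  have hterm_le : ∀ i : Fin S, (n : ℝ) * p i * (1 - p i) / (((n : ℝ) * p i + a) * N)
      ≤ (1 - p i) / N := by
    intro i
    rw [div_le_div_iff₀ (mul_pos (hD i) hN) hN]
    have h1 : 0 ≤ 1 - p i := by linarith [hple i]
    have h2 : (n : ℝ) * p i ≤ (n : ℝ) * p i + a := by linarith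
    have := hp i
    nlinarith [mul_nonneg (mul_nonneg h1 (le_of_lt ha)) (le_of_lt hN)]
  have hTle : T ≤ 1 + ((S : ℝ) - 1) / N := by
    rw [hTeq, hT1]
    have : ∑ i, (n : ℝ) * p i * (1 - p i) / (((n : ℝ) * p i + a) * N)
        ≤ ∑ i : Fin S, (1 - p i) / N := Finset.sum_le_sum fun i _ => hterm_le i
    have hsum : ∑ i : Fin S, (1 - p i) / N = ((S : ℝ) - 1) / N := by
      rw [← Finset.sum_div, Finset.sum_sub_distrib, hps]
      simp [card_univ]
    linarith [this, hsum ▸ this]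
  have hTpos : 0 < T := by
    rw [hTeq, hT1]
    have : 0 ≤ ∑ i, (n : ℝ) * p i * (1 - p i) / (((n : ℝ) * p i + a) * N) :=
      Finset.sum_nonneg fun i _ => hterm_nonneg i
    linarith
  rw [hLHS]
  refine hjensen.trans ?_
  exact Real.log_le_log hTpos hTle
end

section
/- Let P = (p_1,...,p_S) be a probability distribution, n ≥ Sa with a > 0, and P_B = (n/(n+Sa))·P + (Sa/(n+Sa))·U where U is the uniform distribution on S elements. Then |H(P_B) - H(P)| ≤ (2Sa/(n+Sa))·ln((n+Sa)/(2a)). -/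
noncomputable def eta (x : ℝ) : ℝ := -(x * Real.log x)

lemma eta_zero : eta 0 = 0 := by simp [eta]
lemma eta_one : eta 1 = 0 := by simp [eta]

lemma eta_tangent {A c : ℝ} (hA : 0 ≤ A) (hc : 0 < c) :
    eta A ≤ -(A * Real.log c) - A + c := by
  rcases eq_or_lt_of_le hA with h | h
  · simp [eta, ← h]; linarith
  · have h1 : Real.log (c / A) ≤ c / A - 1 := Real.log_le_sub_one_of_pos (by positivity)
    rw [Real.log_div (ne_of_gt hc) (ne_of_gt h)] at h1
    have h2 := mul_le_mul_of_nonneg_left h1 h.le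
    have h3 : A * (c / A - 1) = c - A := by field_simp
    rw [h3] at h2
    unfold eta
    nlinarith

lemma eta_subadd {x d : ℝ} (hx : 0 ≤ x) (hd : 0 ≤ d) :
    eta (x + d) ≤ eta x + eta d := by
  have h1 : x * Real.log x ≤ x * Real.log (x + d) := by
    rcases eq_or_lt_of_le hx with h | h
    · simp [← h]
    · exact mul_le_mul_of_nonneg_left (Real.log_le_log h (by linarith)) hx
  have h2 : d * Real.log d ≤ d * Real.log (x + d) := by
    rcases eq_or_lt_of_le hd with h | h
    · simp [← h]
    · exact mul_le_mul_of_nonneg_left (Real.log_le_log h (by linarith)) hd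
  unfold eta
  nlinarith

lemma eta_maj {u y w : ℝ} (hu : 0 ≤ u) (huy : u ≤ y) (hyw : y ≤ w) :
    eta u + eta (y + w - u) ≤ eta y + eta w := by
  rcases eq_or_lt_of_le (hu.trans huy) with h | hy
  · have hu0 : u = 0 := le_antisymm (huy.trans h.symm.le) hu
    simp [← h, hu0, eta_zero]
  · have hw : 0 < w := hy.trans_le hyw
    have hv : 0 ≤ y + w - u := by linarith
    have h1 := eta_tangent hu hy
    have h2 := eta_tangent hv hw
    have h3 : Real.log y ≤ Real.log w := Real.log_le_log hy hyw
    have h4 : (y - u) * (Real.log y - Real.log w) ≤ 0 :=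
      mul_nonpos_of_nonneg_of_nonpos (by linarith) (by linarith)
    unfold eta at *
    nlinarith

lemma eta_half {d : ℝ} (hd : 0 ≤ d) (hd2 : d ≤ 1/2) : eta (1 - d) ≤ eta d := by
  rcases eq_or_lt_of_le hd with h | hd0
  · simp [← h, eta_zero, eta_one]
  · rcases le_total (Real.log d) (-1) with hl | hl
    · -- d small: eta (1-d) ≤ d ≤ d * (-log d) = eta d
      have h1d : (0:ℝ) < 1 - d := by linarith
      have h1 : Real.log (1 / (1 - d)) ≤ 1 / (1 - d) - 1 :=
        Real.log_le_sub_one_of_pos (by positivity)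
      rw [Real.log_div one_ne_zero (ne_of_gt h1d), Real.log_one] at h1
      have h2 : (1 - d) * (0 - Real.log (1 - d)) ≤ (1 - d) * (1 / (1 - d) - 1) :=
        mul_le_mul_of_nonneg_left (by linarith) h1d.le
      have h3 : (1 - d) * (1 / (1 - d) - 1) = d := by field_simp; ring
      have h4 : d ≤ d * (-Real.log d) := by nlinarith
      unfold eta
      nlinarith
    · -- d ≥ 1/e : tangent at d
      have h1 := eta_tangent (by linarith : (0:ℝ) ≤ 1 - d) hd0
      have h2 : (1 - 2*d) * (-Real.log d - 1) ≤ 0 :=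
        mul_nonpos_of_nonneg_of_nonpos (by linarith) (by linarith)
      unfold eta at *
      nlinarith

lemma eta_diff_le {x d : ℝ} (hx : 0 ≤ x) (hd : 0 ≤ d) (hd2 : d ≤ 1/2) (hxd : x + d ≤ 1) :
    eta x ≤ eta (x + d) + eta d := by
  have key : eta x + eta 1 ≤ eta (x + d) + eta (1 - d) := by
    rcases le_total (x + d) (1 - d) with h | h
    · have := eta_maj hx (by linarith : x ≤ x + d) h
      have hv : x + d + (1 - d) - x = 1 := by ring
      rw [hv] at this
      linarith
    · have := eta_maj hx (by linarith : x ≤ 1 - d) (by linarith : 1 - d ≤ x + d)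
      have hv : 1 - d + (x + d) - x = 1 := by ring
      rw [hv] at this
      linarith
  have := eta_half hd hd2
  rw [eta_one] at key
  linarith

lemma eta_abs {p q : ℝ} (hp0 : 0 ≤ p) (hp1 : p ≤ 1) (hq0 : 0 ≤ q) (hq1 : q ≤ 1)
    (h : |q - p| ≤ 1/2) : |eta q - eta p| ≤ eta |q - p| := by
  rcases le_total p q with hpq | hpq
  · have habs : |q - p| = q - p := abs_of_nonneg (by linarith)
    rw [habs] at h ⊢
    have h1 : eta q ≤ eta p + eta (q - p) := by
      have := eta_subadd hp0 (by linarith : (0:ℝ) ≤ q - p)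
      have e : p + (q - p) = q := by ring
      rwa [e] at this
    have h2 : eta p ≤ eta q + eta (q - p) := by
      have := eta_diff_le hp0 (by linarith : (0:ℝ) ≤ q - p) h (by linarith)
      have e : p + (q - p) = q := by ring
      rwa [e] at this
    rw [abs_le]
    constructor <;> linarith
  · have habs : |q - p| = p - q := by rw [abs_sub_comm]; exact abs_of_nonneg (by linarith)
    rw [habs] at h ⊢
    have h1 : eta p ≤ eta q + eta (p - q) := by
      have := eta_subadd hq0 (by linarith : (0:ℝ) ≤ p - q)
      have e : q + (p - q) = p := by ring
      rwa [e] at this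
    have h2 : eta q ≤ eta p + eta (p - q) := by
      have := eta_diff_le hq0 (by linarith : (0:ℝ) ≤ p - q) h (by linarith)
      have e : q + (p - q) = p := by ring
      rwa [e] at this
    rw [abs_le]
    constructor <;> linarith

lemma sum_eta_bound (S : ℕ) (hS : 2 ≤ S) (t : ℝ) (ht0 : 0 < t) (ht : t ≤ 1/2)
    (p : Fin S → ℝ) (hp : ∀ i, 0 ≤ p i) (hp1 : ∀ i, p i ≤ 1) (hps : ∑ i, p i = 1) :
    ∑ i, eta (t * |1/(S:ℝ) - p i|) ≤ 2 * t * Real.log ((S:ℝ)/(2*t)) := by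
  have hS0 : (0:ℝ) < S := by positivity
  set dd : Fin S → ℝ := fun i => t * |1/(S:ℝ) - p i| with hdd
  have hdd0 : ∀ i, 0 ≤ dd i := fun i => by positivity
  set D := ∑ i, dd i with hD
  have hD0 : 0 ≤ D := Finset.sum_nonneg fun i _ => hdd0 i
  have key : ∀ c : ℝ, 0 < c → ∑ i, eta (dd i) ≤ (-Real.log c - 1) * D + S * c := by
    intro c hc
    have hterm : ∀ i ∈ Finset.univ, eta (dd i) ≤ (-Real.log c - 1) * dd i + c := by
      intro i _
      have h := eta_tangent (hdd0 i) hc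
      have e : (-Real.log c - 1) * dd i + c = -(dd i * Real.log c) - dd i + c := by ring
      linarith
    calc ∑ i, eta (dd i) ≤ ∑ i, ((-Real.log c - 1) * dd i + c) := Finset.sum_le_sum hterm
      _ = (-Real.log c - 1) * D + S * c := by
          rw [Finset.sum_add_distrib, ← Finset.mul_sum, Finset.sum_const, Finset.card_univ,
            Fintype.card_fin, nsmul_eq_mul]
  set L := Real.log ((S:ℝ)/(2*t)) with hL
  rcases le_or_gt 1 L with hL1 | hL1
  · -- main case: c = 2t/S
    have hc : (0:ℝ) < 2*t/S := by positivity
    have hlogc : Real.log (2*t/(S:ℝ)) = -L := by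
      rw [hL, ← Real.log_inv]
      congr 1
      field_simp
    have hD2 : D ≤ 2*t := by
      have : ∀ i ∈ Finset.univ, dd i ≤ t * (1/(S:ℝ) + p i) := by
        intro i _
        have h1 : |1/(S:ℝ) - p i| ≤ 1/(S:ℝ) + p i := by
          have hS1 : (0:ℝ) < 1/S := by positivity
          rw [abs_le]
          exact ⟨by linarith [hp i], by linarith [hp i]⟩
        calc dd i = t * |1/(S:ℝ) - p i| := rfl
          _ ≤ t * (1/(S:ℝ) + p i) := by nlinarith
      calc D ≤ ∑ i, t * (1/(S:ℝ) + p i) := Finset.sum_le_sum this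
        _ = t * ((S:ℝ) * (1/(S:ℝ)) + 1) := by
            rw [← Finset.mul_sum, Finset.sum_add_distrib, Finset.sum_const, Finset.card_univ,
              Fintype.card_fin, nsmul_eq_mul, hps]
        _ = 2 * t := by field_simp; ring
    have hkey := key (2*t/(S:ℝ)) hc
    rw [hlogc] at hkey
    have hSc : (S:ℝ) * (2*t/(S:ℝ)) = 2*t := by field_simp
    rw [hSc] at hkey
    nlinarith
  · -- S = 2 case
    have hexp : (S:ℝ)/(2*t) < Real.exp 1 := by
      have h0 : (0:ℝ) < (S:ℝ)/(2*t) := by positivity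
      calc (S:ℝ)/(2*t) = Real.exp L := by rw [hL, Real.exp_log h0]
        _ < Real.exp 1 := Real.exp_lt_exp.mpr hL1
    have hSle : (S:ℝ) ≤ (S:ℝ)/(2*t) := by
      rw [le_div_iff₀ (by positivity)]
      nlinarith
    have hS3 : (S:ℝ) < 3 := by
      have := Real.exp_one_lt_d9
      nlinarith
    have hS2 : S = 2 := by
      have : S < 3 := by exact_mod_cast hS3
      omega
    subst hS2
    have hc : (0:ℝ) < t/2 := by positivity
    have hkey := key (t/2) hc
    have hD2 : D ≤ t := by
      have hpt : ∀ i ∈ (Finset.univ : Finset (Fin 2)), dd i ≤ t * (1/2) := by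
        intro i _
        have h1 : |1/((2:ℕ):ℝ) - p i| ≤ 1/2 := by
          rw [abs_le]
          push_cast
          constructor <;> [linarith [hp1 i]; linarith [hp i]]
        calc dd i = t * |1/((2:ℕ):ℝ) - p i| := rfl
          _ ≤ t * (1/2) := by nlinarith
      calc D ≤ ∑ _i : Fin 2, t * (1/2) := Finset.sum_le_sum hpt
        _ = t := by simp; ring
    have hlog2 : Real.log (t/2) = Real.log t - Real.log 2 :=
      Real.log_div (ne_of_gt ht0) two_ne_zero
    have hLval : L = -Real.log t := by
      rw [hL]
      push_cast
      rw [show (2:ℝ)/(2*t) = t⁻¹ by field_simp, Real.log_inv]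
    have hlogt : Real.log (t/2) ≤ -1 := by
      rw [Real.log_le_iff_le_exp hc]
      have h1 := Real.exp_one_lt_d9
      have h2 : Real.exp (-1) = (Real.exp 1)⁻¹ := by rw [Real.exp_neg]
      rw [h2]
      have hinv : Real.exp 1 * (Real.exp 1)⁻¹ = 1 := mul_inv_cancel₀ (ne_of_gt (Real.exp_pos 1))
      have hx : (0:ℝ) < (Real.exp 1)⁻¹ := by positivity
      nlinarith
    have hlog2t : Real.log 2 + Real.log t ≤ 0 := by
      have : Real.log (2*t) ≤ 0 := Real.log_nonpos (by positivity) (by linarith)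
      rwa [Real.log_mul two_ne_zero (ne_of_gt ht0)] at this
    rw [hLval]
    push_cast at hkey
    -- hkey : ∑ eta (dd i) ≤ (-log(t/2) - 1) * D + 2 * (t/2)
    have hcoef : 0 ≤ -(Real.log t - Real.log 2) - 1 := by
      rw [hlog2] at hlogt; linarith
    have k1 : (-(Real.log t - Real.log 2) - 1) * D ≤ (-(Real.log t - Real.log 2) - 1) * t :=
      mul_le_mul_of_nonneg_left hD2 hcoef
    have k2 : t * (Real.log 2 + Real.log t) ≤ 0 :=
      mul_nonpos_of_nonneg_of_nonpos ht0.le hlog2t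
    rw [hlog2] at hkey
    change ∑ i : Fin 2, eta (dd i) ≤ _
    nlinarith [hkey, k1, k2]

/-- For n ≥ Sa (a > 0) and P_B = (n/(n+Sa))·P + (Sa/(n+Sa))·Uniform(S),
|H(P_B) - H(P)| ≤ (2Sa/(n+Sa))·ln((n+Sa)/(2a)). -/
theorem stmt5 (S n : ℕ) (hS : 2 ≤ S) (a : ℝ) (ha : 0 < a) (hna : (S : ℝ) * a ≤ n)
    (p : Fin S → ℝ) (hp : ∀ i, 0 ≤ p i) (hps : ∑ i, p i = 1) :
    |(-∑ i, (((n : ℝ) / ((n : ℝ) + S * a)) * p i +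
          ((S : ℝ) * a / ((n : ℝ) + S * a)) * (1 / (S : ℝ))) *
        Real.log (((n : ℝ) / ((n : ℝ) + S * a)) * p i +
          ((S : ℝ) * a / ((n : ℝ) + S * a)) * (1 / (S : ℝ))))
      - (-∑ i, p i * Real.log (p i))|
      ≤ (2 * S * a / ((n : ℝ) + S * a)) * Real.log (((n : ℝ) + S * a) / (2 * a)) := by
  have hS2 : (2:ℝ) ≤ (S:ℝ) := by exact_mod_cast hS
  have hS0 : (0:ℝ) < S := by linarith
  have hSa : 0 < (S:ℝ) * a := by positivity
  have hB0 : 0 < (n:ℝ) + (S:ℝ) * a := by linarith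
  set t := (S:ℝ) * a / ((n:ℝ) + (S:ℝ) * a) with htdef
  have ht0 : 0 < t := by positivity
  have ht : t ≤ 1/2 := by
    rw [htdef, div_le_iff₀ hB0]
    nlinarith
  have hn1t : (n:ℝ) / ((n:ℝ) + (S:ℝ) * a) = 1 - t := by
    rw [htdef]
    field_simp
    ring
  have hc1 : 2 * (S:ℝ) * a / ((n:ℝ) + (S:ℝ) * a) = 2 * t := by
    rw [htdef]; ring
  have hc2 : ((n:ℝ) + (S:ℝ) * a) / (2 * a) = (S:ℝ) / (2 * t) := by
    rw [htdef]
    field_simp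
  rw [hn1t, hc1, hc2]
  have hp1 : ∀ i, p i ≤ 1 := by
    intro i
    rw [← hps]
    exact Finset.single_le_sum (fun j _ => hp j) (Finset.mem_univ i)
  set q : Fin S → ℝ := fun i => (1 - t) * p i + t * (1 / (S:ℝ)) with hqdef
  have hq0 : ∀ i, 0 ≤ q i := by
    intro i
    have := hp i
    have h1 : (0:ℝ) ≤ 1/S := by positivity
    simp only [hqdef]
    nlinarith
  have hq1 : ∀ i, q i ≤ 1 := by
    intro i
    have h1 : (1:ℝ)/S ≤ 1 := by rw [div_le_one hS0]; linarith
    have h4 := hp1 i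
    have h5 := hp i
    simp only [hqdef]
    nlinarith
  have hqp : ∀ i, q i - p i = t * (1/(S:ℝ) - p i) := by
    intro i
    simp only [hqdef]
    ring
  have habs : ∀ i, |q i - p i| = t * |1/(S:ℝ) - p i| := by
    intro i
    rw [hqp i, abs_mul, abs_of_pos ht0]
  have hhalf : ∀ i, |q i - p i| ≤ 1/2 := by
    intro i
    rw [habs i]
    have h1 : |1/(S:ℝ) - p i| ≤ 1 := by
      rw [abs_le]
      have h2 : (0:ℝ) < 1/S := by positivity
      have h3 : (1:ℝ)/S ≤ 1 := by rw [div_le_one hS0]; linarith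
      exact ⟨by linarith [hp1 i], by linarith [hp i]⟩
    nlinarith
  have e1 : (-∑ i, q i * Real.log (q i)) - (-∑ i, p i * Real.log (p i))
      = ∑ i, (eta (q i) - eta (p i)) := by
    simp only [eta]
    rw [Finset.sum_sub_distrib, Finset.sum_neg_distrib, Finset.sum_neg_distrib]
  calc |(-∑ i, q i * Real.log (q i)) - (-∑ i, p i * Real.log (p i))|
      = |∑ i, (eta (q i) - eta (p i))| := by rw [e1]
    _ ≤ ∑ i, |eta (q i) - eta (p i)| := Finset.abs_sum_le_sum_abs _ _
    _ ≤ ∑ i, eta (t * |1/(S:ℝ) - p i|) := by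
        apply Finset.sum_le_sum
        intro i _
        rw [← habs i]
        exact eta_abs (hp i) (hp1 i) (hq0 i) (hq1 i) (hhalf i)
    _ ≤ 2 * t * Real.log ((S:ℝ) / (2 * t)) := sum_eta_bound S hS t ht0 ht p hp hp1 hps
end

section
/- If x, y ∈ [0,1] and |x - y| ≤ 1/2, then |x ln x - y ln y| ≤ -|x - y| · ln |x - y|, with the convention 0·ln 0 = 0. -/
open Real

private lemma psi_hasDeriv {t : ℝ} (ht : t ≠ 0) (ht1 : t ≠ 1) :
    HasDerivAt (fun t : ℝ => t * Real.log t - (1 - t) * Real.log (1 - t))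
      (Real.log t + Real.log (1 - t) + 2) t := by
  have h1 : HasDerivAt (fun t : ℝ => t * Real.log t) (Real.log t + 1) t :=
    Real.hasDerivAt_mul_log ht
  have haff : HasDerivAt (fun t : ℝ => 1 - t) (-1) t := (hasDerivAt_id t).const_sub 1
  have h2 : HasDerivAt (fun t : ℝ => (1 - t) * Real.log (1 - t))
      ((Real.log (1 - t) + 1) * (-1)) t :=
    (Real.hasDerivAt_mul_log (by intro h; apply ht1; linarith [sub_eq_zero.mp h])).comp t haff
  have : HasDerivAt (fun t : ℝ => t * Real.log t - (1 - t) * Real.log (1 - t)) _ t := h1.sub h2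
  convert this using 1
  ring

private lemma psi_convex : ConvexOn ℝ (Set.Icc (0:ℝ) (1/2))
    (fun t : ℝ => t * Real.log t - (1 - t) * Real.log (1 - t)) := by
  have hint : interior (Set.Icc (0:ℝ) (1/2)) = Set.Ioo 0 (1/2) := interior_Icc
  have hderiv : ∀ t ∈ Set.Ioo (0:ℝ) (1/2),
      deriv (fun t : ℝ => t * Real.log t - (1 - t) * Real.log (1 - t)) t
        = Real.log t + Real.log (1 - t) + 2 := by
    intro t ht
    exact (psi_hasDeriv (ne_of_gt ht.1) (by intro h; rw [h] at ht; norm_num at ht)).deriv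
  apply convexOn_of_deriv2_nonneg (convex_Icc _ _)
  · apply Continuous.continuousOn
    exact Real.continuous_mul_log.sub
      (Real.continuous_mul_log.comp (continuous_const.sub continuous_id))
  · rw [hint]
    intro t ht
    exact (psi_hasDeriv (ne_of_gt ht.1) (by intro h; rw [h] at ht; norm_num at ht)
      ).differentiableAt.differentiableWithinAt
  · rw [hint]
    intro t ht
    have heq : deriv (fun t : ℝ => t * Real.log t - (1 - t) * Real.log (1 - t))
        =ᶠ[nhds t] (fun t => Real.log t + Real.log (1 - t) + 2) := by
      filter_upwards [Ioo_mem_nhds ht.1 ht.2] with s hs using hderiv s hs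
    refine DifferentiableAt.differentiableWithinAt ?_
    have h1t : (0:ℝ) < 1 - t := by nlinarith [ht.2]
    have hg : DifferentiableAt ℝ (fun t : ℝ => Real.log t + Real.log (1 - t) + 2) t := by
      have haff : HasDerivAt (fun s : ℝ => 1 - s) (-1) t := (hasDerivAt_id t).const_sub 1
      exact (((Real.hasDerivAt_log (ne_of_gt ht.1)).add
        ((Real.hasDerivAt_log (ne_of_gt h1t)).comp t haff)).add_const 2).differentiableAt
    exact hg.congr_of_eventuallyEq heq
  · rw [hint]
    intro t ht
    have heq : deriv (fun t : ℝ => t * Real.log t - (1 - t) * Real.log (1 - t))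
        =ᶠ[nhds t] (fun t => Real.log t + Real.log (1 - t) + 2) := by
      filter_upwards [Ioo_mem_nhds ht.1 ht.2] with s hs using hderiv s hs
    have h1t : (0:ℝ) < 1 - t := by nlinarith [ht.2]
    have hd2 : deriv (fun t => Real.log t + Real.log (1 - t) + 2) t = t⁻¹ - (1 - t)⁻¹ := by
      have hl : HasDerivAt (fun s : ℝ => Real.log s + Real.log (1 - s) + 2)
          (t⁻¹ + (1 - t)⁻¹ * (-1)) t := by
        have haff : HasDerivAt (fun s : ℝ => 1 - s) (-1) t := (hasDerivAt_id t).const_sub 1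
        exact (((Real.hasDerivAt_log (ne_of_gt ht.1)).add
          ((Real.hasDerivAt_log (ne_of_gt h1t)).comp t haff)).add_const 2)
      rw [hl.deriv]; ring
    calc (0:ℝ) ≤ t⁻¹ - (1 - t)⁻¹ := by
            have h1 : t ≤ 1 - t := by linarith [ht.2]
            have := one_div_le_one_div_of_le ht.1 h1
            simpa [one_div] using this
      _ = deriv^[2] (fun t : ℝ => t * Real.log t - (1 - t) * Real.log (1 - t)) t := by
            simp only [Function.iterate_succ, Function.iterate_zero, Function.id_comp,
              Function.comp_apply]
            rw [heq.deriv_eq, hd2]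

private lemma psi_nonpos {d : ℝ} (hd0 : 0 ≤ d) (hd2 : d ≤ 1/2) :
    d * Real.log d ≤ (1 - d) * Real.log (1 - d) := by
  have h := psi_convex.le_on_segment' (x := 0) (y := 1/2)
    (by constructor <;> norm_num) (by constructor <;> norm_num)
    (a := 1 - 2*d) (b := 2*d) (by linarith) (by linarith) (by ring)
  simp only [smul_eq_mul] at h
  have hc : (1 - 2*d) * 0 + 2*d * (1/2) = d := by ring
  rw [hc] at h
  norm_num at h
  linarith [h]

private lemma negMulLog_smul_le {t s : ℝ} (ht : 0 ≤ t) (ht1 : t ≤ 1) (hs : 0 ≤ s) :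
    t * Real.negMulLog s ≤ Real.negMulLog (t * s) := by
  have h := Real.concaveOn_negMulLog.2 (Set.mem_Ici.2 hs) (Set.mem_Ici.2 (le_refl (0:ℝ)))
    ht (by linarith : (0:ℝ) ≤ 1 - t) (by ring)
  simpa using h

/-- If x, y ∈ [0,1] and |x - y| ≤ 1/2 then |x ln x - y ln y| ≤ -|x-y| ln|x-y|
(with 0·ln 0 = 0, automatic since `Real.log 0 = 0`). -/
theorem stmt7 (x y : ℝ) (hx : x ∈ Set.Icc (0 : ℝ) 1) (hy : y ∈ Set.Icc (0 : ℝ) 1)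
    (hxy : |x - y| ≤ 1 / 2) :
    |x * Real.log x - y * Real.log y| ≤ -|x - y| * Real.log |x - y| := by
  wlog hle : y ≤ x generalizing x y
  · have h := this y x hy hx (by rwa [abs_sub_comm]) (le_of_not_ge hle)
    rwa [abs_sub_comm y x, abs_sub_comm (y * Real.log y)] at h
  obtain ⟨hy0, hy1⟩ := hy
  obtain ⟨hx0, hx1⟩ := hx
  have hd0 : 0 ≤ x - y := by linarith
  rw [abs_of_nonneg hd0] at hxy ⊢
  set d := x - y with hd
  -- goal in terms of negMulLog
  have fd : -d * Real.log d = Real.negMulLog d := by rw [Real.negMulLog]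
  rw [fd, abs_le]
  have fx : x * Real.log x = -Real.negMulLog x := by rw [Real.negMulLog]; ring
  have fy : y * Real.log y = -Real.negMulLog y := by rw [Real.negMulLog]; ring
  constructor
  · -- need : negMulLog x - negMulLog y ≤ negMulLog d
    rcases eq_or_lt_of_le hx0 with hx0' | hx0'
    · have hx0'' : x = 0 := hx0'.symm
      have hy0'' : y = 0 := le_antisymm (by linarith) hy0
      simp [hx0'', hy0'', hd]
    · have h1 : (y/x) * Real.negMulLog x ≤ Real.negMulLog y := by
        have := negMulLog_smul_le (div_nonneg hy0 hx0'.le)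
          (by rw [div_le_one hx0']; exact hle) hx0'.le
        rwa [div_mul_cancel₀ y (ne_of_gt hx0')] at this
      have h2 : (d/x) * Real.negMulLog x ≤ Real.negMulLog d := by
        have := negMulLog_smul_le (div_nonneg hd0 hx0'.le)
          (by rw [div_le_one hx0']; linarith) hx0'.le
        rwa [div_mul_cancel₀ d (ne_of_gt hx0')] at this
      have hsum : (y/x) * Real.negMulLog x + (d/x) * Real.negMulLog x
          = Real.negMulLog x := by
        rw [← add_mul]
        have : (y/x) + (d/x) = 1 := by
          rw [← add_div, hd, div_eq_one_iff_eq (ne_of_gt hx0')]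
          ring
        rw [this, one_mul]
      have : Real.negMulLog x ≤ Real.negMulLog y + Real.negMulLog d := by
        linarith [h1, h2, hsum]
      rw [fx, fy]; linarith
  · -- need : negMulLog y - negMulLog x ≤ negMulLog d
    rcases eq_or_lt_of_le hy1 with hy1' | hy1'
    · have hx1' : x = 1 := le_antisymm hx1 (by linarith [hy1'])
      simp [hx1', hy1', hd, Real.negMulLog]
    · have h1y : (0:ℝ) < 1 - y := by linarith
      set a : ℝ := (1 - x) / (1 - y) with ha
      set b : ℝ := d / (1 - y) with hb
      have ha0 : 0 ≤ a := div_nonneg (by linarith) h1y.le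
      have ha1 : a ≤ 1 := by rw [div_le_one h1y]; linarith
      have hb0 : 0 ≤ b := div_nonneg hd0 h1y.le
      have hb1 : b ≤ 1 := by rw [hb, div_le_one h1y]; linarith
      have hab : a + b = 1 := by
        rw [ha, hb, ← add_div, hd, div_eq_one_iff_eq (ne_of_gt h1y)]
        ring
      have haux1 : a * (1 - y) = 1 - x := div_mul_cancel₀ _ (ne_of_gt h1y)
      have haux2 : b * (1 - y) = d := div_mul_cancel₀ _ (ne_of_gt h1y)
      have h1 : a • Real.negMulLog y + (1-a) • Real.negMulLog 1
          ≤ Real.negMulLog (a • y + (1-a) • (1:ℝ)) :=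
        Real.concaveOn_negMulLog.2 (Set.mem_Ici.2 hy0) (Set.mem_Ici.2 zero_le_one)
          ha0 (by linarith) (by ring)
      have h2 : b • Real.negMulLog y + (1-b) • Real.negMulLog 1
          ≤ Real.negMulLog (b • y + (1-b) • (1:ℝ)) :=
        Real.concaveOn_negMulLog.2 (Set.mem_Ici.2 hy0) (Set.mem_Ici.2 zero_le_one)
          hb0 (by linarith) (by ring)
      simp only [smul_eq_mul, mul_one, Real.negMulLog_one, mul_zero, add_zero] at h1 h2
      have hc1 : a * y + (1 - a) = x := by linear_combination (-1 : ℝ) * haux1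
      have hc2 : b * y + (1 - b) = 1 - d := by linear_combination (-1 : ℝ) * haux2
      rw [hc1] at h1
      rw [hc2] at h2
      -- f y ≤ f x + f (1 - d)
      have hkey : Real.negMulLog y ≤ Real.negMulLog x + Real.negMulLog (1 - d) := by
        calc Real.negMulLog y = a * Real.negMulLog y + b * Real.negMulLog y := by
              rw [← add_mul, hab, one_mul]
          _ ≤ Real.negMulLog x + Real.negMulLog (1 - d) := add_le_add h1 h2
      have hf1d : Real.negMulLog (1 - d) ≤ Real.negMulLog d := by
        have hp := psi_nonpos hd0 hxy
        simp only [Real.negMulLog, neg_mul]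
        linarith
      rw [fx, fy]
      linarith
end

section
/- For f(x) = -x ln x on [0,1] (with f(0)=0) and any h with 0 < h ≤ 1, the second-order Ditzian–Totik modulus of smoothness with weight φ(x) = √(x(1-x)) satisfies ω₂^φ(f, h) = h² ln 4 / (1 + h²). -/
/-- The Ditzian–Totik weight φ(x) = √(x(1-x)). -/
noncomputable def phiDT (x : ℝ) : ℝ := Real.sqrt (x * (1 - x))

/-- Second-order Ditzian–Totik modulus of smoothness on [0,1]. -/
noncomputable def omega2DT (f : ℝ → ℝ) (h : ℝ) : ℝ :=
  sSup {d : ℝ | ∃ u v : ℝ, u ∈ Set.Icc (0 : ℝ) 1 ∧ v ∈ Set.Icc (0 : ℝ) 1 ∧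
    |u - v| ≤ 2 * h * phiDT ((u + v) / 2) ∧
    d = |f u - 2 * f ((u + v) / 2) + f v|}

open Real Set

lemma logL {y : ℝ} (hy : 1 ≤ y) : Real.log y ≤ (y - 1/y)/2 := by
  set g : ℝ → ℝ := fun y => (y - 1/y)/2 - Real.log y with hg
  have key : MonotoneOn g (Ici 1) := by
    apply monotoneOn_of_deriv_nonneg (convex_Ici 1)
    · apply ContinuousOn.sub
      · apply ContinuousOn.div_const
        apply ContinuousOn.sub continuousOn_id
        apply ContinuousOn.div continuousOn_const continuousOn_id
        intro x hx; exact ne_of_gt (lt_of_lt_of_le one_pos hx)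
      · exact Real.continuousOn_log.mono (by intro x hx; simp at hx ⊢; linarith)
    · intro x hx
      rw [interior_Ici] at hx
      have hx0 : (0:ℝ) < x := lt_trans one_pos hx
      exact (((((hasDerivAt_id x).sub ((hasDerivAt_inv (ne_of_gt hx0)).const_mul 1)).div_const 2).sub
        (Real.hasDerivAt_log (ne_of_gt hx0))).differentiableAt).differentiableWithinAt
    · intro x hx
      rw [interior_Ici] at hx
      have hx0 : (0:ℝ) < x := lt_trans one_pos hx
      have hd : HasDerivAt g ((1 - 1 * -(x^2)⁻¹)/2 - x⁻¹) x := by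
        exact (((hasDerivAt_id x).sub ((hasDerivAt_inv (ne_of_gt hx0)).const_mul 1)).div_const 2).sub
          (Real.hasDerivAt_log (ne_of_gt hx0))
      rw [hd.deriv]
      rw [div_sub' (two_ne_zero)]
      apply div_nonneg _ (by norm_num)
      have h2 : (1 - 1 * -(x ^ 2)⁻¹) - 2 * x⁻¹ = (x - 1)^2 / x^2 := by
        field_simp
        ring
      rw [h2]
      positivity
  have h0 : g 1 = 0 := by simp [hg]
  have := key (self_mem_Ici) hy hy
  rw [h0] at this
  simp only [hg] at this
  linarith

noncomputable def psiDT (t : ℝ) : ℝ := (1+t) * Real.log (1+t) + (1-t) * Real.log (1-t)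

lemma psiDT_cont : Continuous psiDT := by
  have h := Real.continuous_mul_log
  unfold psiDT
  exact (h.comp (continuous_const.add continuous_id)).add
    (h.comp (continuous_const.sub continuous_id))

lemma hasDerivAt_psiDT {t : ℝ} (h1 : (1:ℝ) + t ≠ 0) (h2 : (1:ℝ) - t ≠ 0) :
    HasDerivAt psiDT (Real.log (1+t) - Real.log (1-t)) t := by
  have A : HasDerivAt (fun t : ℝ => (1+t) * Real.log (1+t)) (Real.log (1+t) + 1) t := by
    have := (Real.hasDerivAt_mul_log h1).comp t ((hasDerivAt_id t).const_add 1)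
    simpa [Function.comp_def] using this
  have B : HasDerivAt (fun t : ℝ => (1-t) * Real.log (1-t)) (-(Real.log (1-t) + 1)) t := by
    have := (Real.hasDerivAt_mul_log h2).comp t ((hasDerivAt_id t).const_sub 1)
    simpa [Function.comp_def] using this
  have := A.add B
  unfold psiDT
  rw [show Real.log (1+t) - Real.log (1-t) = Real.log (1+t) + 1 + -(Real.log (1-t) + 1) by ring]
  exact this

noncomputable def qDT (t : ℝ) : ℝ := t * (Real.log (1+t) - Real.log (1-t)) - 2 * psiDT t

lemma qDT_nonneg {t : ℝ} (h0 : 0 ≤ t) (h1 : t < 1) : 0 ≤ qDT t := by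
  have key : MonotoneOn qDT (Ico 0 1) := by
    apply monotoneOn_of_deriv_nonneg (convex_Ico 0 1)
    · intro x hx
      simp only [mem_Ico] at hx
      have e1 : (1:ℝ) + x ≠ 0 := by nlinarith [hx.1, hx.2]
      have e2 : (1:ℝ) - x ≠ 0 := by nlinarith [hx.1, hx.2]
      apply ContinuousAt.continuousWithinAt
      have c1 : ContinuousAt (fun t : ℝ => Real.log (1+t)) x :=
        (Real.continuousAt_log e1).comp (by fun_prop)
      have c2 : ContinuousAt (fun t : ℝ => Real.log (1-t)) x :=
        (Real.continuousAt_log e2).comp (by fun_prop)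
      exact (continuousAt_id.mul (c1.sub c2)).sub ((psiDT_cont.continuousAt).const_mul 2)
    · intro x hx
      rw [interior_Ico] at hx
      obtain ⟨hx0, hx1⟩ := hx
      have e1 : (1:ℝ) + x ≠ 0 := by nlinarith
      have e2 : (1:ℝ) - x ≠ 0 := by nlinarith
      have dlog1 : HasDerivAt (fun t : ℝ => Real.log (1+t)) ((1+x)⁻¹) x := by
        have := (Real.hasDerivAt_log e1).comp x ((hasDerivAt_id x).const_add 1)
        simpa [Function.comp_def] using this
      have dlog2 : HasDerivAt (fun t : ℝ => Real.log (1-t)) (-(1-x)⁻¹) x := by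
        have := (Real.hasDerivAt_log e2).comp x ((hasDerivAt_id x).const_sub 1)
        simpa [Function.comp_def] using this
      exact (((hasDerivAt_id x).mul (dlog1.sub dlog2)).sub
        ((hasDerivAt_psiDT e1 e2).const_mul 2)).differentiableAt.differentiableWithinAt
    · intro x hx
      rw [interior_Ico] at hx
      obtain ⟨hx0, hx1⟩ := hx
      have e1 : (0:ℝ) < 1 + x := by linarith
      have e2 : (0:ℝ) < 1 - x := by linarith
      have dlog1 : HasDerivAt (fun t : ℝ => Real.log (1+t)) ((1+x)⁻¹) x := by
        have := (Real.hasDerivAt_log (ne_of_gt e1)).comp x ((hasDerivAt_id x).const_add 1)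
        simpa [Function.comp_def] using this
      have dlog2 : HasDerivAt (fun t : ℝ => Real.log (1-t)) (-(1-x)⁻¹) x := by
        have := (Real.hasDerivAt_log (ne_of_gt e2)).comp x ((hasDerivAt_id x).const_sub 1)
        simpa [Function.comp_def] using this
      have hd : HasDerivAt qDT
          (1 * (Real.log (1+x) - Real.log (1-x)) + x * ((1+x)⁻¹ - -(1-x)⁻¹)
            - 2 * (Real.log (1+x) - Real.log (1-x))) x :=
        ((hasDerivAt_id x).mul (dlog1.sub dlog2)).sub
          ((hasDerivAt_psiDT (ne_of_gt e1) (ne_of_gt e2)).const_mul 2)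
      rw [hd.deriv]
      have hy : (1:ℝ) ≤ (1+x)/(1-x) := by
        rw [le_div_iff₀ e2]; linarith
      have hlog := logL hy
      rw [Real.log_div (ne_of_gt e1) (ne_of_gt e2)] at hlog
      have heq : ((1+x)/(1-x) - 1/((1+x)/(1-x)))/2 = x * ((1+x)⁻¹ - -(1-x)⁻¹) := by
        field_simp
        ring
      rw [heq] at hlog
      linarith
  have h00 : qDT 0 = 0 := by simp [qDT, psiDT]
  have := key (by simp) (by exact ⟨h0, h1⟩) h0
  rw [h00] at this
  exact this

lemma psiDT_le {t : ℝ} (h0 : 0 ≤ t) (h1 : t ≤ 1) : psiDT t ≤ 2 * Real.log 2 * t^2 := by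
  rcases eq_or_lt_of_le h0 with h|h
  · simp [psiDT, ← h]
  set p : ℝ → ℝ := fun t => psiDT t / t^2 with hp
  have key : MonotoneOn p (Ioc 0 1) := by
    apply monotoneOn_of_deriv_nonneg (convex_Ioc 0 1)
    · apply ContinuousOn.div psiDT_cont.continuousOn (by fun_prop)
      intro x hx
      simp only [mem_Ioc] at hx
      exact pow_ne_zero 2 (ne_of_gt hx.1)
    · intro x hx
      rw [interior_Ioc] at hx
      simp only [mem_Ioo] at hx
      have e1 : (1:ℝ) + x ≠ 0 := by nlinarith [hx.1, hx.2]
      have e2 : (1:ℝ) - x ≠ 0 := by nlinarith [hx.1, hx.2]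
      have hx2 : x^2 ≠ 0 := pow_ne_zero 2 (ne_of_gt hx.1)
      exact ((hasDerivAt_psiDT e1 e2).div (hasDerivAt_pow 2 x) hx2).differentiableAt.differentiableWithinAt
    · intro x hx
      rw [interior_Ioc] at hx
      simp only [mem_Ioo] at hx
      obtain ⟨hx0, hx1⟩ := hx
      have e1 : (1:ℝ) + x ≠ 0 := by nlinarith
      have e2 : (1:ℝ) - x ≠ 0 := by nlinarith
      have hx2 : x^2 ≠ 0 := pow_ne_zero 2 (ne_of_gt hx0)
      have hd := (hasDerivAt_psiDT e1 e2).div (hasDerivAt_pow 2 x) hx2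
      rw [show deriv p x = deriv (psiDT / fun x => x ^ 2) x from rfl, hd.deriv]
      apply div_nonneg _ (by positivity)
      have hq := qDT_nonneg (le_of_lt hx0) hx1
      simp only [qDT] at hq
      have hxq := mul_nonneg (le_of_lt hx0) hq
      push_cast
      norm_num
      nlinarith [hxq]
  have hp1 : p 1 = 2 * Real.log 2 := by
    simp [hp, psiDT]
    norm_num
  have := key (mem_Ioc.2 ⟨h, h1⟩) (mem_Ioc.2 ⟨one_pos, le_refl 1⟩) h1
  rw [hp1] at this
  simp only [hp] at this
  rw [div_le_iff₀ (by positivity)] at this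
  linarith

lemma K1 {u v : ℝ} (hv : 0 ≤ v) (hvu : v ≤ u) (hu : 0 < u) :
    u*Real.log u + v*Real.log v - (u+v)*Real.log ((u+v)/2)
      ≤ Real.log 2 * (u-v)^2 / (u+v) := by
  have hs : 0 < u + v := by linarith
  set t := (u-v)/(u+v) with ht
  have ht0 : 0 ≤ t := div_nonneg (by linarith) hs.le
  have ht1 : t ≤ 1 := by rw [div_le_one hs]; linarith
  have hA := psiDT_le ht0 ht1
  have h1t : 1 + t = u/((u+v)/2) := by rw [ht]; field_simp; ring
  have h2t : 1 - t = v/((u+v)/2) := by rw [ht]; field_simp; ring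
  have hm : ((u+v)/2) ≠ 0 := by positivity
  have hlogu : Real.log (u/((u+v)/2)) = Real.log u - Real.log ((u+v)/2) :=
    Real.log_div (ne_of_gt hu) hm
  have hident : u*Real.log u + v*Real.log v - (u+v)*Real.log ((u+v)/2)
      = ((u+v)/2) * psiDT t := by
    rcases eq_or_lt_of_le hv with hv0|hv0
    · rw [psiDT, h1t, h2t, hlogu, ← hv0]
      simp only [zero_div, Real.log_zero, zero_mul, mul_zero, Real.log_zero,
        zero_sub, add_zero, zero_mul]
      field_simp
    · have hlogv : Real.log (v/((u+v)/2)) = Real.log v - Real.log ((u+v)/2) :=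
        Real.log_div (ne_of_gt hv0) hm
      rw [psiDT, h1t, h2t, hlogu, hlogv]
      field_simp
      ring
  rw [hident]
  have hb : ((u+v)/2) * psiDT t ≤ ((u+v)/2) * (2 * Real.log 2 * t^2) :=
    mul_le_mul_of_nonneg_left hA (by positivity)
  refine hb.trans (le_of_eq ?_)
  rw [ht]
  field_simp

lemma K2 {u v : ℝ} (hv : 0 ≤ v) (hvu : v ≤ u) (hu : 0 < u) :
    u*Real.log u + v*Real.log v - (u+v)*Real.log ((u+v)/2)
      ≤ (u+v) * Real.log 2 := by
  have hs : 0 < u + v := by linarith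
  have hm : (0:ℝ) < (u+v)/2 := by positivity
  have b1 : Real.log u ≤ Real.log ((u+v)/2) + Real.log 2 := by
    rw [← Real.log_mul (ne_of_gt hm) two_ne_zero]
    have : (u+v)/2*2 = u+v := by ring
    rw [this]
    exact Real.log_le_log hu (by linarith)
  have b1' : u * Real.log u ≤ u * (Real.log ((u+v)/2) + Real.log 2) :=
    mul_le_mul_of_nonneg_left b1 hu.le
  have b2 : v * Real.log v ≤ v * Real.log ((u+v)/2) := by
    rcases eq_or_lt_of_le hv with hv0|hv0
    · rw [← hv0]; simp
    · exact mul_le_mul_of_nonneg_left (Real.log_le_log hv0 (by linarith)) hv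
  have hlog2 : 0 ≤ Real.log 2 := Real.log_nonneg one_le_two
  nlinarith [mul_nonneg hv hlog2]

lemma log4_eq : Real.log 4 = 2 * Real.log 2 := by
  rw [show (4:ℝ) = 2^2 by norm_num, Real.log_pow]
  push_cast; ring

lemma UBkey (h : ℝ) (h0 : 0 < h) {u v : ℝ} (hu : u ∈ Icc (0:ℝ) 1) (hv : v ∈ Icc (0:ℝ) 1)
    (hvu : v ≤ u) (hcon : |u - v| ≤ 2*h*phiDT ((u+v)/2)) :
    |(-u*Real.log u) - 2*(-((u+v)/2)*Real.log ((u+v)/2)) + (-v*Real.log v)|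
      ≤ h^2*Real.log 4/(1+h^2) := by
  obtain ⟨hu0, hu1⟩ := hu
  obtain ⟨hv0, hv1⟩ := hv
  have hlog2 : 0 ≤ Real.log 2 := Real.log_nonneg one_le_two
  have hden : (0:ℝ) < 1 + h^2 := by positivity
  rcases eq_or_lt_of_le hu0 with hu0'|hu0'
  · -- u = 0, hence v = 0
    have hveq : v = 0 := le_antisymm (hvu.trans hu0'.symm.le) hv0
    rw [← hu0', hveq]
    simp
    positivity
  -- u > 0
  have hs : 0 < u + v := by linarith
  set E := u*Real.log u + v*Real.log v - (u+v)*Real.log ((u+v)/2) with hE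
  have hE0 : 0 ≤ E := by
    have hcx := Real.convexOn_mul_log.2 (mem_Ici.2 hu0) (mem_Ici.2 hv0)
      (by norm_num : (0:ℝ) ≤ 1/2) (by norm_num : (0:ℝ) ≤ 1/2) (by norm_num)
    simp only [smul_eq_mul] at hcx
    have : (1/2*u + 1/2*v) = (u+v)/2 := by ring
    rw [this] at hcx
    rw [hE]; linarith
  have habs : |(-u*Real.log u) - 2*(-((u+v)/2)*Real.log ((u+v)/2)) + (-v*Real.log v)| = E := by
    have : (-u*Real.log u) - 2*(-((u+v)/2)*Real.log ((u+v)/2)) + (-v*Real.log v) = -E := by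
      rw [hE]; ring
    rw [this, abs_neg, abs_of_nonneg hE0]
  rw [habs]
  -- translate the constraint
  have hm0 : 0 ≤ (u+v)/2 := by positivity
  have hm1 : (u+v)/2 ≤ 1 := by linarith
  have hX0 : 0 ≤ ((u+v)/2) * (1 - (u+v)/2) := by nlinarith
  have hd2 : (u-v)^2 ≤ h^2 * ((u+v) * (2-(u+v))) := by
    have h1 : u - v ≤ 2*h*Real.sqrt (((u+v)/2) * (1 - (u+v)/2)) := by
      rw [← abs_of_nonneg (by linarith : (0:ℝ) ≤ u - v)]; exact hcon
    have h2 : (u-v)^2 ≤ (2*h*Real.sqrt (((u+v)/2) * (1 - (u+v)/2)))^2 :=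
      pow_le_pow_left₀ (by linarith) h1 2
    have h3 : (2*h*Real.sqrt (((u+v)/2) * (1 - (u+v)/2)))^2
        = 4*h^2*(((u+v)/2) * (1 - (u+v)/2)) := by
      rw [mul_pow, mul_pow, Real.sq_sqrt hX0]; ring
    rw [h3] at h2
    nlinarith [h2]
  have hk1 := K1 hv0 hvu hu0'
  have hk2 := K2 hv0 hvu hu0'
  rw [← hE] at hk1 hk2
  rw [log4_eq, le_div_iff₀ hden]
  -- (u-v)^2/(u+v) ≤ h^2*(2-(u+v))
  have hb1 : Real.log 2 * (u-v)^2 / (u+v) ≤ Real.log 2 * (h^2 * (2-(u+v))) := by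
    rw [div_le_iff₀ hs]
    have : Real.log 2 * (u-v)^2 ≤ Real.log 2 * (h^2 * ((u+v)*(2-(u+v)))) :=
      mul_le_mul_of_nonneg_left (by nlinarith [hd2]) hlog2
    nlinarith [this]
  have hb2 : E * h^2 ≤ (u+v) * Real.log 2 * h^2 :=
    mul_le_mul_of_nonneg_right hk2 (by positivity)
  have hchain : E ≤ Real.log 2 * (h^2 * (2-(u+v))) := hk1.trans hb1
  nlinarith [hchain, hb2]

/-- For f(x) = -x ln x and 0 < h ≤ 1: ω₂^φ(f,h) = h² ln 4/(1+h²). -/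
theorem stmt8 (h : ℝ) (h0 : 0 < h) (h1 : h ≤ 1) :
    omega2DT (fun x => -x * Real.log x) h = h ^ 2 * Real.log 4 / (1 + h ^ 2) := by
  have hden : (0:ℝ) < 1 + h^2 := by positivity
  have hlog2 : 0 ≤ Real.log 2 := Real.log_nonneg one_le_two
  rw [omega2DT]
  set M := h^2*Real.log 4/(1+h^2) with hM
  set S := {d : ℝ | ∃ u v : ℝ, u ∈ Set.Icc (0 : ℝ) 1 ∧ v ∈ Set.Icc (0 : ℝ) 1 ∧
    |u - v| ≤ 2 * h * phiDT ((u + v) / 2) ∧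
    d = |(fun x => -x * Real.log x) u - 2 * (fun x => -x * Real.log x) ((u + v) / 2)
      + (fun x => -x * Real.log x) v|} with hS
  set u₀ := 2*h^2/(1+h^2) with hu₀
  have hu₀pos : 0 < u₀ := by positivity
  have hu₀le1 : u₀ ≤ 1 := by rw [hu₀, div_le_one hden]; nlinarith
  have hmem : M ∈ S := by
    refine ⟨u₀, 0, ⟨hu₀pos.le, hu₀le1⟩, ⟨le_refl 0, zero_le_one⟩, ?_, ?_⟩
    · have hmid : (u₀+0)/2 = h^2/(1+h^2) := by rw [hu₀]; ring
      have hXeq : (h^2/(1+h^2)) * (1 - h^2/(1+h^2)) = (h/(1+h^2))^2 := by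
        field_simp; ring
      have hphi : phiDT ((u₀+0)/2) = h/(1+h^2) := by
        rw [hmid, phiDT, hXeq, Real.sqrt_sq (by positivity)]
      rw [hphi, sub_zero, abs_of_nonneg hu₀pos.le, hu₀]
      exact le_of_eq (by ring)
    · show M = |(-u₀*Real.log u₀) - 2*(-((u₀+0)/2)*Real.log ((u₀+0)/2)) + (-(0:ℝ)*Real.log 0)|
      have hmid : (u₀+(0:ℝ))/2 = u₀/2 := by ring
      have hl : Real.log (u₀/2) = Real.log u₀ - Real.log 2 :=
        Real.log_div (ne_of_gt hu₀pos) two_ne_zero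
      rw [hmid, hl]
      have hval : (-u₀*Real.log u₀) - 2*(-(u₀/2)*(Real.log u₀ - Real.log 2)) + (-(0:ℝ)*Real.log 0)
          = -(u₀ * Real.log 2) := by ring
      rw [hval, abs_neg, abs_of_nonneg (by positivity)]
      rw [hM, log4_eq, hu₀]
      ring
  have hub : ∀ d ∈ S, d ≤ M := by
    rintro d ⟨u, v, hu, hv, hcon, rfl⟩
    rcases le_total v u with hvu|huv
    · exact UBkey h h0 hu hv hvu hcon
    · have hcon' : |v - u| ≤ 2*h*phiDT ((v+u)/2) := by
        rw [abs_sub_comm, add_comm v u]; exact hcon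
      have hkey := UBkey h h0 hv hu huv hcon'
      have heq : (-u*Real.log u) - 2*(-((u+v)/2)*Real.log ((u+v)/2)) + (-v*Real.log v)
          = (-v*Real.log v) - 2*(-((v+u)/2)*Real.log ((v+u)/2)) + (-u*Real.log u) := by
        rw [add_comm v u]; ring
      show |(-u*Real.log u) - 2*(-((u+v)/2)*Real.log ((u+v)/2)) + (-v*Real.log v)| ≤ M
      rw [heq]
      exact hkey
  apply le_antisymm
  · exact csSup_le ⟨M, hmem⟩ hub
  · exact le_csSup ⟨M, fun d hd => hub d hd⟩ hmem
end

section
/- Let (X_1,...,X_S) ∼ Multinomial(n; p_1,...,p_S), a > 0, and H(P̂_B) = -∑_i p̂_{B,i} ln p̂_{B,i} where p̂_{B,i} = (X_i+a)/(n+Sa). Then Var(H(P̂_B)) ≤ (n/(n+Sa)²)·(3 + ln((n+Sa)/(a+1)))². -/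
open Finset

/-- Dirichlet-smoothed plug-in entropy H(P̂_B) with p̂_{B,i} = (X_i+a)/(n+Sa). -/
noncomputable def Hhat (n S : ℕ) (a : ℝ) (x : Fin S → ℕ) : ℝ :=
  -∑ i, (((x i : ℝ) + a) / ((n : ℝ) + S * a)) *
      Real.log (((x i : ℝ) + a) / ((n : ℝ) + S * a))


/-- count of value `i` among coordinates of `z` -/
def cnt {n S : ℕ} (z : Fin n → Fin S) : Fin S → ℕ := fun i => ∑ j, if z j = i then 1 else 0

lemma cnt_cons {n S : ℕ} (y : Fin S) (z : Fin n → Fin S) (i : Fin S) :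
    cnt (Fin.cons y z) i = (if y = i then 1 else 0) + cnt z i := by
  unfold cnt
  rw [Fin.sum_univ_succ]
  simp only [Fin.cons_zero, Fin.cons_succ]

lemma sum_cnt {n S : ℕ} (z : Fin n → Fin S) : ∑ i, cnt z i = n := by
  unfold cnt
  rw [Finset.sum_comm]
  simp

lemma cnt_le {n S : ℕ} (z : Fin n → Fin S) (i : Fin S) : cnt z i ≤ n := by
  have h := sum_cnt z
  calc cnt z i ≤ ∑ i', cnt z i' := Finset.single_le_sum (fun _ _ => Nat.zero_le _) (mem_univ i)
  _ = n := h

lemma pw_eq_prod_pow {n S : ℕ} (p : Fin S → ℝ) (z : Fin n → Fin S) :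
    (∏ j, p (z j)) = ∏ i, p i ^ cnt z i := by
  unfold cnt
  have : ∀ i : Fin S, p i ^ (∑ j, if z j = i then 1 else 0) = ∏ j, p i ^ (if z j = i then 1 else 0) := by
    intro i; rw [Finset.prod_pow_eq_pow_sum]
  rw [Finset.prod_congr rfl (fun i _ => this i), Finset.prod_comm]
  refine Finset.prod_congr rfl (fun j _ => ?_)
  have : ∀ i : Fin S, p i ^ (if z j = i then 1 else 0) = if z j = i then p i else 1 := by
    intro i; split_ifs <;> simp
  rw [Finset.prod_congr rfl (fun i _ => this i), Finset.prod_ite_eq]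
  simp
lemma cnt_cons_iff {n S : ℕ} (y : Fin S) (z : Fin n → Fin S) (x : Fin S → ℕ) :
    cnt (Fin.cons y z) = x ↔ (1 ≤ x y ∧ cnt z = Function.update x y (x y - 1)) := by
  constructor
  · intro h
    have h' : ∀ i, (if y = i then 1 else 0) + cnt z i = x i := by
      intro i; rw [← cnt_cons, h]
    have hy := h' y
    rw [if_pos rfl] at hy
    refine ⟨by omega, funext fun i => ?_⟩
    rcases eq_or_ne i y with rfl | hne
    · rw [Function.update_self]; omega
    · rw [Function.update_of_ne hne]
      have hi := h' i
      rw [if_neg (Ne.symm hne)] at hi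
      omega
  · rintro ⟨h1, h2⟩
    funext i
    rw [cnt_cons, h2]
    rcases eq_or_ne i y with rfl | hne
    · rw [Function.update_self, if_pos rfl]; omega
    · rw [Function.update_of_ne hne, if_neg (Ne.symm hne)]; omega

lemma fiber_card (S : ℕ) : ∀ (n : ℕ) (x : Fin S → ℕ), (∑ i, x i) = n →
    ((univ : Finset (Fin n → Fin S)).filter (fun z => cnt z = x)).card * ∏ i, (x i).factorial
      = n.factorial := by
  intro n
  induction n with
  | zero =>
    intro x hx
    have hx0 : ∀ i, x i = 0 := by
      intro i
      have : x i ≤ ∑ i', x i' := Finset.single_le_sum (fun _ _ => Nat.zero_le _) (mem_univ i)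
      omega
    have hfilter : (univ : Finset (Fin 0 → Fin S)).filter (fun z => cnt z = x) = univ := by
      apply Finset.filter_true_of_mem
      intro z _
      funext i
      simp [cnt, hx0 i]
    have h1 : ∏ i, (x i).factorial = 1 := by
      apply Finset.prod_eq_one; intro i _; rw [hx0 i]; rfl
    rw [hfilter, h1]
    simp
  | succ n ih =>
    intro x hx
    have hcard : ((univ : Finset (Fin (n+1) → Fin S)).filter (fun z => cnt z = x)).card
        = ∑ y : Fin S, (if 1 ≤ x y then
            ((univ : Finset (Fin n → Fin S)).filter
              (fun z => cnt z = Function.update x y (x y - 1))).card else 0) := by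
      rw [Finset.card_filter]
      rw [← Fintype.sum_equiv (Fin.consEquiv (fun _ => Fin S))
        (fun q => if cnt (Fin.cons q.1 q.2) = x then 1 else 0)
        (fun w => if cnt w = x then 1 else 0) (fun q => rfl)]
      rw [Fintype.sum_prod_type]
      refine Finset.sum_congr rfl (fun y _ => ?_)
      by_cases hy : 1 ≤ x y
      · rw [if_pos hy, Finset.card_filter]
        refine Finset.sum_congr rfl (fun z _ => ?_)
        simp [cnt_cons_iff, hy]
      · rw [if_neg hy]
        apply Finset.sum_eq_zero
        intro z _
        simp [cnt_cons_iff, hy]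
    rw [hcard, Finset.sum_mul]
    have hterm : ∀ y : Fin S,
        (if 1 ≤ x y then
            ((univ : Finset (Fin n → Fin S)).filter
              (fun z => cnt z = Function.update x y (x y - 1))).card else 0) * ∏ i, (x i).factorial
          = x y * n.factorial := by
      intro y
      by_cases hy : 1 ≤ x y
      · rw [if_pos hy]
        set x' := Function.update x y (x y - 1) with hx'
        have hsplit : x y + ∑ i ∈ univ.erase y, x i = ∑ i, x i :=
          Finset.add_sum_erase univ x (mem_univ y)
        have hsum' : ∑ i, x' i = n := by
          rw [hx', Finset.sum_update_of_mem (mem_univ y), ← Finset.erase_eq]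
          omega
        have hIH := ih x' hsum'
        have hfun : ∀ i, (x' i).factorial
            = Function.update (fun i => (x i).factorial) y ((x y - 1).factorial) i := by
          intro i
          rcases eq_or_ne i y with rfl | hne
          · simp [hx']
          · simp [hx', Function.update_of_ne hne]
        have hx'prod : ∏ i, (x' i).factorial
            = (x y - 1).factorial * ∏ i ∈ univ.erase y, (x i).factorial := by
          rw [Finset.prod_congr rfl (fun i _ => hfun i),
            Finset.prod_update_of_mem (mem_univ y), ← Finset.erase_eq]
        have hps : (x y).factorial * ∏ i ∈ univ.erase y, (x i).factorial
            = ∏ i, (x i).factorial := Finset.mul_prod_erase univ (fun i => (x i).factorial) (mem_univ y)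
        have hfac : (x y).factorial = x y * (x y - 1).factorial := by
          conv_lhs => rw [show x y = (x y - 1) + 1 by omega]
          rw [Nat.factorial_succ]
          congr 2
          omega
        have hRfac : ∏ i, (x i).factorial = x y * ∏ i, (x' i).factorial := by
          rw [hx'prod, ← hps, hfac]
          ring
        rw [hRfac, ← hIH]
        ring
      · rw [if_neg hy]
        have h0 : x y = 0 := by omega
        rw [h0]
        simp
    rw [Finset.sum_congr rfl (fun y _ => hterm y), ← Finset.sum_mul, hx, Nat.factorial_succ]
lemma mexp_eq (n S : ℕ) (p : Fin S → ℝ) (g : (Fin S → ℕ) → ℝ) :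
    mExp n S p g = ∑ z : Fin n → Fin S, (∏ j, p (z j)) * g (cnt z) := by
  classical
  set c' : (Fin n → Fin S) → (Fin S → Fin (n+1)) :=
    fun z i => ⟨cnt z i, Nat.lt_succ_of_le (cnt_le z i)⟩ with hc'
  rw [← Finset.sum_fiberwise univ c' (fun z => (∏ j, p (z j)) * g (cnt z))]
  unfold mExp
  refine Finset.sum_congr rfl (fun x _ => ?_)
  by_cases h : (∑ i, ((x i : ℕ))) = n
  · rw [if_pos h]
    have hiff : ∀ z : Fin n → Fin S, c' z = x ↔ cnt z = (fun i => (x i : ℕ)) := by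
      intro z
      constructor
      · intro hz
        funext i
        have := congrFun hz i
        rw [hc'] at this
        exact congrArg Fin.val this
      · intro hz
        funext i
        rw [hc']
        exact Fin.ext (congrFun hz i)
    have hfilter : (univ : Finset (Fin n → Fin S)).filter (fun z => c' z = x)
        = (univ : Finset (Fin n → Fin S)).filter (fun z => cnt z = (fun i => (x i : ℕ))) := by
      apply Finset.filter_congr
      intro z _
      simp [hiff z]
    rw [hfilter]
    have hconst : ∀ z ∈ (univ : Finset (Fin n → Fin S)).filter
        (fun z => cnt z = (fun i => (x i : ℕ))),
        (∏ j, p (z j)) * g (cnt z) = (∏ i, p i ^ (x i : ℕ)) * g (fun i => (x i : ℕ)) := by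
      intro z hz
      have hz' : cnt z = (fun i => (x i : ℕ)) := (Finset.mem_filter.mp hz).2
      rw [pw_eq_prod_pow, hz']
    rw [Finset.sum_congr rfl hconst, Finset.sum_const, nsmul_eq_mul]
    have hcnt := fiber_card S n (fun i => (x i : ℕ)) h
    have hprodpos : (0:ℝ) < ∏ i, (((x i : ℕ).factorial : ℝ)) := by
      apply Finset.prod_pos
      intro i _
      exact_mod_cast Nat.factorial_pos _
    have hcast : (((univ : Finset (Fin n → Fin S)).filter
          (fun z => cnt z = (fun i => (x i : ℕ)))).card : ℝ)
          * ∏ i, (((x i : ℕ).factorial : ℝ)) = (n.factorial : ℝ) := by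
      exact_mod_cast congrArg (Nat.cast : ℕ → ℝ) hcnt
    have hcardval : (((univ : Finset (Fin n → Fin S)).filter
          (fun z => cnt z = (fun i => (x i : ℕ)))).card : ℝ)
        = (n.factorial : ℝ) / ∏ i, (((x i : ℕ).factorial : ℝ)) := by
      field_simp
      linarith [hcast]
    rw [hcardval]
    ring
  · rw [if_neg h]
    symm
    apply Finset.sum_eq_zero
    intro z hz
    exfalso
    apply h
    have hz' : c' z = x := (Finset.mem_filter.mp hz).2
    have : ∀ i, cnt z i = (x i : ℕ) := by
      intro i
      have := congrFun hz' i
      rw [hc'] at this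
      exact congrArg Fin.val this
    calc (∑ i, ((x i : ℕ))) = ∑ i, cnt z i := by
          refine Finset.sum_congr rfl (fun i _ => (this i).symm)
      _ = n := sum_cnt z
lemma var_half {α : Type*} [Fintype α] (q : α → ℝ) (hq : ∑ a, q a = 1) (g : α → ℝ) :
    (∑ a, q a * g a ^ 2) - (∑ a, q a * g a) ^ 2
      = (1/2) * ∑ a, ∑ b, q a * q b * (g a - g b) ^ 2 := by
  have inner : ∀ a : α, ∑ b, q a * q b * (g a - g b) ^ 2
      = q a * g a ^ 2 * (∑ b, q b) + q a * (∑ b, q b * g b ^ 2)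
        - (2 * (q a * g a)) * (∑ b, q b * g b) := by
    intro a
    rw [Finset.mul_sum, Finset.mul_sum, Finset.mul_sum, ← Finset.sum_add_distrib,
      ← Finset.sum_sub_distrib]
    refine Finset.sum_congr rfl (fun b _ => ?_)
    ring
  have e3 : ∑ a, 2 * (q a * g a) = 2 * ∑ a, q a * g a := by
    rw [Finset.mul_sum]
  rw [Finset.sum_congr rfl (fun a _ => inner a), hq, Finset.sum_sub_distrib,
    Finset.sum_add_distrib, ← Finset.sum_mul, ← Finset.sum_mul, ← Finset.sum_mul, e3, hq]
  ring

lemma update_cons_zero {n S : ℕ} (y y' : Fin S) (z : Fin n → Fin S) :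
    Function.update (Fin.cons y' z : Fin (n+1) → Fin S) 0 y = Fin.cons y z := by
  funext q
  refine Fin.cases ?_ (fun i => ?_) q
  · rw [Function.update_self, Fin.cons_zero]
  · rw [Function.update_of_ne (Fin.succ_ne_zero i), Fin.cons_succ, Fin.cons_succ]

lemma cons_update {n S : ℕ} (y w : Fin S) (z : Fin n → Fin S) (j : Fin n) :
    (Fin.cons y (Function.update z j w) : Fin (n+1) → Fin S)
      = Function.update (Fin.cons y z : Fin (n+1) → Fin S) j.succ w := by
  funext q
  refine Fin.cases ?_ (fun i => ?_) q
  · rw [Fin.cons_zero, Function.update_of_ne (Fin.succ_ne_zero j).symm, Fin.cons_zero]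
  · rw [Fin.cons_succ]
    rcases eq_or_ne i j with rfl | hne
    · rw [Function.update_self, Function.update_self]
    · rw [Function.update_of_ne hne,
        Function.update_of_ne (fun hc => hne (Fin.succ_injective _ hc)), Fin.cons_succ]

lemma pw_cons {n S : ℕ} (p : Fin S → ℝ) (y : Fin S) (z : Fin n → Fin S) :
    (∏ j, p ((Fin.cons y z : Fin (n+1) → Fin S) j)) = p y * ∏ j, p (z j) := by
  rw [Fin.prod_univ_succ]
  simp [Fin.cons_zero, Fin.cons_succ]

lemma sum_split {n S : ℕ} (p : Fin S → ℝ) (g : (Fin (n+1) → Fin S) → ℝ) :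
    ∑ w : Fin (n+1) → Fin S, (∏ j, p (w j)) * g w
      = ∑ z : Fin n → Fin S, (∏ j, p (z j)) * ∑ y, p y * g (Fin.cons y z) := by
  rw [← Equiv.sum_comp (Fin.consEquiv (fun _ : Fin (n+1) => Fin S))
    (fun w => (∏ j, p (w j)) * g w), Fintype.sum_prod_type, Finset.sum_comm]
  refine Finset.sum_congr rfl (fun z _ => ?_)
  rw [Finset.mul_sum]
  refine Finset.sum_congr rfl (fun y _ => ?_)
  show (∏ j, p ((Fin.cons y z : Fin (n+1) → Fin S) j)) * g (Fin.cons y z)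
    = (∏ j, p (z j)) * (p y * g (Fin.cons y z))
  rw [pw_cons]
  ring

lemma sum_pw {S : ℕ} (p : Fin S → ℝ) (hps : ∑ i, p i = 1) :
    ∀ n, ∑ z : Fin n → Fin S, ∏ j, p (z j) = 1 := by
  intro n
  induction n with
  | zero => simp [Finset.univ_unique]
  | succ n ih =>
    have := sum_split (n := n) p (fun _ => (1:ℝ))
    simp only [mul_one] at this
    rw [this]
    calc ∑ z : Fin n → Fin S, (∏ j, p (z j)) * ∑ y, p y
        = ∑ z : Fin n → Fin S, (∏ j, p (z j)) * 1 :=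
          Finset.sum_congr rfl (fun z _ => by rw [hps])
      _ = 1 := by
          have h1 : ∑ z : Fin n → Fin S, (∏ j, p (z j)) * 1
              = ∑ z : Fin n → Fin S, ∏ j, p (z j) :=
            Finset.sum_congr rfl (fun z _ => mul_one _)
          rw [h1, ih]

lemma es {S : ℕ} (p : Fin S → ℝ) (hp : ∀ i, 0 ≤ p i) (hps : ∑ i, p i = 1) (D : ℝ) :
    ∀ (n : ℕ) (f : (Fin n → Fin S) → ℝ),
      (∀ (z : Fin n → Fin S) (j : Fin n) (y y' : Fin S),
        |f (Function.update z j y) - f (Function.update z j y')| ≤ D) →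
      (∑ z : Fin n → Fin S, (∏ j, p (z j)) * f z ^ 2)
        - (∑ z : Fin n → Fin S, (∏ j, p (z j)) * f z) ^ 2 ≤ (n : ℝ) / 2 * D ^ 2 := by
  intro n
  induction n with
  | zero =>
    intro f _
    simp [Finset.univ_unique]
  | succ n ih =>
    intro f hf
    rw [sum_split p (fun w => f w ^ 2), sum_split p f]
    have split : ∑ z : Fin n → Fin S, (∏ j, p (z j)) * ∑ y, p y * f (Fin.cons y z) ^ 2
        = (∑ z : Fin n → Fin S, (∏ j, p (z j)) *
            ((∑ y, p y * f (Fin.cons y z) ^ 2) - (∑ y, p y * f (Fin.cons y z)) ^ 2))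
          + ∑ z : Fin n → Fin S, (∏ j, p (z j)) * (∑ y, p y * f (Fin.cons y z)) ^ 2 := by
      rw [← Finset.sum_add_distrib]
      refine Finset.sum_congr rfl (fun z _ => ?_)
      ring
    rw [split]
    have hVle : ∀ z : Fin n → Fin S,
        (∑ y, p y * f (Fin.cons y z) ^ 2) - (∑ y, p y * f (Fin.cons y z)) ^ 2 ≤ D ^ 2 / 2 := by
      intro z
      rw [var_half p hps (fun y => f (Fin.cons y z))]
      have hsq : ∀ y y' : Fin S,
          (f (Fin.cons y z) - f (Fin.cons y' z)) ^ 2 ≤ D ^ 2 := by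
        intro y y'
        have habs := hf (Fin.cons y' z) 0 y y'
        rw [update_cons_zero y y' z, update_cons_zero y' y' z] at habs
        obtain ⟨h1, h2⟩ := abs_le.mp habs
        exact sq_le_sq' h1 h2
      have hb : ∑ y : Fin S, ∑ y' : Fin S,
          p y * p y' * (f (Fin.cons y z) - f (Fin.cons y' z)) ^ 2
          ≤ ∑ y : Fin S, ∑ y' : Fin S, p y * p y' * D ^ 2 := by
        refine Finset.sum_le_sum (fun y _ => Finset.sum_le_sum (fun y' _ => ?_))
        exact mul_le_mul_of_nonneg_left (hsq y y') (mul_nonneg (hp y) (hp y'))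
      have hc : ∑ y : Fin S, ∑ y' : Fin S, p y * p y' * D ^ 2 = D ^ 2 := by
        calc ∑ y : Fin S, ∑ y' : Fin S, p y * p y' * D ^ 2
            = ∑ y : Fin S, ∑ y' : Fin S, p y * (p y' * D ^ 2) :=
              Finset.sum_congr rfl (fun y _ => Finset.sum_congr rfl (fun y' _ => by ring))
          _ = (∑ y : Fin S, p y) * ∑ y' : Fin S, p y' * D ^ 2 :=
              (Finset.sum_mul_sum _ _ _ _).symm
          _ = D ^ 2 := by rw [hps, ← Finset.sum_mul, hps]; ring
      have h12 : (1/2 : ℝ) * (∑ y : Fin S, ∑ y' : Fin S,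
          p y * p y' * (f (Fin.cons y z) - f (Fin.cons y' z)) ^ 2)
          ≤ (1/2 : ℝ) * (∑ y : Fin S, ∑ y' : Fin S, p y * p y' * D ^ 2) := by
        linarith [hb]
      rw [hc] at h12
      linarith [h12]
    have hpw_nonneg : ∀ z : Fin n → Fin S, 0 ≤ ∏ j, p (z j) :=
      fun z => Finset.prod_nonneg (fun j _ => hp (z j))
    have hVsum : ∑ z : Fin n → Fin S, (∏ j, p (z j)) *
          ((∑ y, p y * f (Fin.cons y z) ^ 2) - (∑ y, p y * f (Fin.cons y z)) ^ 2)
        ≤ D ^ 2 / 2 := by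
      calc ∑ z : Fin n → Fin S, (∏ j, p (z j)) *
            ((∑ y, p y * f (Fin.cons y z) ^ 2) - (∑ y, p y * f (Fin.cons y z)) ^ 2)
          ≤ ∑ z : Fin n → Fin S, (∏ j, p (z j)) * (D ^ 2 / 2) :=
            Finset.sum_le_sum (fun z _ =>
              mul_le_mul_of_nonneg_left (hVle z) (hpw_nonneg z))
        _ = (∑ z : Fin n → Fin S, ∏ j, p (z j)) * (D ^ 2 / 2) := by rw [Finset.sum_mul]
        _ = D ^ 2 / 2 := by rw [sum_pw p hps n, one_mul]
    have hhb : ∀ (z : Fin n → Fin S) (j : Fin n) (y₁ y₂ : Fin S),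
        |(∑ y, p y * f (Fin.cons y (Function.update z j y₁)))
          - (∑ y, p y * f (Fin.cons y (Function.update z j y₂)))| ≤ D := by
      intro z j y₁ y₂
      rw [← Finset.sum_sub_distrib]
      have hmulsub : ∀ y : Fin S, p y * f (Fin.cons y (Function.update z j y₁))
          - p y * f (Fin.cons y (Function.update z j y₂))
          = p y * (f (Fin.cons y (Function.update z j y₁))
              - f (Fin.cons y (Function.update z j y₂))) := fun y => by ring
      rw [Finset.sum_congr rfl (fun y _ => hmulsub y)]
      calc |∑ y, p y * (f (Fin.cons y (Function.update z j y₁))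
              - f (Fin.cons y (Function.update z j y₂)))|
          ≤ ∑ y, |p y * (f (Fin.cons y (Function.update z j y₁))
              - f (Fin.cons y (Function.update z j y₂)))| :=
            Finset.abs_sum_le_sum_abs _ _
        _ ≤ ∑ y, p y * D := by
            refine Finset.sum_le_sum (fun y _ => ?_)
            rw [abs_mul, abs_of_nonneg (hp y)]
            refine mul_le_mul_of_nonneg_left ?_ (hp y)
            have hthis := hf (Fin.cons y z) j.succ y₁ y₂
            rw [← cons_update, ← cons_update] at hthis
            exact hthis
        _ = D := by rw [← Finset.sum_mul, hps, one_mul]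
    have hIH := ih (fun z => ∑ y, p y * f (Fin.cons y z)) hhb
    push_cast
    linarith [hVsum, hIH]
noncomputable def phiR (a N : ℝ) (m : ℕ) : ℝ :=
  -((((m:ℝ)) + a) / N * Real.log ((((m:ℝ)) + a) / N))

lemma logineq_up {x y : ℝ} (hx : 0 < x) (hxy : x ≤ y) :
    -(y * Real.log y) - (-(x * Real.log x)) ≤ (y - x) * (-1 - Real.log x) := by
  have hy : 0 < y := lt_of_lt_of_le hx hxy
  have h1 : Real.log (x / y) ≤ x / y - 1 := Real.log_le_sub_one_of_pos (by positivity)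
  rw [Real.log_div hx.ne' hy.ne'] at h1
  have h2 : y * (Real.log x - Real.log y) ≤ y * (x / y - 1) :=
    mul_le_mul_of_nonneg_left h1 hy.le
  have h3 : y * (x / y - 1) = x - y := by field_simp
  nlinarith [h2, h3]

lemma logineq_low {x y : ℝ} (hx : 0 < x) (hxy : x ≤ y) :
    (y - x) * (-1 - Real.log y) ≤ -(y * Real.log y) - (-(x * Real.log x)) := by
  have hy : 0 < y := lt_of_lt_of_le hx hxy
  have h1 : Real.log (y / x) ≤ y / x - 1 := Real.log_le_sub_one_of_pos (by positivity)
  rw [Real.log_div hy.ne' hx.ne'] at h1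
  have h2 : x * (Real.log y - Real.log x) ≤ x * (y / x - 1) :=
    mul_le_mul_of_nonneg_left h1 hx.le
  have h3 : x * (y / x - 1) = y - x := by field_simp
  nlinarith [h2, h3]

lemma G0bound {a N : ℝ} (ha : 0 < a) (hN : 0 < N) :
    -((a + 1) / N * Real.log ((a + 1) / N)) - (-(a / N * Real.log (a / N)))
      ≤ Real.log (N / (a + 1)) / N := by
  have ha1 : (0:ℝ) < a + 1 := by linarith
  rw [Real.log_div ha1.ne' hN.ne', Real.log_div ha.ne' hN.ne', Real.log_div hN.ne' ha1.ne']
  have hlog : Real.log a ≤ Real.log (a + 1) := Real.log_le_log ha (by linarith)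
  have key : -((a + 1) * (Real.log (a + 1) - Real.log N)) + a * (Real.log a - Real.log N)
      ≤ Real.log N - Real.log (a + 1) := by
    nlinarith [mul_le_mul_of_nonneg_left hlog ha.le]
  calc -((a + 1) / N * (Real.log (a + 1) - Real.log N))
        - (-(a / N * (Real.log a - Real.log N)))
      = (-((a + 1) * (Real.log (a + 1) - Real.log N))
          + a * (Real.log a - Real.log N)) / N := by ring
    _ ≤ (Real.log N - Real.log (a + 1)) / N := by gcongr
    _ = (Real.log N - Real.log (a + 1)) / N := rfl

lemma G_le (n S : ℕ) (hn : 1 ≤ n) (hS : 2 ≤ S) (a : ℝ) (ha : 0 < a) (k : ℕ)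
    (hk : k + 1 ≤ n) :
    phiR a ((n:ℝ) + S * a) (1 + k) - phiR a ((n:ℝ) + S * a) k
      ≤ Real.log (((n:ℝ) + S * a) / (a + 1)) / ((n:ℝ) + S * a) := by
  have hn1 : (1:ℝ) ≤ (n:ℝ) := by exact_mod_cast hn
  have hS2 : (2:ℝ) ≤ (S:ℝ) := by exact_mod_cast hS
  have hN : (0:ℝ) < (n:ℝ) + S * a := by nlinarith
  cases k with
  | zero =>
    have h := G0bound ha hN
    unfold phiR
    push_cast
    have e1 : ((0:ℝ) + 1 + a) = a + 1 := by ring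
    have e2 : ((0:ℝ) + a) = a := by ring
    rw [show ((1:ℝ) + a) = a + 1 by ring, show ((0:ℝ) + a) = a by ring]
    exact h
  | succ m =>
    have hx : (0:ℝ) < ((m:ℝ) + 1 + a) / ((n:ℝ) + S * a) := by positivity
    have hxy : ((m:ℝ) + 1 + a) / ((n:ℝ) + S * a) ≤ ((m:ℝ) + 1 + 1 + a) / ((n:ℝ) + S * a) := by
      gcongr
      linarith
    have h := logineq_up hx hxy
    unfold phiR
    push_cast
    have heq : (1 + ((m:ℝ) + 1) + a) = ((m:ℝ) + 1 + 1 + a) := by ring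
    rw [heq]
    have hdx : ((m:ℝ) + 1 + 1 + a) / ((n:ℝ) + S * a) - ((m:ℝ) + 1 + a) / ((n:ℝ) + S * a)
        = 1 / ((n:ℝ) + S * a) := by ring
    rw [hdx] at h
    refine le_trans h ?_
    have ha1 : (0:ℝ) < a + 1 := by linarith
    have hlogle : Real.log (a + 1) ≤ Real.log ((m:ℝ) + 1 + a) :=
      Real.log_le_log ha1 (by linarith)
    rw [Real.log_div (show ((m:ℝ) + 1 + a) ≠ 0 from (by positivity : (0:ℝ) < (m:ℝ) + 1 + a).ne') hN.ne',
      Real.log_div hN.ne' ha1.ne']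
    calc 1 / ((n:ℝ) + S * a) * (-1 - (Real.log ((m:ℝ) + 1 + a) - Real.log ((n:ℝ) + S * a)))
          = (-1 - Real.log ((m:ℝ) + 1 + a) + Real.log ((n:ℝ) + S * a)) / ((n:ℝ) + S * a) := by
            ring
        _ ≤ (Real.log ((n:ℝ) + S * a) - Real.log (a + 1)) / ((n:ℝ) + S * a) := by
            gcongr
            linarith
        _ = (Real.log ((n:ℝ) + S * a) - Real.log (a + 1)) / ((n:ℝ) + S * a) := rfl

lemma G_ge (n S : ℕ) (hn : 1 ≤ n) (hS : 2 ≤ S) (a : ℝ) (ha : 0 < a) (k : ℕ)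
    (hk : k + 1 ≤ n) :
    -(1 / ((n:ℝ) + S * a)) ≤ phiR a ((n:ℝ) + S * a) (1 + k) - phiR a ((n:ℝ) + S * a) k := by
  have hn1 : (1:ℝ) ≤ (n:ℝ) := by exact_mod_cast hn
  have hS2 : (2:ℝ) ≤ (S:ℝ) := by exact_mod_cast hS
  have hk1 : ((k:ℝ)) + 1 ≤ (n:ℝ) := by exact_mod_cast hk
  have hN : (0:ℝ) < (n:ℝ) + S * a := by nlinarith
  have hx : (0:ℝ) < ((k:ℝ) + a) / ((n:ℝ) + S * a) := by positivity
  have hxy : ((k:ℝ) + a) / ((n:ℝ) + S * a) ≤ ((k:ℝ) + 1 + a) / ((n:ℝ) + S * a) := by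
    gcongr
    linarith
  have h := logineq_low hx hxy
  unfold phiR
  push_cast
  have heq : (1 + (k:ℝ) + a) = ((k:ℝ) + 1 + a) := by ring
  rw [heq]
  have hdx : ((k:ℝ) + 1 + a) / ((n:ℝ) + S * a) - ((k:ℝ) + a) / ((n:ℝ) + S * a)
      = 1 / ((n:ℝ) + S * a) := by ring
  rw [hdx] at h
  refine le_trans ?_ h
  have hyle1 : ((k:ℝ) + 1 + a) / ((n:ℝ) + S * a) ≤ 1 := by
    rw [div_le_one hN]
    nlinarith
  have hlognp : Real.log (((k:ℝ) + 1 + a) / ((n:ℝ) + S * a)) ≤ 0 :=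
    Real.log_nonpos (by positivity) hyle1
  calc -(1 / ((n:ℝ) + S * a)) = 1 / ((n:ℝ) + S * a) * (-1 - 0) := by ring
    _ ≤ 1 / ((n:ℝ) + S * a) * (-1 - Real.log (((k:ℝ) + 1 + a) / ((n:ℝ) + S * a))) := by
        have h1N : (0:ℝ) ≤ 1 / ((n:ℝ) + S * a) := by positivity
        apply mul_le_mul_of_nonneg_left _ h1N
        linarith
lemma hhat_sum (n S : ℕ) (a : ℝ) (x : Fin S → ℕ) :
    Hhat n S a x = ∑ i, phiR a ((n:ℝ) + S * a) (x i) := by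
  unfold Hhat phiR
  rw [← Finset.sum_neg_distrib]

lemma hhat_bdd (n S : ℕ) (hn : 1 ≤ n) (hS : 2 ≤ S) (a : ℝ) (ha : 0 < a)
    (z : Fin n → Fin S) (j : Fin n) (y y' : Fin S) :
    |Hhat n S a (cnt (Function.update z j y)) - Hhat n S a (cnt (Function.update z j y'))|
      ≤ (1 + Real.log (((n:ℝ) + S * a) / (a + 1))) / ((n:ℝ) + S * a) := by
  have hn1 : (1:ℝ) ≤ (n:ℝ) := by exact_mod_cast hn
  have hS2 : (2:ℝ) ≤ (S:ℝ) := by exact_mod_cast hS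
  have hN : (0:ℝ) < (n:ℝ) + S * a := by nlinarith
  have ha1 : (0:ℝ) < a + 1 := by linarith
  have hL : 0 ≤ Real.log (((n:ℝ) + S * a) / (a + 1)) := by
    apply Real.log_nonneg
    rw [le_div_iff₀ ha1]
    nlinarith
  rcases eq_or_ne y y' with rfl | hyy
  · simp only [sub_self, abs_zero]
    positivity
  · set d : Fin S → ℕ := fun i => ∑ k ∈ univ.erase j, if z k = i then 1 else 0 with hd
    have hcnt : ∀ (w : Fin S) (i : Fin S),
        cnt (Function.update z j w) i = (if w = i then 1 else 0) + d i := by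
      intro w i
      show ∑ k, (if Function.update z j w k = i then 1 else 0) = _
      rw [← Finset.add_sum_erase univ _ (Finset.mem_univ j)]
      congr 1
      · rw [Function.update_self]
      · refine Finset.sum_congr rfl (fun k hk => ?_)
        rw [Function.update_of_ne (Finset.mem_erase.mp hk).1]
    have hdsum : ∑ i, d i = n - 1 := by
      rw [hd, Finset.sum_comm]
      have hin : ∀ k ∈ univ.erase j, (∑ i : Fin S, if z k = i then 1 else 0) = 1 := by
        intro k _
        rw [Finset.sum_ite_eq univ (z k) (fun _ => 1)]
        simp
      rw [Finset.sum_congr rfl hin, Finset.sum_const, smul_eq_mul, mul_one,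
        Finset.card_erase_of_mem (Finset.mem_univ j), Finset.card_univ, Fintype.card_fin]
    have hdk : ∀ i, d i + 1 ≤ n := by
      intro i
      have h1 : d i ≤ ∑ i', d i' :=
        Finset.single_le_sum (fun _ _ => Nat.zero_le _) (Finset.mem_univ i)
      omega
    rw [hhat_sum, hhat_sum, ← Finset.sum_sub_distrib]
    have hterm : ∀ i ∈ (univ : Finset (Fin S)),
        phiR a ((n:ℝ) + S * a) (cnt (Function.update z j y) i)
          - phiR a ((n:ℝ) + S * a) (cnt (Function.update z j y') i)
        = (if i = y then (phiR a ((n:ℝ) + S * a) (1 + d y)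
              - phiR a ((n:ℝ) + S * a) (d y)) else 0)
          + (if i = y' then -(phiR a ((n:ℝ) + S * a) (1 + d y')
              - phiR a ((n:ℝ) + S * a) (d y')) else 0) := by
      intro i _
      rw [hcnt y i, hcnt y' i]
      rcases eq_or_ne i y with rfl | hiy
      · rw [if_pos rfl, if_neg hyy, if_pos rfl, if_neg (Ne.symm hyy)]
        rw [Nat.zero_add]
        ring
      · rw [if_neg (Ne.symm hiy), if_neg hiy, Nat.zero_add]
        rcases eq_or_ne i y' with rfl | hiy'
        · rw [if_pos rfl, if_pos rfl]
          ring
        · rw [if_neg (Ne.symm hiy'), if_neg hiy', Nat.zero_add]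
          ring
    rw [Finset.sum_congr rfl hterm, Finset.sum_add_distrib,
      Finset.sum_ite_eq' univ y (fun _ => phiR a ((n:ℝ) + S * a) (1 + d y)
        - phiR a ((n:ℝ) + S * a) (d y)),
      Finset.sum_ite_eq' univ y' (fun _ => -(phiR a ((n:ℝ) + S * a) (1 + d y')
        - phiR a ((n:ℝ) + S * a) (d y')))]
    simp only [Finset.mem_univ, if_true]
    have hup1 := G_le n S hn hS a ha (d y) (hdk y)
    have hup2 := G_le n S hn hS a ha (d y') (hdk y')
    have hlo1 := G_ge n S hn hS a ha (d y) (hdk y)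
    have hlo2 := G_ge n S hn hS a ha (d y') (hdk y')
    rw [abs_le]
    have hsplit : (1 + Real.log (((n:ℝ) + S * a) / (a + 1))) / ((n:ℝ) + S * a)
        = 1 / ((n:ℝ) + S * a)
          + Real.log (((n:ℝ) + S * a) / (a + 1)) / ((n:ℝ) + S * a) := by ring
    rw [hsplit]
    constructor
    · linarith
    · linarith

/-- Var(H(P̂_B)) ≤ (n/(n+Sa)²)·(3 + ln((n+Sa)/(a+1)))². -/
theorem stmt11 (n S : ℕ) (hn : 1 ≤ n) (hS : 2 ≤ S) (a : ℝ) (ha : 0 < a)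
    (p : Fin S → ℝ) (hp : ∀ i, 0 ≤ p i) (hps : ∑ i, p i = 1) :
    mExp n S p (fun x => (Hhat n S a x) ^ 2) - (mExp n S p (Hhat n S a)) ^ 2
      ≤ ((n : ℝ) / ((n : ℝ) + S * a) ^ 2) *
        (3 + Real.log (((n : ℝ) + S * a) / (a + 1))) ^ 2 := by
  have hn1 : (1:ℝ) ≤ (n:ℝ) := by exact_mod_cast hn
  have hS2 : (2:ℝ) ≤ (S:ℝ) := by exact_mod_cast hS
  have hN : (0:ℝ) < (n:ℝ) + S * a := by nlinarith
  have ha1 : (0:ℝ) < a + 1 := by linarith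
  have hL : 0 ≤ Real.log (((n:ℝ) + S * a) / (a + 1)) := by
    apply Real.log_nonneg
    rw [le_div_iff₀ ha1]
    nlinarith
  rw [mexp_eq n S p (fun x => (Hhat n S a x) ^ 2), mexp_eq n S p (Hhat n S a)]
  have hes := es p hp hps
    ((1 + Real.log (((n:ℝ) + S * a) / (a + 1))) / ((n:ℝ) + S * a)) n
    (fun z => Hhat n S a (cnt z))
    (fun z j y y' => hhat_bdd n S hn hS a ha z j y y')
  refine le_trans (by simpa using hes) ?_
  set L := Real.log (((n:ℝ) + S * a) / (a + 1)) with hLdef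
  calc (n : ℝ) / 2 * ((1 + L) / ((n:ℝ) + S * a)) ^ 2
      = ((n : ℝ) / ((n:ℝ) + S * a) ^ 2) * ((1 + L) ^ 2 / 2) := by
        rw [div_pow]
        ring
    _ ≤ ((n : ℝ) / ((n:ℝ) + S * a) ^ 2) * (3 + L) ^ 2 := by
        refine mul_le_mul_of_nonneg_left ?_ (by positivity)
        nlinarith
end

section
/- Let (X_1,...,X_S) ∼ Multinomial(n; p_1,...,p_S) with n ≥ Sa, a > 0, and let P̂_B be the Dirichlet-smoothed distribution with p̂_{B,i} = (X_i+a)/(n+Sa). Then sup over all distributions P on S elements of |E_P[H(P̂_B)] - H(P)| ≤ ln(1 + (S-1)/(n+Sa)) + (2Sa/(n+Sa))·ln((n+Sa)/(2a)). -/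
open Finset

noncomputable def W {S : ℕ} (p : Fin S → ℝ) (m : ℕ) (y : Fin S → ℕ) : ℝ :=
  ((m.factorial : ℝ) / ∏ j, ((y j).factorial : ℝ)) * ∏ j, p j ^ (y j)

lemma W_nonneg {S : ℕ} {p : Fin S → ℝ} (hp : ∀ i, 0 ≤ p i) (m : ℕ) (y : Fin S → ℕ) :
    0 ≤ W p m y := by
  unfold W
  have h1 : (0:ℝ) ≤ (m.factorial : ℝ) / ∏ j, ((y j).factorial : ℝ) := by positivity
  have h2 : (0:ℝ) ≤ ∏ j, p j ^ (y j) := Finset.prod_nonneg fun j _ => pow_nonneg (hp j) _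
  exact mul_nonneg h1 h2

open Fin.NatCast in
lemma mExp_eq (n S : ℕ) (p : Fin S → ℝ) (g : (Fin S → ℕ) → ℝ) :
    mExp n S p g = ∑ y ∈ Finset.piAntidiag (univ : Finset (Fin S)) n, W p n y * g y := by
  unfold mExp
  rw [← Finset.sum_filter]
  refine Finset.sum_nbij' (i := fun x => (fun i => (x i : ℕ)))
    (j := fun y => (fun i => ((y i : ℕ) : Fin (n+1)))) ?_ ?_ ?_ ?_ ?_
  · intro x hx
    simp only [Finset.mem_filter] at hx
    rw [Finset.mem_piAntidiag]
    exact ⟨hx.2, fun j _ => Finset.mem_univ j⟩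
  · intro y hy
    rw [Finset.mem_piAntidiag] at hy
    obtain ⟨hsum, -⟩ := hy
    have hsum' : ∑ j, y j = n := hsum
    have hle : ∀ i, y i < n + 1 := by
      intro i
      have : y i ≤ ∑ j, y j := Finset.single_le_sum (fun j _ => Nat.zero_le _) (Finset.mem_univ i)
      omega
    simp only [Finset.mem_filter, Finset.mem_univ, true_and]
    calc ∑ i, ((((y i : ℕ) : Fin (n+1))) : ℕ) = ∑ i, y i := by
          refine Finset.sum_congr rfl fun i _ => ?_
          exact Fin.val_cast_of_lt (hle i)
      _ = n := hsum
  · intro x hx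
    funext i
    exact Fin.cast_val_eq_self (x i)
  · intro y hy
    rw [Finset.mem_piAntidiag] at hy
    obtain ⟨hsum, -⟩ := hy
    have hsum' : ∑ j, y j = n := hsum
    have hle : ∀ i, y i < n + 1 := by
      intro i
      have : y i ≤ ∑ j, y j := Finset.single_le_sum (fun j _ => Nat.zero_le _) (Finset.mem_univ i)
      omega
    funext i
    exact Fin.val_cast_of_lt (hle i)
  · intro x hx
    rfl


lemma sum_W {S : ℕ} {p : Fin S → ℝ} (hps : ∑ i, p i = 1) (m : ℕ) :
    ∑ y ∈ Finset.piAntidiag (univ : Finset (Fin S)) m, W p m y = 1 := by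
  have h := Finset.sum_pow_eq_sum_piAntidiag (univ : Finset (Fin S)) p m
  rw [hps, one_pow] at h
  rw [h]
  refine Finset.sum_congr rfl fun y hy => ?_
  rw [Finset.mem_piAntidiag] at hy
  unfold W
  have hsum : ∑ j, y j = m := hy.1
  have hcast : ((Nat.multinomial univ y : ℕ) : ℝ)
      = (m.factorial : ℝ) / ∏ j, ((y j).factorial : ℝ) := by
    rw [Nat.multinomial, ← hsum]
    rw [Nat.cast_div (Nat.prod_factorial_dvd_factorial_sum _ _)]
    · rw [Nat.cast_prod]
    · rw [Nat.cast_prod]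
      exact Finset.prod_ne_zero_iff.2 fun j _ => Nat.cast_ne_zero.2 (Nat.factorial_ne_zero _)
  rw [hcast]


lemma shiftW {S : ℕ} (p : Fin S → ℝ) (m : ℕ) (i : Fin S) (f : (Fin S → ℕ) → ℝ) :
    ∑ y ∈ Finset.piAntidiag (univ : Finset (Fin S)) (m+1), W p (m+1) y * ((y i : ℝ) * f y)
    = ((m:ℝ)+1) * p i * ∑ z ∈ Finset.piAntidiag (univ : Finset (Fin S)) m,
        W p m z * f (Function.update z i (z i + 1)) := by
  rw [Finset.mul_sum]
  rw [← Finset.sum_filter_of_ne (s := Finset.piAntidiag (univ : Finset (Fin S)) (m+1))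
      (p := fun y => y i ≠ 0) (f := fun y => W p (m+1) y * ((y i : ℝ) * f y))
      (by intro y _ hy hyi; apply hy; simp only [hyi]; push_cast; ring)]
  refine Finset.sum_nbij' (i := fun y => Function.update y i (y i - 1))
    (j := fun z => Function.update z i (z i + 1)) ?_ ?_ ?_ ?_ ?_
  · intro y hy
    simp only [Finset.mem_filter, Finset.mem_piAntidiag] at hy
    obtain ⟨⟨hsum, -⟩, hne⟩ := hy
    rw [Finset.mem_piAntidiag]
    refine ⟨?_, fun j _ => Finset.mem_univ j⟩
    rw [Finset.sum_update_of_mem (Finset.mem_univ i)]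
    have h2 : y i + ∑ j ∈ univ.erase i, y j = m + 1 := by
      rw [Finset.add_sum_erase univ y (Finset.mem_univ i)]
      exact hsum
    have : ∑ j ∈ univ \ {i}, y j = ∑ j ∈ univ.erase i, y j := by
      rw [Finset.sdiff_singleton_eq_erase]
    omega
  · intro z hz
    rw [Finset.mem_piAntidiag] at hz
    simp only [Finset.mem_filter, Finset.mem_piAntidiag]
    obtain ⟨hsum, -⟩ := hz
    refine ⟨⟨?_, fun j _ => Finset.mem_univ j⟩, by simp⟩
    rw [Finset.sum_update_of_mem (Finset.mem_univ i)]
    have h2 : z i + ∑ j ∈ univ.erase i, z j = m := by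
      rw [Finset.add_sum_erase univ z (Finset.mem_univ i)]
      exact hsum
    have : ∑ j ∈ univ \ {i}, z j = ∑ j ∈ univ.erase i, z j := by
      rw [Finset.sdiff_singleton_eq_erase]
    omega
  · intro y hy
    simp only [Finset.mem_filter] at hy
    funext j
    rcases eq_or_ne j i with rfl | hj
    · simp only [Function.update_self]
      omega
    · simp [Function.update_of_ne hj]
  · intro z hz
    funext j
    rcases eq_or_ne j i with rfl | hj
    · simp only [Function.update_self]
      omega
    · simp [Function.update_of_ne hj]
  · intro y hy
    simp only [Finset.mem_filter, Finset.mem_piAntidiag] at hy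
    obtain ⟨⟨hsum, -⟩, hne⟩ := hy
    obtain ⟨k, hk⟩ := Nat.exists_eq_succ_of_ne_zero hne
    set z := Function.update y i (y i - 1) with hzdef
    have hzi : z i = k := by simp [hzdef, hk]
    have hupd : Function.update z i (z i + 1) = y := by
      funext j
      rcases eq_or_ne j i with rfl | hj
      · simp [hzdef, hk]
      · simp [hzdef, Function.update_of_ne hj]
    rw [hupd]
    have key : W p (m+1) y * (y i : ℝ) = ((m:ℝ)+1) * p i * W p m z := by
      unfold W
      have hfy : ∏ j, ((y j).factorial : ℝ)
          = ((k+1).factorial : ℝ) * ∏ j ∈ univ.erase i, ((y j).factorial : ℝ) := by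
        rw [← Finset.mul_prod_erase univ _ (Finset.mem_univ i), hk]
      have hfz : ∏ j, ((z j).factorial : ℝ)
          = (k.factorial : ℝ) * ∏ j ∈ univ.erase i, ((y j).factorial : ℝ) := by
        rw [← Finset.mul_prod_erase univ _ (Finset.mem_univ i), hzi]
        congr 1
        refine Finset.prod_congr rfl fun j hj => ?_
        rw [Finset.mem_erase] at hj
        rw [hzdef, Function.update_of_ne hj.1]
      have hpy : ∏ j, p j ^ (y j) = p i ^ (k+1) * ∏ j ∈ univ.erase i, p j ^ (y j) := by
        rw [← Finset.mul_prod_erase univ _ (Finset.mem_univ i), hk]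
      have hpz : ∏ j, p j ^ (z j) = p i ^ k * ∏ j ∈ univ.erase i, p j ^ (y j) := by
        rw [← Finset.mul_prod_erase univ _ (Finset.mem_univ i), hzi]
        congr 1
        refine Finset.prod_congr rfl fun j hj => ?_
        rw [Finset.mem_erase] at hj
        rw [hzdef, Function.update_of_ne hj.1]
      rw [hfy, hfz, hpy, hpz, hk]
      have h1 : ((m+1).factorial : ℝ) = ((m:ℝ)+1) * (m.factorial : ℝ) := by
        rw [Nat.factorial_succ]; push_cast; ring
      have h2 : (((k+1)).factorial : ℝ) = ((k:ℝ)+1) * (k.factorial : ℝ) := by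
        rw [Nat.factorial_succ]; push_cast; ring
      have hkf : (k.factorial : ℝ) ≠ 0 := Nat.cast_ne_zero.2 (Nat.factorial_ne_zero k)
      have hF : (∏ j ∈ univ.erase i, ((y j).factorial : ℝ)) ≠ 0 :=
        Finset.prod_ne_zero_iff.2 fun j _ => Nat.cast_ne_zero.2 (Nat.factorial_ne_zero _)
      rw [h1, h2]
      push_cast
      field_simp
      ring
    calc W p (m+1) y * ((y i : ℝ) * f y) = (W p (m+1) y * (y i : ℝ)) * f y := by ring
      _ = ((m:ℝ)+1) * p i * W p m z * f y := by rw [key]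
      _ = ((m:ℝ)+1) * p i * (W p m z * f y) := by ring


lemma EX {S : ℕ} {p : Fin S → ℝ} (hps : ∑ i, p i = 1) (m : ℕ) (i : Fin S) :
    ∑ y ∈ Finset.piAntidiag (univ : Finset (Fin S)) m, W p m y * (y i : ℝ) = m * p i := by
  cases m with
  | zero =>
    rw [Nat.cast_zero, zero_mul]
    refine Finset.sum_eq_zero fun y hy => ?_
    rw [Finset.mem_piAntidiag] at hy
    have hsum' : ∑ j, y j = 0 := hy.1
    have : y i = 0 := by
      have h1 : y i ≤ ∑ j, y j := Finset.single_le_sum (fun j _ => Nat.zero_le _) (Finset.mem_univ i)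
      omega
    rw [this]
    simp
  | succ m =>
    have h := shiftW p m i (fun _ => 1)
    simp only [mul_one] at h
    rw [show (fun y => W p (m+1) y * (y i : ℝ)) = fun y => W p (m+1) y * ((y i : ℝ) * 1) by
      funext y; ring] at *
    rw [h, sum_W hps]
    push_cast
    ring

lemma EXsq {S : ℕ} {p : Fin S → ℝ} (hps : ∑ i, p i = 1) (m : ℕ) (i : Fin S) :
    ∑ y ∈ Finset.piAntidiag (univ : Finset (Fin S)) m, W p m y * ((y i : ℝ))^2
      = m * p i + (m:ℝ) * ((m:ℝ) - 1) * (p i)^2 := by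
  cases m with
  | zero =>
    simp only [Nat.cast_zero]
    rw [show (0:ℝ) * p i + (0:ℝ) * ((0:ℝ)-1) * (p i)^2 = 0 by ring]
    refine Finset.sum_eq_zero fun y hy => ?_
    rw [Finset.mem_piAntidiag] at hy
    have hsum' : ∑ j, y j = 0 := hy.1
    have : y i = 0 := by
      have h1 : y i ≤ ∑ j, y j := Finset.single_le_sum (fun j _ => Nat.zero_le _) (Finset.mem_univ i)
      omega
    rw [this]
    simp
  | succ m =>
    have h := shiftW p m i (fun y => (y i : ℝ))
    have heq : ∀ y : Fin S → ℕ, W p (m+1) y * ((y i : ℝ))^2 = W p (m+1) y * ((y i : ℝ) * (y i : ℝ)) := by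
      intro y; ring
    rw [Finset.sum_congr rfl (fun y _ => heq y), h]
    have h2 : ∀ z : Fin S → ℕ, ((Function.update z i (z i + 1)) i : ℝ) = (z i : ℝ) + 1 := by
      intro z; simp
    rw [Finset.sum_congr rfl (fun z (_ : z ∈ _) => by rw [h2 z])]
    have h3 : ∑ z ∈ Finset.piAntidiag (univ : Finset (Fin S)) m, W p m z * ((z i : ℝ) + 1)
        = m * p i + 1 := by
      rw [show (fun z => W p m z * ((z i : ℝ) + 1)) = fun z => W p m z * (z i : ℝ) + W p m z by
        funext z; ring]
      rw [Finset.sum_add_distrib, EX hps, sum_W hps]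
    rw [h3]
    push_cast
    ring

lemma log_ge_one_sub_inv {x : ℝ} (hx : 0 < x) : 1 - 1/x ≤ Real.log x := by
  have h := Real.log_le_sub_one_of_pos (show (0:ℝ) < 1/x by positivity)
  rw [Real.log_div one_ne_zero (ne_of_gt hx), Real.log_one] at h
  have hxne : x ≠ 0 := ne_of_gt hx
  nlinarith [h]

lemma d1lem {p e : ℝ} (hp : 0 ≤ p) (he : 0 < e) :
    -(p+e)*Real.log (p+e) - (-p*Real.log p) ≤ -e*Real.log e := by
  rcases eq_or_lt_of_le hp with rfl | hp0
  · simp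
  · have hpe : 0 < p + e := by linarith
    have h1 : Real.log p ≤ Real.log (p+e) := Real.log_le_log hp0 (by linarith)
    have h2 : Real.log e ≤ Real.log (p+e) := Real.log_le_log he (by linarith)
    nlinarith [h1, h2]

lemma d2lem {q e : ℝ} (hq : 0 < q) (he : 0 ≤ e) (hqe : q + e ≤ 1) :
    -q*Real.log q - (-(q+e)*Real.log (q+e)) ≤ e := by
  have hpe : 0 < q + e := by linarith
  have h1 : Real.log (q+e) - Real.log q ≤ (q+e)/q - 1 := by
    have := Real.log_le_sub_one_of_pos (show (0:ℝ) < (q+e)/q by positivity)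
    rwa [Real.log_div (ne_of_gt hpe) (ne_of_gt hq)] at this
  have h2 : Real.log (q+e) ≤ 0 := Real.log_nonpos (by linarith) hqe
  have hqne : q ≠ 0 := ne_of_gt hq
  have h1' : q * (Real.log (q+e) - Real.log q) ≤ e := by
    have := mul_le_mul_of_nonneg_left h1 (le_of_lt hq)
    calc q * (Real.log (q+e) - Real.log q) ≤ q * ((q+e)/q - 1) := this
      _ = e := by field_simp; ring
  nlinarith [mul_nonpos_of_nonneg_of_nonpos he h2]

lemma conclem {p lam c : ℝ} (hp : 0 ≤ p) (hlam : 0 ≤ lam) (hlam1 : lam ≤ 1) (hc : 0 < c) :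
    (1-lam)*(-p*Real.log p) + lam*(-c*Real.log c)
      ≤ -((1-lam)*p + lam*c)*Real.log ((1-lam)*p + lam*c) := by
  rcases eq_or_lt_of_le hlam with rfl | hlam0
  · simp
  · set q := (1-lam)*p + lam*c with hqdef
    have hq : 0 < q := by nlinarith
    rcases eq_or_lt_of_le hp with rfl | hp0
    · have hqc : q = lam * c := by rw [hqdef]; ring
      rw [hqc]
      have hll : Real.log (lam*c) = Real.log lam + Real.log c :=
        Real.log_mul (ne_of_gt hlam0) (ne_of_gt hc)
      have : Real.log lam ≤ 0 := Real.log_nonpos hlam hlam1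
      nlinarith
    · have h1 : 1 - q/p ≤ Real.log p - Real.log q := by
        have := log_ge_one_sub_inv (show (0:ℝ) < p/q by positivity)
        rwa [Real.log_div (ne_of_gt hp0) (ne_of_gt hq), show 1 - 1/(p/q) = 1 - q/p by
          field_simp] at this
      have h2 : 1 - q/c ≤ Real.log c - Real.log q := by
        have := log_ge_one_sub_inv (show (0:ℝ) < c/q by positivity)
        rwa [Real.log_div (ne_of_gt hc) (ne_of_gt hq), show 1 - 1/(c/q) = 1 - q/c by
          field_simp] at this
      have h1' : (1-lam)*p*(1 - q/p) ≤ (1-lam)*p*(Real.log p - Real.log q) :=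
        mul_le_mul_of_nonneg_left h1 (by nlinarith)
      have h2' : lam*c*(1 - q/c) ≤ lam*c*(Real.log c - Real.log q) :=
        mul_le_mul_of_nonneg_left h2 (by nlinarith)
      have e1 : (1-lam)*p*(1 - q/p) = (1-lam)*p - (1-lam)*q := by field_simp
      have e2 : lam*c*(1 - q/c) = lam*c - lam*q := by field_simp
      have e3 : (1-lam)*p*Real.log q + lam*c*Real.log q = q * Real.log q := by
        rw [hqdef]; ring
      linarith [h1', h2']

lemma entropy_le_log {S : ℕ} (hS : 1 ≤ S) (p : Fin S → ℝ) (hp : ∀ i, 0 ≤ p i)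
    (hps : ∑ i, p i = 1) : -∑ i, p i * Real.log (p i) ≤ Real.log S := by
  have hS0 : (0:ℝ) < (S:ℝ) := by exact_mod_cast hS
  have key : ∀ i, -(p i) * Real.log (p i) - p i * Real.log S ≤ 1/(S:ℝ) - p i := by
    intro i
    rcases eq_or_lt_of_le (hp i) with h0 | h0
    · rw [← h0]
      simp only [neg_zero, zero_mul, mul_zero, sub_zero, neg_mul, sub_self]
      positivity
    · have ht : (0:ℝ) < (p i * S)⁻¹ := by positivity
      have hlog := Real.log_le_sub_one_of_pos ht
      rw [Real.log_inv, Real.log_mul (ne_of_gt h0) (ne_of_gt hS0)] at hlog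
      have h2 : p i * (-(Real.log (p i) + Real.log S)) ≤ p i * ((p i * S)⁻¹ - 1) :=
        mul_le_mul_of_nonneg_left hlog (hp i)
      have h3 : p i * ((p i * S)⁻¹ - 1) = 1/(S:ℝ) - p i := by
        field_simp
      nlinarith [h2]
  have hsum := Finset.sum_le_sum (fun i (_ : i ∈ univ) => key i)
  have hL2 : ∑ i, (-(p i) * Real.log (p i) - p i * Real.log S)
      = (∑ i, -(p i) * Real.log (p i)) - Real.log S := by
    rw [Finset.sum_sub_distrib, ← Finset.sum_mul, hps, one_mul]
  have hR2 : ∑ _i : Fin S, (1/(S:ℝ) - p _i) = 0 := by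
    rw [Finset.sum_sub_distrib, hps, Finset.sum_const, Finset.card_univ,
      Fintype.card_fin, nsmul_eq_mul]
    field_simp
    ring
  rw [hL2, hR2] at hsum
  have hneg : ∑ i, -(p i) * Real.log (p i) = -∑ i, p i * Real.log (p i) := by
    rw [← Finset.sum_neg_distrib]; exact Finset.sum_congr rfl fun i _ => by ring
  linarith [hsum, hneg.le, hneg.ge]

lemma mix_lower {S : ℕ} (hS : 1 ≤ S) (lam : ℝ) (hlam : 0 ≤ lam) (hlam1 : lam ≤ 1)
    (p : Fin S → ℝ) (hp : ∀ i, 0 ≤ p i) (hps : ∑ i, p i = 1) :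
    -∑ i, p i * Real.log (p i)
      ≤ -∑ i, ((1-lam)*p i + lam/S) * Real.log ((1-lam)*p i + lam/S) := by
  have hS0 : (0:ℝ) < (S:ℝ) := by exact_mod_cast hS
  have hc : (0:ℝ) < 1/(S:ℝ) := by positivity
  have key : ∀ i, (1-lam)*(-(p i)*Real.log (p i)) + lam*(-(1/(S:ℝ))*Real.log (1/(S:ℝ)))
      ≤ -((1-lam)*p i + lam/S) * Real.log ((1-lam)*p i + lam/S) := by
    intro i
    have := conclem (hp i) hlam hlam1 hc
    convert this using 3 <;> field_simp
  have hsum := Finset.sum_le_sum (fun i (_ : i ∈ univ) => key i)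
  have e1 : ∑ i, (1-lam)*(-(p i)*Real.log (p i))
      = (1-lam)*(-∑ i, p i * Real.log (p i)) := by
    rw [← Finset.mul_sum]
    congr 1
    rw [← Finset.sum_neg_distrib]
    exact Finset.sum_congr rfl fun i _ => by ring
  have e2 : ∑ _i : Fin S, lam*(-(1/(S:ℝ))*Real.log (1/(S:ℝ))) = lam*Real.log S := by
    rw [Finset.sum_const, Finset.card_univ, Fintype.card_fin, nsmul_eq_mul]
    rw [one_div, Real.log_inv]
    have hSne : (S:ℝ) ≠ 0 := ne_of_gt hS0
    field_simp
  have hL : ∑ i : Fin S, ((1-lam)*(-(p i)*Real.log (p i)) + lam*(-(1/(S:ℝ))*Real.log (1/(S:ℝ))))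
      = (1-lam)*(-∑ i, p i * Real.log (p i)) + lam*Real.log S := by
    rw [Finset.sum_add_distrib, e1, e2]
  rw [hL] at hsum
  have hHle := entropy_le_log hS p hp hps
  have h2 : ∑ i, -((1-lam)*p i + lam/S) * Real.log ((1-lam)*p i + lam/S)
      = -∑ i, ((1-lam)*p i + lam/S) * Real.log ((1-lam)*p i + lam/S) := by
    rw [← Finset.sum_neg_distrib]; exact Finset.sum_congr rfl fun i _ => by ring
  rw [h2] at hsum
  nlinarith [hsum, hHle, mul_nonneg hlam (sub_nonneg.2 hHle)]

lemma FL (S : ℕ) (hS : 2 ≤ S) :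
    ((S:ℝ)-1)*(1+Real.log 2) ≤ ((S:ℝ)+1)*Real.log S := by
  have hl2a := Real.log_two_gt_d9
  have hl2b := Real.log_two_lt_d9
  have h89 : 3*Real.log 2 ≤ 2*Real.log 3 := by
    have h1 : Real.log 8 ≤ Real.log 9 := Real.log_le_log (by norm_num) (by norm_num)
    have h8 : Real.log 8 = 3*Real.log 2 := by
      rw [show (8:ℝ) = 2^3 by norm_num, Real.log_pow]; push_cast; ring
    have h9 : Real.log 9 = 2*Real.log 3 := by
      rw [show (9:ℝ) = 3^2 by norm_num, Real.log_pow]; push_cast; ring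
    linarith
  by_cases h6 : 6 ≤ S
  · have hlogS : 1 + Real.log 2 ≤ Real.log S := by
      have h1 : Real.log 6 ≤ Real.log S := by
        apply Real.log_le_log (by norm_num)
        exact_mod_cast h6
      have h2 : Real.log 6 = Real.log 2 + Real.log 3 := by
        rw [show (6:ℝ) = 2*3 by norm_num, Real.log_mul (by norm_num) (by norm_num)]
      linarith
    have hS1 : (0:ℝ) ≤ (S:ℝ) - 1 := by
      have : (2:ℝ) ≤ (S:ℝ) := by exact_mod_cast hS
      linarith
    nlinarith [hlogS, hS1]
  · interval_cases S
    · -- S = 2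
      push_cast; nlinarith
    · -- S = 3
      have h3 : (3:ℝ)*Real.log 2 ≤ 2*Real.log 3 := h89
      push_cast; nlinarith
    · -- S = 4
      have h4 : Real.log 4 = 2*Real.log 2 := by
        rw [show (4:ℝ) = 2^2 by norm_num, Real.log_pow]; push_cast; ring
      push_cast; nlinarith
    · -- S = 5
      have h4 : Real.log 4 = 2*Real.log 2 := by
        rw [show (4:ℝ) = 2^2 by norm_num, Real.log_pow]; push_cast; ring
      have h45 : Real.log 4 ≤ Real.log 5 := Real.log_le_log (by norm_num) (by norm_num)
      push_cast; nlinarith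

set_option maxHeartbeats 1000000 in
lemma mix_upper {S : ℕ} (hS : 2 ≤ S) {lam : ℝ} (hlam0 : 0 < lam) (hlam : lam ≤ 1/2)
    (p : Fin S → ℝ) (hp : ∀ i, 0 ≤ p i) (hps : ∑ i, p i = 1)
    (q : Fin S → ℝ) (hqdef : ∀ i, q i = (1-lam)*p i + lam/(S:ℝ)) :
    (-∑ i, q i * Real.log (q i)) - (-∑ i, p i * Real.log (p i))
      ≤ 2*lam*Real.log ((S:ℝ)/(2*lam)) := by
  haveI : Nonempty (Fin S) := ⟨⟨0, by omega⟩⟩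
  have hS0 : (0:ℝ) < (S:ℝ) := by positivity
  have hS2 : (2:ℝ) ≤ (S:ℝ) := by exact_mod_cast hS
  have hp1 : ∀ i, p i ≤ 1 := by
    intro i
    calc p i ≤ ∑ j, p j := Finset.single_le_sum (fun j _ => hp j) (Finset.mem_univ i)
      _ = 1 := hps
  set eps : Fin S → ℝ := fun i => lam*(1/(S:ℝ) - p i) with hepsdef
  have hq_eps : ∀ i, q i = p i + eps i := by
    intro i; rw [hqdef, hepsdef]; field_simp; ring
  have hqpos : ∀ i, 0 < q i := by
    intro i
    rw [hqdef]
    have : 0 ≤ (1-lam)*p i := mul_nonneg (by linarith) (hp i)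
    have : 0 < lam/(S:ℝ) := by positivity
    linarith
  have hqle1 : ∀ i, q i ≤ 1 := by
    intro i
    rw [hqdef]
    have h1 : (1-lam)*p i ≤ (1-lam)*1 := mul_le_mul_of_nonneg_left (hp1 i) (by linarith)
    have h2 : lam/(S:ℝ) ≤ lam/2 := by
      apply div_le_div_of_nonneg_left (le_of_lt hlam0) (by norm_num) hS2
    linarith
  -- target RHS rewriting
  have hlamne : lam ≠ 0 := ne_of_gt hlam0
  set L : ℝ := Real.log S - Real.log lam with hLdef
  have hRT : Real.log ((S:ℝ)/(2*lam)) = L - Real.log 2 := by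
    rw [Real.log_div (ne_of_gt hS0) (by positivity), Real.log_mul (by norm_num) hlamne, hLdef]
    ring
  have hLge : Real.log 2 + Real.log S ≤ L := by
    have h1 : Real.log lam ≤ Real.log (1/2) := Real.log_le_log hlam0 hlam
    rw [show (1:ℝ)/2 = 2⁻¹ by norm_num, Real.log_inv] at h1
    rw [hLdef]; linarith
  have hlog2pos := Real.log_two_gt_d9
  have hlogSpos : 0 ≤ Real.log S := Real.log_nonneg (by linarith)
  have hLpos : 0 < L := by linarith
  -- decompose
  set Ipos := Finset.univ.filter (fun i => p i < 1/(S:ℝ)) with hIdef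
  have hepspos : ∀ i ∈ Ipos, 0 < eps i := by
    intro i hi
    rw [hIdef, Finset.mem_filter] at hi
    rw [hepsdef]
    simp only
    nlinarith [hi.2]
  have hepsnonpos : ∀ i ∈ Finset.univ.filter (fun i => ¬(p i < 1/(S:ℝ))), eps i ≤ 0 := by
    intro i hi
    rw [Finset.mem_filter] at hi
    rw [hepsdef]
    simp only
    nlinarith [not_lt.1 hi.2]
  have key0 : (-∑ i, q i * Real.log (q i)) - (-∑ i, p i * Real.log (p i))
      = ∑ i, (-(q i)*Real.log (q i) + p i*Real.log (p i)) := by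
    rw [Finset.sum_add_distrib]
    have e1 : ∑ i, -(q i)*Real.log (q i) = -∑ i, q i * Real.log (q i) := by
      rw [← Finset.sum_neg_distrib]; exact Finset.sum_congr rfl fun i _ => by ring
    rw [e1]; ring
  rw [key0]
  rw [← Finset.sum_filter_add_sum_filter_not Finset.univ (fun i => p i < 1/(S:ℝ))]
  rw [← hIdef, hRT]
  set A : ℝ := ∑ i ∈ Ipos, eps i with hAdef
  have hsum_eps0 : ∑ i, eps i = 0 := by
    have e1 : ∑ i, eps i = lam * ∑ i, (1/(S:ℝ) - p i) := by
      rw [Finset.mul_sum, hepsdef]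
    have e2 : ∑ _i : Fin S, (1/(S:ℝ) - p _i) = 0 := by
      rw [Finset.sum_sub_distrib, hps, Finset.sum_const, Finset.card_univ,
        Fintype.card_fin, nsmul_eq_mul]
      field_simp
      ring
    rw [e1, e2, mul_zero]
  have hA2 : ∑ i ∈ Finset.univ.filter (fun i => ¬ p i < 1/(S:ℝ)), (-(eps i)) = A := by
    have hsplit : (∑ i ∈ Ipos, eps i)
        + ∑ i ∈ Finset.univ.filter (fun i => ¬ p i < 1/(S:ℝ)), eps i = 0 := by
      rw [hIdef, Finset.sum_filter_add_sum_filter_not]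
      exact hsum_eps0
    have e3 : ∑ i ∈ Finset.univ.filter (fun i => ¬ p i < 1/(S:ℝ)), (-(eps i))
        = -∑ i ∈ Finset.univ.filter (fun i => ¬ p i < 1/(S:ℝ)), eps i :=
      Finset.sum_neg_distrib _
    rw [e3, hAdef]
    linarith [hsplit]
  have hB1 : ∑ i ∈ Ipos, (-(q i)*Real.log (q i) + p i*Real.log (p i))
      ≤ ∑ i ∈ Ipos, (-(eps i))*Real.log (eps i) := by
    apply Finset.sum_le_sum
    intro i hi
    have h := d1lem (hp i) (hepspos i hi)
    rw [show p i + eps i = q i from (hq_eps i).symm] at h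
    linarith [h]
  have hB2 : ∑ i ∈ Finset.univ.filter (fun i => ¬ p i < 1/(S:ℝ)),
        (-(q i)*Real.log (q i) + p i*Real.log (p i))
      ≤ ∑ i ∈ Finset.univ.filter (fun i => ¬ p i < 1/(S:ℝ)), (-(eps i)) := by
    apply Finset.sum_le_sum
    intro i hi
    have hepsle := hepsnonpos i hi
    have hpe : q i + (-(eps i)) = p i := by rw [hq_eps i]; ring
    have h := d2lem (hqpos i) (by linarith : (0:ℝ) ≤ -(eps i)) (by rw [hpe]; exact hp1 i)
    rw [hpe] at h
    linarith [h]
  by_cases hne : Ipos.Nonempty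
  · -- main case
    have hApos : 0 < A := by
      rw [hAdef]; exact Finset.sum_pos hepspos hne
    set k := Ipos.card with hkdef
    have hk1 : 0 < k := Finset.card_pos.2 hne
    have hkpos : (0:ℝ) < (k:ℝ) := by exact_mod_cast hk1
    have hkS : (k:ℝ) ≤ (S:ℝ) - 1 := by
      have hno : ¬ (∀ i, p i < 1/(S:ℝ)) := by
        intro hall
        have hlt := Finset.sum_lt_sum_of_nonempty (Finset.univ_nonempty (α := Fin S))
          (fun i _ => hall i)
        rw [hps, Finset.sum_const, Finset.card_univ, Fintype.card_fin, nsmul_eq_mul] at hlt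
        have he : (S:ℝ)*(1/(S:ℝ)) = 1 := by field_simp
        linarith [hlt]
      have hne_univ : Ipos ≠ Finset.univ := by
        intro hu
        apply hno
        intro i
        have hmem : i ∈ Ipos := by rw [hu]; exact Finset.mem_univ i
        rw [hIdef, Finset.mem_filter] at hmem
        exact hmem.2
      have hklt : k < S := by
        have hcard := Finset.card_lt_card (Finset.ssubset_univ_iff.2 hne_univ)
        rwa [Finset.card_univ, Fintype.card_fin] at hcard
      have : (k:ℝ) + 1 ≤ (S:ℝ) := by exact_mod_cast hklt
      linarith
    have hAB : A ≤ (k:ℝ)*lam/(S:ℝ) := by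
      rw [hAdef]
      calc ∑ i ∈ Ipos, eps i ≤ ∑ _i ∈ Ipos, lam/(S:ℝ) := by
            apply Finset.sum_le_sum
            intro i _
            have h1 : 0 ≤ lam * p i := mul_nonneg hlam0.le (hp i)
            have h2 : eps i = lam/(S:ℝ) - lam * p i := by
              rw [hepsdef]; simp only; rw [mul_sub, mul_one_div]
            linarith
        _ = (k:ℝ)*(lam/(S:ℝ)) := by rw [Finset.sum_const, nsmul_eq_mul, hkdef]
        _ = (k:ℝ)*lam/(S:ℝ) := by ring
    have hepspos' : ∀ i ∈ Ipos, 0 < eps i := hepspos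
    clear_value eps L Ipos A k
    have hJ : ∑ i ∈ Ipos, (-(eps i))*Real.log (eps i)
        ≤ A*(Real.log k - Real.log A) := by
      have hper : ∀ i ∈ Ipos, (-(eps i))*Real.log (eps i)
          ≤ A/(k:ℝ) - eps i + eps i*(Real.log k - Real.log A) := by
        intro i hi
        have hpos := hepspos' i hi
        have ht : 0 < A/((k:ℝ)*eps i) := div_pos hApos (mul_pos hkpos hpos)
        have hlog := Real.log_le_sub_one_of_pos ht
        rw [Real.log_div (ne_of_gt hApos) (ne_of_gt (mul_pos hkpos hpos)),
          Real.log_mul (ne_of_gt hkpos) (ne_of_gt hpos)] at hlog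
        have hmul := mul_le_mul_of_nonneg_left hlog hpos.le
        have heq : eps i*(A/((k:ℝ)*eps i) - 1) = A/(k:ℝ) - eps i := by
          field_simp
        rw [heq] at hmul
        ring_nf at hmul ⊢
        linarith [hmul]
      calc ∑ i ∈ Ipos, (-(eps i))*Real.log (eps i)
          ≤ ∑ i ∈ Ipos, (A/(k:ℝ) - eps i + eps i*(Real.log k - Real.log A)) :=
            Finset.sum_le_sum hper
        _ = (k:ℝ)*(A/(k:ℝ)) - A + A*(Real.log k - Real.log A) := by
            rw [Finset.sum_add_distrib, Finset.sum_sub_distrib, Finset.sum_const,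
              nsmul_eq_mul, ← Finset.sum_mul, ← hAdef, ← hkdef]
        _ = A*(Real.log k - Real.log A) := by field_simp; ring
    -- final numeric chain
    set B := (k:ℝ)*lam/(S:ℝ) with hBdef
    have hBpos : 0 < B := div_pos (mul_pos hkpos hlam0) hS0
    have hlogB : Real.log B = Real.log k + Real.log lam - Real.log S := by
      rw [hBdef, Real.log_div (ne_of_gt (mul_pos hkpos hlam0)) (ne_of_gt hS0),
        Real.log_mul (ne_of_gt hkpos) hlamne]
    clear_value B
    have h1 : A*(Real.log k - Real.log A) + A ≤ B*L + B := by
      have ha : Real.log B - Real.log A ≤ B/A - 1 := by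
        have h := Real.log_le_sub_one_of_pos (div_pos hBpos hApos)
        rwa [Real.log_div (ne_of_gt hBpos) (ne_of_gt hApos)] at h
      have hb : A*(Real.log B - Real.log A) ≤ B - A := by
        have hm := mul_le_mul_of_nonneg_left ha hApos.le
        have he : A*(B/A - 1) = B - A := by field_simp
        linarith [hm, he.le, he.ge]
      have hc : A*L ≤ B*L := mul_le_mul_of_nonneg_right hAB hLpos.le
      have hd : Real.log k - Real.log B = L := by rw [hlogB, hLdef]; ring
      have he2 : A*(Real.log k - Real.log A)
          = A*(Real.log k - Real.log B) + A*(Real.log B - Real.log A) := by ring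
      rw [hd] at he2
      linarith [hb, hc, he2.le, he2.ge]
    have h2 : B*L + B ≤ (((S:ℝ)-1)*lam/(S:ℝ))*(L+1) := by
      have hBle : B ≤ ((S:ℝ)-1)*lam/(S:ℝ) := by
        rw [hBdef, div_le_div_iff₀ hS0 hS0]
        have hm : (k:ℝ)*lam ≤ ((S:ℝ)-1)*lam := mul_le_mul_of_nonneg_right hkS hlam0.le
        nlinarith [mul_le_mul_of_nonneg_right hm hS0.le]
      nlinarith [mul_le_mul_of_nonneg_right hBle (show (0:ℝ) ≤ L + 1 by linarith)]
    have h3 : (((S:ℝ)-1)*lam/(S:ℝ))*(L+1) ≤ 2*lam*(L - Real.log 2) := by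
      have hFL := FL S hS
      have hge : 0 ≤ L - (Real.log 2 + Real.log (S:ℝ)) := by linarith [hLge]
      have hbr : 0 ≤ 2*(S:ℝ)*(L - Real.log 2) - ((S:ℝ)-1)*(L+1) := by
        nlinarith [mul_nonneg (show (0:ℝ) ≤ (S:ℝ)+1 by linarith) hge, hFL]
      rw [div_mul_eq_mul_div, div_le_iff₀ hS0]
      nlinarith [mul_nonneg hlam0.le hbr]
    linarith [hB1, hB2, hA2, hJ, h1, h2, h3]
  · clear_value eps L Ipos A
    have hempty : Ipos = ∅ := Finset.not_nonempty_iff_eq_empty.1 hne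
    have hz1 : ∑ i ∈ Ipos, (-(q i)*Real.log (q i) + p i*Real.log (p i)) = 0 := by
      rw [hempty]; simp
    have hz2 : A = 0 := by rw [hAdef, hempty]; simp
    have hRHS : 0 ≤ 2*lam*(L - Real.log 2) := by
      apply mul_nonneg (by linarith)
      linarith [hLge, hlogSpos]
    linarith [hB1, hB2, hA2, hz1, hz2, hRHS]

set_option maxHeartbeats 1000000 in
lemma EDlem (n S : ℕ) (hS : 2 ≤ S) (a : ℝ) (ha : 0 < a)
    (p : Fin S → ℝ) (hp : ∀ i, 0 ≤ p i) (hps : ∑ i, p i = 1)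
    (N : ℝ) (hN : N = (n:ℝ) + S*a)
    (q : Fin S → ℝ) (hq : ∀ i, q i = ((n:ℝ)*p i + a)/N) :
    (-∑ i, q i*Real.log (q i)) - Real.log (1 + ((S:ℝ)-1)/N) ≤ mExp n S p (Hhat n S a)
    ∧ mExp n S p (Hhat n S a) ≤ -∑ i, q i*Real.log (q i) := by
  have hS0 : (0:ℝ) < (S:ℝ) := by positivity
  have hN0 : (0:ℝ) < N := by rw [hN]; positivity
  have hNne : N ≠ 0 := ne_of_gt hN0
  have hp1 : ∀ i, p i ≤ 1 := by
    intro i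
    calc p i ≤ ∑ j, p j := Finset.single_le_sum (fun j _ => hp j) (Finset.mem_univ i)
      _ = 1 := hps
  have hq0 : ∀ i, 0 < q i := by
    intro i
    rw [hq]
    have : 0 ≤ (n:ℝ)*p i := mul_nonneg (by positivity) (hp i)
    apply div_pos (by linarith) hN0
  have hqs : ∑ i, q i = 1 := by
    calc ∑ i, q i = ∑ i, ((n:ℝ)*p i + a)/N := Finset.sum_congr rfl (fun i _ => hq i)
      _ = (∑ i, ((n:ℝ)*p i + a))/N := by rw [Finset.sum_div]
      _ = ((n:ℝ)*1 + (S:ℝ)*a)/N := by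
          rw [Finset.sum_add_distrib, ← Finset.mul_sum, hps, Finset.sum_const,
            Finset.card_univ, Fintype.card_fin, nsmul_eq_mul]
      _ = 1 := by rw [hN]; field_simp
  -- notation
  set T := Finset.piAntidiag (univ : Finset (Fin S)) n with hTdef
  set phat : (Fin S → ℕ) → Fin S → ℝ := fun y i => ((y i : ℝ) + a)/N with hphatdef
  have hphat_pos : ∀ y i, 0 < phat y i := by
    intro y i
    apply div_pos _ hN0
    have : (0:ℝ) ≤ (y i : ℝ) := Nat.cast_nonneg _
    linarith
  have hphat_sum : ∀ y ∈ T, ∑ i, phat y i = 1 := by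
    intro y hy
    rw [hTdef, Finset.mem_piAntidiag] at hy
    have hysum : (∑ i, (y i:ℝ)) = (n:ℝ) := by
      rw [← Nat.cast_sum]
      exact_mod_cast congrArg (Nat.cast : ℕ → ℝ) hy.1
    rw [hphatdef]
    simp only
    rw [← Finset.sum_div, Finset.sum_add_distrib, hysum, Finset.sum_const,
      Finset.card_univ, Fintype.card_fin, nsmul_eq_mul, hN]
    field_simp
  have hW0 : ∀ y, 0 ≤ W p n y := fun y => W_nonneg hp n y
  have hWsum : ∑ y ∈ T, W p n y = 1 := sum_W hps n
  have hHhat : ∀ y, Hhat n S a y = -∑ i, phat y i * Real.log (phat y i) := by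
    intro y
    rw [Hhat, hphatdef]
    simp only [← hN]
  have hmexp : mExp n S p (Hhat n S a)
      = ∑ y ∈ T, W p n y * (-∑ i, phat y i * Real.log (phat y i)) := by
    rw [mExp_eq]
    exact Finset.sum_congr rfl fun y _ => by rw [hHhat]
  have hEphat : ∀ i, ∑ y ∈ T, W p n y * phat y i = q i := by
    intro i
    have e1 : ∀ y, W p n y * phat y i = (W p n y * (y i:ℝ))/N + (W p n y)*(a/N) := by
      intro y
      rw [hphatdef]
      simp only
      field_simp
    rw [Finset.sum_congr rfl fun y _ => e1 y, Finset.sum_add_distrib, ← Finset.sum_div,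
      ← Finset.sum_mul, EX hps, hWsum, hq]
    field_simp
  -- ED
  set ED := ∑ y ∈ T, W p n y * (∑ i, phat y i * (Real.log (phat y i) - Real.log (q i)))
    with hEDdef
  have hswap : ∑ y ∈ T, W p n y * (∑ i, phat y i * Real.log (q i))
      = ∑ i, q i * Real.log (q i) := by
    have e1 : ∀ y, W p n y * (∑ i, phat y i * Real.log (q i))
        = ∑ i, (W p n y * phat y i) * Real.log (q i) := by
      intro y
      rw [Finset.mul_sum]
      exact Finset.sum_congr rfl fun i _ => by ring
    rw [Finset.sum_congr rfl fun y _ => e1 y, Finset.sum_comm]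
    refine Finset.sum_congr rfl fun i _ => ?_
    rw [← Finset.sum_mul, hEphat]
  have hid : mExp n S p (Hhat n S a) = (-∑ i, q i*Real.log (q i)) - ED := by
    rw [hmexp, hEDdef, ← hswap, ← Finset.sum_neg_distrib, ← Finset.sum_sub_distrib]
    refine Finset.sum_congr rfl fun y _ => ?_
    have e : ∑ i, phat y i * (Real.log (phat y i) - Real.log (q i))
        = (∑ i, phat y i * Real.log (phat y i)) - ∑ i, phat y i * Real.log (q i) := by
      rw [← Finset.sum_sub_distrib]
      exact Finset.sum_congr rfl fun i _ => by ring
    rw [e]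
    ring
  -- Gibbs: each inner divergence is nonnegative
  have hgibbs : ∀ y ∈ T, 0 ≤ ∑ i, phat y i * (Real.log (phat y i) - Real.log (q i)) := by
    intro y hy
    have per : ∀ i, phat y i * (Real.log (q i) - Real.log (phat y i)) ≤ q i - phat y i := by
      intro i
      have hl : Real.log (q i) - Real.log (phat y i) ≤ q i/(phat y i) - 1 := by
        have h := Real.log_le_sub_one_of_pos (div_pos (hq0 i) (hphat_pos y i))
        rwa [Real.log_div (ne_of_gt (hq0 i)) (ne_of_gt (hphat_pos y i))] at h
      have hm := mul_le_mul_of_nonneg_left hl (hphat_pos y i).le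
      have he : phat y i * (q i/(phat y i) - 1) = q i - phat y i := by
        field_simp [(hphat_pos y i).ne']
      linarith [hm, he.le, he.ge]
    have hsum := Finset.sum_le_sum (fun i (_ : i ∈ univ) => per i)
    rw [Finset.sum_sub_distrib, hqs, hphat_sum y hy] at hsum
    have e : ∑ i, phat y i * (Real.log (phat y i) - Real.log (q i))
        = -∑ i, phat y i * (Real.log (q i) - Real.log (phat y i)) := by
      rw [← Finset.sum_neg_distrib]
      exact Finset.sum_congr rfl fun i _ => by ring
    rw [e]
    linarith [hsum]
  have hED0 : 0 ≤ ED := by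
    rw [hEDdef]
    exact Finset.sum_nonneg fun y hy => mul_nonneg (hW0 y) (hgibbs y hy)
  -- chi-square moment computation
  have hnpa_pos : ∀ i, 0 < (n:ℝ)*p i + a := by
    intro i
    have : 0 ≤ (n:ℝ)*p i := mul_nonneg (Nat.cast_nonneg n) (hp i)
    linarith
  set Rq := 1 + ∑ i, (n:ℝ)*p i*(1 - p i)/(N*((n:ℝ)*p i + a)) with hRqdef
  have hterm_nonneg : ∀ i, 0 ≤ (n:ℝ)*p i*(1 - p i)/(N*((n:ℝ)*p i + a)) := by
    intro i
    apply div_nonneg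
    · exact mul_nonneg (mul_nonneg (Nat.cast_nonneg n) (hp i)) (by linarith [hp1 i])
    · exact le_of_lt (mul_pos hN0 (hnpa_pos i))
  have hRq1 : (1:ℝ) ≤ Rq := by
    rw [hRqdef]
    have := Finset.sum_nonneg fun i (_ : i ∈ univ) => hterm_nonneg i
    linarith
  have hRq0 : (0:ℝ) < Rq := lt_of_lt_of_le one_pos hRq1
  have hRqle : Rq ≤ 1 + ((S:ℝ)-1)/N := by
    rw [hRqdef]
    have hper : ∀ i, (n:ℝ)*p i*(1 - p i)/(N*((n:ℝ)*p i + a)) ≤ (1 - p i)/N := by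
      intro i
      rw [div_le_div_iff₀ (mul_pos hN0 (hnpa_pos i)) hN0]
      have h1 : 0 ≤ 1 - p i := by linarith [hp1 i]
      have h2 : 0 ≤ (n:ℝ)*p i := mul_nonneg (Nat.cast_nonneg n) (hp i)
      nlinarith [mul_nonneg (mul_nonneg h1 hN0.le) ha.le, sq_nonneg N]
    have hsum := Finset.sum_le_sum (fun i (_ : i ∈ univ) => hper i)
    have e : ∑ i : Fin S, (1 - p i)/N = ((S:ℝ)-1)/N := by
      rw [← Finset.sum_div, Finset.sum_sub_distrib, hps, Finset.sum_const,
        Finset.card_univ, Fintype.card_fin, nsmul_eq_mul, mul_one]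
    linarith [hsum, e.le, e.ge]
  have hmom_i : ∀ i, ∑ y ∈ T, W p n y * (phat y i)^2
      = (((n:ℝ)*p i + a)^2 + (n:ℝ)*p i*(1 - p i))/N^2 := by
    intro i
    have e1 : ∀ y, W p n y * (phat y i)^2
        = (W p n y * ((y i:ℝ))^2)/N^2 + (2*a/N^2)*(W p n y * (y i:ℝ))
          + (a^2/N^2)*(W p n y) := by
      intro y
      rw [hphatdef]
      simp only
      field_simp
      ring
    rw [Finset.sum_congr rfl fun y _ => e1 y, Finset.sum_add_distrib,
      Finset.sum_add_distrib, ← Finset.sum_div, ← Finset.mul_sum, ← Finset.mul_sum,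
      EXsq hps, EX hps, hWsum]
    field_simp
    ring
  have hmom : ∑ y ∈ T, W p n y * (∑ i, (phat y i)^2 / q i) = Rq := by
    have e1 : ∀ y, W p n y * (∑ i, (phat y i)^2 / q i)
        = ∑ i, (W p n y * (phat y i)^2) * (1/q i) := by
      intro y
      rw [Finset.mul_sum]
      exact Finset.sum_congr rfl fun i _ => by ring
    rw [Finset.sum_congr rfl fun y _ => e1 y, Finset.sum_comm]
    have e2 : ∀ i, ∑ y ∈ T, (W p n y * (phat y i)^2) * (1/q i)
        = q i + (n:ℝ)*p i*(1 - p i)/(N*((n:ℝ)*p i + a)) := by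
      intro i
      rw [← Finset.sum_mul, hmom_i, hq]
      have h1 := hnpa_pos i
      field_simp
    rw [Finset.sum_congr rfl fun i _ => e2 i, Finset.sum_add_distrib, hqs, hRqdef]
  -- Jensen: ED ≤ log Rq
  have hEDle : ED ≤ Real.log Rq := by
    have hinner : ∀ y ∈ T, W p n y * (∑ i, phat y i * (Real.log (phat y i) - Real.log (q i)))
        ≤ W p n y * Real.log Rq + (W p n y * (∑ i, (phat y i)^2/q i))/Rq - W p n y := by
      intro y hy
      have hper : ∀ i, phat y i * (Real.log (phat y i) - Real.log (q i))
          ≤ phat y i * Real.log Rq + (phat y i)^2/(q i*Rq) - phat y i := by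
        intro i
        have hv : 0 < phat y i/q i := div_pos (hphat_pos y i) (hq0 i)
        have hl : Real.log (phat y i/q i) - Real.log Rq ≤ (phat y i/q i)/Rq - 1 := by
          have h := Real.log_le_sub_one_of_pos (div_pos hv hRq0)
          rwa [Real.log_div (ne_of_gt hv) (ne_of_gt hRq0)] at h
        rw [Real.log_div (ne_of_gt (hphat_pos y i)) (ne_of_gt (hq0 i))] at hl
        have hm := mul_le_mul_of_nonneg_left hl (hphat_pos y i).le
        have he : phat y i * ((phat y i/q i)/Rq - 1) = (phat y i)^2/(q i*Rq) - phat y i := by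
          field_simp
        rw [he] at hm
        nlinarith [hm]
      have hsum2 := Finset.sum_le_sum (fun i (_ : i ∈ univ) => hper i)
      have hmW := mul_le_mul_of_nonneg_left hsum2 (hW0 y)
      have he3 : ∑ i, (phat y i * Real.log Rq + (phat y i)^2/(q i*Rq) - phat y i)
          = Real.log Rq + (∑ i, (phat y i)^2/q i)/Rq - 1 := by
        rw [Finset.sum_sub_distrib, Finset.sum_add_distrib, ← Finset.sum_mul,
          hphat_sum y hy]
        have e4 : ∑ i, (phat y i)^2/(q i*Rq) = (∑ i, (phat y i)^2/q i)/Rq := by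
          rw [Finset.sum_div]
          exact Finset.sum_congr rfl fun i _ => by rw [div_div]
        rw [e4, one_mul]
      rw [he3] at hmW
      calc W p n y * (∑ i, phat y i * (Real.log (phat y i) - Real.log (q i)))
          ≤ W p n y * (Real.log Rq + (∑ i, (phat y i)^2/q i)/Rq - 1) := hmW
        _ = W p n y * Real.log Rq + (W p n y * (∑ i, (phat y i)^2/q i))/Rq - W p n y := by
            field_simp
    have htot := Finset.sum_le_sum hinner
    rw [hEDdef]
    have e5 : ∑ y ∈ T, (W p n y * Real.log Rq + (W p n y * (∑ i, (phat y i)^2/q i))/Rq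
          - W p n y)
        = Real.log Rq + Rq/Rq - 1 := by
      rw [Finset.sum_sub_distrib, Finset.sum_add_distrib, ← Finset.sum_mul, hWsum,
        ← Finset.sum_div, hmom, one_mul]
    rw [e5] at htot
    have : Rq/Rq = 1 := div_self (ne_of_gt hRq0)
    linarith [htot]
  constructor
  · rw [hid]
    have hlog : Real.log Rq ≤ Real.log (1 + ((S:ℝ)-1)/N) := Real.log_le_log hRq0 hRqle
    linarith [hEDle, hlog]
  · rw [hid]
    linarith [hED0]


set_option maxHeartbeats 1000000 in
/-- For n ≥ Sa, the bias of H(P̂_B) is uniformly bounded: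
|E_P[H(P̂_B)] - H(P)| ≤ ln(1 + (S-1)/(n+Sa)) + (2Sa/(n+Sa))·ln((n+Sa)/(2a))
for every distribution P on S elements. -/
theorem stmt12 (n S : ℕ) (hn : 1 ≤ n) (hS : 2 ≤ S) (a : ℝ) (ha : 0 < a)
    (hna : (S : ℝ) * a ≤ n)
    (p : Fin S → ℝ) (hp : ∀ i, 0 ≤ p i) (hps : ∑ i, p i = 1) :
    |mExp n S p (Hhat n S a) - (-∑ i, p i * Real.log (p i))|
      ≤ Real.log (1 + ((S : ℝ) - 1) / ((n : ℝ) + S * a)) +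
        (2 * S * a / ((n : ℝ) + S * a)) * Real.log (((n : ℝ) + S * a) / (2 * a)) := by
  have hS0 : (0:ℝ) < (S:ℝ) := by positivity
  have hS2 : (2:ℝ) ≤ (S:ℝ) := by exact_mod_cast hS
  have hn1 : (1:ℝ) ≤ (n:ℝ) := by exact_mod_cast hn
  set N := (n:ℝ) + S*a with hNdef
  have hN0 : (0:ℝ) < N := by rw [hNdef]; positivity
  have hNne : N ≠ 0 := ne_of_gt hN0
  have hSa0 : (0:ℝ) < (S:ℝ)*a := mul_pos hS0 ha
  have hN2 : 2*((S:ℝ)*a) ≤ N := by rw [hNdef]; linarith [hna]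
  set q : Fin S → ℝ := fun i => ((n:ℝ)*p i + a)/N with hqdef
  have hq : ∀ i, q i = ((n:ℝ)*p i + a)/N := fun i => rfl
  have hED := EDlem n S hS a ha p hp hps N hNdef q hq
  set lam := (S:ℝ)*a/N with hlamdef
  have hlam0 : 0 < lam := div_pos hSa0 hN0
  have hlam2 : lam ≤ 1/2 := by
    rw [hlamdef, div_le_iff₀ hN0]
    linarith [hN2]
  have hqmix : ∀ i, q i = (1-lam)*p i + lam/(S:ℝ) := by
    intro i
    rw [hq, hlamdef, hNdef]
    have hSne : (S:ℝ) ≠ 0 := ne_of_gt hS0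
    have hNne' : (n:ℝ) + (S:ℝ)*a ≠ 0 := by rw [← hNdef]; exact hNne
    field_simp
    ring
  have hmixlow := mix_lower (le_trans (by norm_num) hS) lam hlam0.le (by linarith) p hp hps
  have e : ∀ i, (1-lam)*p i + lam/(S:ℝ) = q i := fun i => (hqmix i).symm
  simp only [e] at hmixlow
  have hmixup := mix_upper hS hlam0 hlam2 p hp hps q hqmix
  have harg : (S:ℝ)/(2*lam) = N/(2*a) := by
    rw [hlamdef]
    have hSne : (S:ℝ) ≠ 0 := ne_of_gt hS0
    field_simp
  have hco : 2*lam = 2*(S:ℝ)*a/N := by rw [hlamdef]; ring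
  have hterm1 : 0 ≤ Real.log (1 + ((S:ℝ)-1)/N) := by
    apply Real.log_nonneg
    have : 0 ≤ ((S:ℝ)-1)/N := div_nonneg (by linarith) hN0.le
    linarith
  have hterm2 : 0 ≤ 2*lam*Real.log ((S:ℝ)/(2*lam)) := by
    apply mul_nonneg (by linarith)
    apply Real.log_nonneg
    rw [le_div_iff₀ (by positivity)]
    linarith
  rw [abs_le]
  rw [← harg, ← hco]
  constructor
  · have h1 := hED.1
    -- mExp ≥ Hq - term1 ≥ Hp - term1
    have h2 : -∑ i, p i * Real.log (p i) ≤ -∑ i, q i * Real.log (q i) := hmixlow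
    linarith [h1, h2, hterm2]
  · have h1 := hED.2
    linarith [h1, hmixup, hterm1]
end

section
/- If n < Sa (with a > 0, S ≥ 2), then sup over distributions P on S elements of E_P[(H(P̂_B) - H(P))²] ≥ (ln S)²/16. -/
open Finset

lemma neg_mul_log_nonneg {t : ℝ} (h0 : 0 ≤ t) (h1 : t ≤ 1) : 0 ≤ -(t * Real.log t) := by
  rcases eq_or_lt_of_le h0 with h | h
  · simp [← h]
  · have := Real.log_nonpos h0 h1
    nlinarith

lemma neg_mul_log_le_one {t : ℝ} (h0 : 0 ≤ t) (h1 : t ≤ 1) : -(t * Real.log t) ≤ 1 := by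
  rcases eq_or_lt_of_le h0 with h | h
  · simp [← h]
  · have hinv : 0 < t⁻¹ := by positivity
    have hlog : Real.log t⁻¹ ≤ t⁻¹ - 1 := Real.log_le_sub_one_of_pos hinv
    rw [Real.log_inv] at hlog
    have heq : -(t * Real.log t) = t * (-Real.log t) := by ring
    rw [heq]
    calc t * (-Real.log t) ≤ t * (t⁻¹ - 1) := mul_le_mul_of_nonneg_left hlog h0
      _ = 1 - t := by field_simp
      _ ≤ 1 := by linarith

-- Hhat bounds for x with entries ≤ n
lemma Hhat_bounds (n S : ℕ) (hS : 1 ≤ S) (a : ℝ) (ha : 0 < a) (x : Fin S → ℕ)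
    (hx : ∀ i, x i ≤ n) : 0 ≤ Hhat n S a x ∧ Hhat n S a x ≤ S := by
  have hT : (0:ℝ) < (n : ℝ) + S * a := by
    have : (1:ℝ) ≤ S := by exact_mod_cast hS
    nlinarith
  have hterm : ∀ i, 0 ≤ -((((x i : ℝ) + a) / ((n : ℝ) + S * a)) *
      Real.log (((x i : ℝ) + a) / ((n : ℝ) + S * a))) ∧
      -((((x i : ℝ) + a) / ((n : ℝ) + S * a)) *
      Real.log (((x i : ℝ) + a) / ((n : ℝ) + S * a))) ≤ 1 := by
    intro i
    have h0 : 0 ≤ ((x i : ℝ) + a) / ((n : ℝ) + S * a) := by positivity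
    have h1 : ((x i : ℝ) + a) / ((n : ℝ) + S * a) ≤ 1 := by
      rw [div_le_one hT]
      have hxi : (x i : ℝ) ≤ n := by exact_mod_cast hx i
      have : (1:ℝ) ≤ S := by exact_mod_cast hS
      nlinarith
    exact ⟨neg_mul_log_nonneg h0 h1, neg_mul_log_le_one h0 h1⟩
  constructor
  · unfold Hhat
    rw [← Finset.sum_neg_distrib]
    apply Finset.sum_nonneg
    intro i _; exact (hterm i).1
  · unfold Hhat
    rw [← Finset.sum_neg_distrib]
    calc (∑ i, -((((x i : ℝ) + a) / ((n : ℝ) + S * a)) *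
        Real.log (((x i : ℝ) + a) / ((n : ℝ) + S * a)))) ≤ ∑ _i : Fin S, (1:ℝ) := by
          apply Finset.sum_le_sum; intro i _; exact (hterm i).2
      _ = S := by simp

-- H(P) bounds for p in simplex
lemma Hp_bounds (S : ℕ) (p : Fin S → ℝ) (hp : ∀ i, 0 ≤ p i) (hs : ∑ i, p i = 1) :
    0 ≤ -∑ i, p i * Real.log (p i) ∧ -∑ i, p i * Real.log (p i) ≤ S := by
  have hle : ∀ i, p i ≤ 1 := by
    intro i
    calc p i ≤ ∑ j, p j := Finset.single_le_sum (fun j _ => hp j) (Finset.mem_univ i)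
      _ = 1 := hs
  constructor
  · rw [← Finset.sum_neg_distrib]
    apply Finset.sum_nonneg
    intro i _; exact neg_mul_log_nonneg (hp i) (hle i)
  · rw [← Finset.sum_neg_distrib]
    calc (∑ i, -(p i * Real.log (p i))) ≤ ∑ _i : Fin S, (1:ℝ) := by
          apply Finset.sum_le_sum; intro i _; exact neg_mul_log_le_one (hp i) (hle i)
      _ = S := by simp

-- boundedness of the set
lemma set_bdd (n S : ℕ) (hS : 2 ≤ S) (a : ℝ) (ha : 0 < a) :
    BddAbove {r : ℝ | ∃ p : Fin S → ℝ, (∀ i, 0 ≤ p i) ∧ (∑ i, p i = 1) ∧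
        r = mExp n S p (fun x =>
          (Hhat n S a x - (-∑ i, p i * Real.log (p i))) ^ 2)} := by
  use ((n+1)^S : ℝ) * (n.factorial : ℝ) * (S:ℝ)^2
  rintro r ⟨p, hp, hs, rfl⟩
  unfold mExp
  have hle1 : ∀ i, p i ≤ 1 := by
    intro i
    calc p i ≤ ∑ j, p j := Finset.single_le_sum (fun j _ => hp j) (Finset.mem_univ i)
      _ = 1 := hs
  have hbound : ∀ x : Fin S → Fin (n+1),
      (if (∑ i, ((x i : ℕ))) = n then
        ((n.factorial : ℝ) / ∏ i, ((x i : ℕ).factorial : ℝ)) *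
          (∏ i, p i ^ (x i : ℕ)) *
          ((Hhat n S a (fun i => (x i : ℕ)) - (-∑ i, p i * Real.log (p i))) ^ 2)
      else 0) ≤ (n.factorial : ℝ) * (S:ℝ)^2 := by
    intro x
    by_cases hc : (∑ i, ((x i : ℕ))) = n
    · rw [if_pos hc]
      have hHhat := Hhat_bounds n S (by omega) a ha (fun i => (x i : ℕ))
        (fun i => Nat.lt_succ_iff.mp (x i).isLt)
      have hHp := Hp_bounds S p hp hs
      have hsq : (Hhat n S a (fun i => (x i : ℕ)) - (-∑ i, p i * Real.log (p i))) ^ 2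
          ≤ (S:ℝ)^2 := by
        apply sq_le_sq'
        · nlinarith [hHhat.1, hHhat.2, hHp.1, hHp.2]
        · nlinarith [hHhat.1, hHhat.2, hHp.1, hHp.2]
      have hfacprod : (1:ℝ) ≤ ∏ i, ((x i : ℕ).factorial : ℝ) := by
        calc (1:ℝ) = ∏ _i : Fin S, (1:ℝ) := by simp
          _ ≤ ∏ i, ((x i : ℕ).factorial : ℝ) := by
              apply Finset.prod_le_prod (fun i _ => zero_le_one)
              intro i _
              exact_mod_cast Nat.one_le_iff_ne_zero.mpr (Nat.factorial_ne_zero _)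
      have hcoef : ((n.factorial : ℝ) / ∏ i, ((x i : ℕ).factorial : ℝ)) ≤ (n.factorial : ℝ) := by
        exact div_le_self (Nat.cast_nonneg _) hfacprod
      have hcoef0 : (0:ℝ) ≤ ((n.factorial : ℝ) / ∏ i, ((x i : ℕ).factorial : ℝ)) := by
        apply div_nonneg (Nat.cast_nonneg _) (le_trans zero_le_one hfacprod)
      have hprodle : (∏ i, p i ^ (x i : ℕ)) ≤ 1 := by
        apply Finset.prod_le_one
        · intro i _; exact pow_nonneg (hp i) _
        · intro i _; exact pow_le_one₀ (hp i) (hle1 i)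
      have hprod0 : (0:ℝ) ≤ ∏ i, p i ^ (x i : ℕ) := by
        apply Finset.prod_nonneg; intro i _; exact pow_nonneg (hp i) _
      calc ((n.factorial : ℝ) / ∏ i, ((x i : ℕ).factorial : ℝ)) *
          (∏ i, p i ^ (x i : ℕ)) *
          ((Hhat n S a (fun i => (x i : ℕ)) - (-∑ i, p i * Real.log (p i))) ^ 2)
          ≤ (n.factorial : ℝ) * 1 * (S:ℝ)^2 := by
            apply mul_le_mul
            · apply mul_le_mul hcoef hprodle hprod0 (Nat.cast_nonneg _)
            · exact hsq
            · positivity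
            · positivity
        _ = (n.factorial : ℝ) * (S:ℝ)^2 := by ring
    · rw [if_neg hc]; positivity
  calc (∑ x : Fin S → Fin (n+1), _) ≤ ∑ _x : Fin S → Fin (n+1), (n.factorial : ℝ) * (S:ℝ)^2 := by
        apply Finset.sum_le_sum; intro x _; exact hbound x
    _ = (Fintype.card (Fin S → Fin (n+1)) : ℝ) * ((n.factorial : ℝ) * (S:ℝ)^2) := by
        rw [Finset.sum_const, nsmul_eq_mul]; simp
    _ ≤ ((n+1)^S : ℝ) * (n.factorial : ℝ) * (S:ℝ)^2 := by
        rw [Fintype.card_fun]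
        simp only [Fintype.card_fin]
        push_cast
        ring_nf
        exact le_rfl

lemma Hhat_lower (n S : ℕ) (hn : 1 ≤ n) (hS : 2 ≤ S) (a : ℝ) (ha : 0 < a)
    (hna : (n : ℝ) < S * a) :
    Real.log S / 4 ≤ Hhat n S a (fun i => if i = (⟨0, by omega⟩ : Fin S) then n else 0) := by
  classical
  set z : Fin S := ⟨0, by omega⟩
  have hS1 : (2:ℝ) ≤ S := by exact_mod_cast hS
  have hn1 : (1:ℝ) ≤ n := by exact_mod_cast hn
  set T : ℝ := (n : ℝ) + S * a with hTdef
  have hT : 0 < T := by nlinarith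
  set A : ℝ := (((n:ℝ) + a) / T) * Real.log (((n:ℝ) + a) / T) with hA
  set B : ℝ := (a / T) * Real.log (a / T) with hB
  have hterm : ∀ i : Fin S,
      ((((if i = z then n else 0 : ℕ) : ℝ) + a) / T) *
        Real.log ((((if i = z then n else 0 : ℕ) : ℝ) + a) / T)
      = if i = z then A else B := by
    intro i
    by_cases h : i = z <;> simp [h, hA, hB]
  have hsum : Hhat n S a (fun i => if i = z then n else 0) = -(A + ((S:ℝ) - 1) * B) := by
    unfold Hhat
    rw [← hTdef]
    simp only [hterm]
    have split : ∀ i : Fin S, (if i = z then A else B) = (if i = z then A - B else 0) + B := by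
      intro i; split <;> ring
    rw [Finset.sum_congr rfl (fun i _ => split i), Finset.sum_add_distrib,
      Finset.sum_ite_eq' Finset.univ z (fun _ => A - B)]
    simp [Finset.card_univ]
    ring
  rw [hsum]
  -- bounds
  have hq0 : 0 < ((n:ℝ) + a) / T := by positivity
  have hq1 : ((n:ℝ) + a) / T ≤ 1 := by
    rw [div_le_one hT]; nlinarith
  have hAle : A ≤ 0 := mul_nonpos_of_nonneg_of_nonpos (le_of_lt hq0)
    (Real.log_nonpos (le_of_lt hq0) hq1)
  have hTa : (S:ℝ) ≤ T / a := by
    rw [le_div_iff₀ ha]; nlinarith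
  have hlogS0 : 0 ≤ Real.log S := Real.log_nonneg (by linarith)
  have hlog : Real.log S ≤ Real.log (T / a) := by
    apply Real.log_le_log (by positivity) hTa
  have hBlog : Real.log (a / T) = -Real.log (T / a) := by
    rw [← Real.log_inv]
    congr 1
    rw [inv_div]
  have hfrac : (1:ℝ)/4 ≤ ((S:ℝ) - 1) * (a / T) := by
    rw [mul_div_assoc'] at *
    rw [le_div_iff₀ hT]
    nlinarith
  have hfrac0 : (0:ℝ) ≤ ((S:ℝ) - 1) * (a / T) := le_trans (by norm_num) hfrac
  have hmul : (1/4) * Real.log S ≤ (((S:ℝ) - 1) * (a / T)) * Real.log (T / a) :=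
    mul_le_mul hfrac hlog hlogS0 hfrac0
  have hBeq : ((S:ℝ) - 1) * B = -((((S:ℝ) - 1) * (a / T)) * Real.log (T / a)) := by
    rw [hB, hBlog]; ring
  linarith [hmul, hAle, hBeq.ge, hBeq.le]
-- dirac evaluation of mExp
lemma mExp_dirac (n S : ℕ) (hn : 1 ≤ n) (hS : 2 ≤ S) (g : (Fin S → ℕ) → ℝ) :
    mExp n S (fun i => if i = (⟨0, by omega⟩ : Fin S) then 1 else 0) g
      = g (fun i => if i = (⟨0, by omega⟩ : Fin S) then n else 0) := by
  classical
  set z : Fin S := ⟨0, by omega⟩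
  set xstar : Fin S → Fin (n+1) := fun i => if i = z then ⟨n, Nat.lt_succ_self n⟩ else 0 with hxs
  have hxval : ∀ i, ((xstar i : ℕ)) = if i = z then n else 0 := by
    intro i; by_cases h : i = z <;> simp [hxs, h]
  unfold mExp
  rw [Finset.sum_eq_single xstar]
  · have hcond : (∑ i, ((xstar i : ℕ))) = n := by
      simp only [hxval]
      rw [Finset.sum_ite_eq' Finset.univ z (fun _ => n)]
      simp
    rw [if_pos hcond]
    have hfact : (∏ i, ((xstar i : ℕ).factorial : ℝ)) = (n.factorial : ℝ) := by
      have : ∀ i, ((xstar i : ℕ).factorial : ℝ) = if i = z then (n.factorial : ℝ) else 1 := by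
        intro i; by_cases h : i = z <;> simp [hxval, h]
      simp only [this]
      rw [Finset.prod_ite_eq' Finset.univ z (fun _ => (n.factorial : ℝ))]
      simp
    have hprod : (∏ i, (if i = z then (1:ℝ) else 0) ^ ((xstar i : ℕ))) = 1 := by
      apply Finset.prod_eq_one
      intro i _
      by_cases h : i = z <;> simp [hxval, h]
    rw [hfact, hprod]
    have hg : (fun i => ((xstar i : ℕ))) = (fun i => if i = z then n else 0) := by
      funext i; exact hxval i
    rw [hg]
    have : (n.factorial : ℝ) ≠ 0 := Nat.cast_ne_zero.mpr (Nat.factorial_ne_zero n)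
    field_simp
  · intro x _ hx
    by_cases hcond : (∑ i, ((x i : ℕ))) = n
    · rw [if_pos hcond]
      -- find i ≠ z with x i ≠ 0
      have : ∃ i, i ≠ z ∧ (x i : ℕ) ≠ 0 := by
        by_contra h
        push_neg at h
        apply hx
        funext i
        by_cases hi : i = z
        · subst hi
          have : ∀ j, j ≠ z → (x j : ℕ) = 0 := h
          have hsum : (∑ i, ((x i : ℕ))) = (x z : ℕ) := by
            rw [← Finset.add_sum_erase Finset.univ _ (Finset.mem_univ z)]
            have : ∑ j ∈ Finset.univ.erase z, ((x j : ℕ)) = 0 := by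
              apply Finset.sum_eq_zero
              intro j hj
              exact h j (Finset.mem_erase.mp hj).1
            omega
          have : (x z : ℕ) = n := by omega
          apply Fin.ext
          simp [hxs, this]
        · have : (x i : ℕ) = 0 := h i hi
          apply Fin.ext
          simp [hxs, hi, this]
      obtain ⟨i, hiz, hxi⟩ := this
      have : (∏ j, (if j = z then (1:ℝ) else 0) ^ ((x j : ℕ))) = 0 := by
        apply Finset.prod_eq_zero (Finset.mem_univ i)
        simp [hiz, zero_pow hxi]
      rw [this]; ring
    · rw [if_neg hcond]
  · intro h; exact absurd (Finset.mem_univ xstar) h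

/-- If n < Sa then sup_P E_P[(H(P̂_B) - H(P))²] ≥ (ln S)²/16. -/
theorem stmt14 (n S : ℕ) (hn : 1 ≤ n) (hS : 2 ≤ S) (a : ℝ) (ha : 0 < a)
    (hna : (n : ℝ) < S * a) :
    sSup {r : ℝ | ∃ p : Fin S → ℝ, (∀ i, 0 ≤ p i) ∧ (∑ i, p i = 1) ∧
        r = mExp n S p (fun x =>
          (Hhat n S a x - (-∑ i, p i * Real.log (p i))) ^ 2)}
      ≥ (Real.log S) ^ 2 / 16 := by
  classical
  set z : Fin S := ⟨0, by omega⟩ with hz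
  set p : Fin S → ℝ := fun i => if i = z then 1 else 0 with hpdef
  have hp0 : ∀ i, 0 ≤ p i := by
    intro i; by_cases h : i = z <;> simp [hpdef, h]
  have hps : ∑ i, p i = 1 := by
    rw [hpdef]
    rw [Finset.sum_ite_eq' Finset.univ z (fun _ => (1:ℝ))]
    simp
  have hH0 : (-∑ i, p i * Real.log (p i)) = 0 := by
    rw [neg_eq_zero]
    apply Finset.sum_eq_zero
    intro i _
    by_cases h : i = z <;> simp [hpdef, h]
  set g : (Fin S → ℕ) → ℝ := fun x =>
    (Hhat n S a x - (-∑ i, p i * Real.log (p i))) ^ 2 with hgdef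
  have hmem : mExp n S p g ∈ {r : ℝ | ∃ p : Fin S → ℝ, (∀ i, 0 ≤ p i) ∧ (∑ i, p i = 1) ∧
      r = mExp n S p (fun x =>
        (Hhat n S a x - (-∑ i, p i * Real.log (p i))) ^ 2)} :=
    ⟨p, hp0, hps, rfl⟩
  have hval : mExp n S p g = g (fun i => if i = z then n else 0) :=
    mExp_dirac n S hn hS g
  have hlow : (Real.log S) ^ 2 / 16 ≤ g (fun i => if i = z then n else 0) := by
    rw [hgdef]
    simp only [hH0, sub_zero]
    have h14 := Hhat_lower n S hn hS a ha hna
    have h0 : 0 ≤ Real.log S / 4 := by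
      have : (0:ℝ) ≤ Real.log S := Real.log_nonneg (by exact_mod_cast (by omega : 1 ≤ S))
      linarith
    calc (Real.log S) ^ 2 / 16 = (Real.log S / 4) ^ 2 := by ring
      _ ≤ (Hhat n S a (fun i => if i = z then n else 0)) ^ 2 := by
          apply pow_le_pow_left₀ h0 h14
  have hsup := le_csSup (set_bdd n S hS a ha) hmem
  calc (Real.log S) ^ 2 / 16 ≤ g (fun i => if i = z then n else 0) := hlow
    _ = mExp n S p g := hval.symm
    _ ≤ _ := hsup
end

section
/- Let a > 0, S ≥ 2, n ≥ Sa, S ≥ e(2n+1), and let Ĥ^Bayes = ψ(Sa+n+1) - ∑_i ((a+X_i)/(Sa+n))·ψ(a+X_i+1) where (X_1,...,X_S) ∼ Multinomial(n; P). Then sup over distributions P on S elements of E_P[(Ĥ^Bayes - H(P))²] ≥ (ln(S/(e(2n+1))))². -/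
open Finset

/-- The digamma function ψ(x) = Γ'(x)/Γ(x). -/
noncomputable def digamma (x : ℝ) : ℝ := deriv Real.Gamma x / Real.Gamma x

/-- The Bayes entropy estimator under the Dir(a,...,a) prior. -/
noncomputable def HBayes (n S : ℕ) (a : ℝ) (x : Fin S → ℕ) : ℝ :=
  digamma ((S : ℝ) * a + n + 1) -
    ∑ i, ((a + x i) / ((S : ℝ) * a + n)) * digamma (a + x i + 1)

lemma logGamma_diff {x : ℝ} (hx : 0 < x) :
    DifferentiableAt ℝ (Real.log ∘ Real.Gamma) x := by
  have h : ∀ m : ℕ, x ≠ -m := fun m => ((neg_nonpos.mpr m.cast_nonneg).trans_lt hx).ne'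
  exact (Real.differentiableAt_Gamma h).log (Real.Gamma_ne_zero h)

lemma deriv_logGamma {x : ℝ} (hx : 0 < x) :
    deriv (Real.log ∘ Real.Gamma) x = digamma x := by
  have h : ∀ m : ℕ, x ≠ -m := fun m => ((neg_nonpos.mpr m.cast_nonneg).trans_lt hx).ne'
  rw [Function.comp_def, deriv.log (Real.differentiableAt_Gamma h) (Real.Gamma_ne_zero h)]
  rfl

lemma logGamma_rec {x : ℝ} (hx : 0 < x) :
    (Real.log ∘ Real.Gamma) (x + 1) = (Real.log ∘ Real.Gamma) x + Real.log x := by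
  simp only [Function.comp_apply, Real.Gamma_add_one hx.ne',
    Real.log_mul hx.ne' (Real.Gamma_pos_of_pos hx).ne', add_comm]

lemma digamma_le_log {x : ℝ} (hx : 0 < x) : digamma x ≤ Real.log x := by
  have h := Real.convexOn_log_Gamma.deriv_le_slope (Set.mem_Ioi.mpr hx)
    (Set.mem_Ioi.mpr (by linarith : (0:ℝ) < x + 1)) (by linarith) (logGamma_diff hx)
  rw [deriv_logGamma hx] at h
  refine h.trans (le_of_eq ?_)
  rw [slope_def_field, logGamma_rec hx, add_sub_cancel_left, show x + 1 - x = (1:ℝ) by ring,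
    div_one]

lemma log_le_digamma {x : ℝ} (hx : 0 < x) : Real.log x ≤ digamma (x + 1) := by
  have h := Real.convexOn_log_Gamma.slope_le_deriv (Set.mem_Ioi.mpr hx)
    (Set.mem_Ioi.mpr (by linarith : (0:ℝ) < x + 1)) (by linarith)
    (logGamma_diff (by linarith : (0:ℝ) < x + 1))
  rw [deriv_logGamma (by linarith : (0:ℝ) < x + 1)] at h
  refine (le_of_eq ?_).trans h
  rw [slope_def_field, logGamma_rec hx, add_sub_cancel_left, show x + 1 - x = (1:ℝ) by ring,
    div_one]

lemma digamma_rec {x : ℝ} (hx : 0 < x) : digamma (x + 1) = digamma x + 1 / x := by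
  have key : deriv (Real.log ∘ Real.Gamma) (x + 1)
      = deriv (Real.log ∘ Real.Gamma) x + 1 / x := by
    rw [← deriv_comp_add_const, one_div, ← Real.deriv_log,
      ← deriv_add (logGamma_diff hx) (Real.differentiableAt_log hx.ne')]
    apply Filter.EventuallyEq.deriv_eq
    filter_upwards [eventually_gt_nhds hx] using fun t ht => logGamma_rec ht
  rwa [deriv_logGamma (by linarith : (0:ℝ) < x + 1), deriv_logGamma hx] at key

lemma neg_one_le_digamma {y : ℝ} (hy : 1 ≤ y) : -1 ≤ digamma y := by
  have hy0 : 0 < y := by linarith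
  have h1 : digamma (y + 1) = digamma y + 1 / y := digamma_rec hy0
  have h2 : Real.log y ≤ digamma (y + 1) := log_le_digamma hy0
  have h3 : Real.log y⁻¹ ≤ y⁻¹ - 1 := Real.log_le_sub_one_of_pos (by positivity)
  rw [Real.log_inv] at h3
  have h4 : 1 / y ≤ 1 := by rw [div_le_one hy0]; exact hy
  simp only [one_div] at h1 h4
  linarith

lemma abs_digamma_le {y B : ℝ} (h1 : 1 ≤ y) (h2 : y ≤ B) :
    |digamma y| ≤ 1 + Real.log B := by
  have hB : (0:ℝ) ≤ Real.log B := Real.log_nonneg (h1.trans h2)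
  rw [abs_le]
  constructor
  · linarith [neg_one_le_digamma h1]
  · have := (digamma_le_log (by linarith : (0:ℝ) < y)).trans
      (Real.log_le_log (by linarith) h2)
    linarith

lemma sum_multinomial {n S : ℕ} (p : Fin S → ℝ) (hp1 : ∑ i, p i = 1) :
    ∑ x : Fin S → Fin (n + 1),
      (if (∑ i, ((x i : ℕ))) = n then
        ((n.factorial : ℝ) / ∏ i, ((x i : ℕ).factorial : ℝ)) * (∏ i, p i ^ (x i : ℕ))
      else 0) = 1 := by
  have key := Finset.sum_pow_eq_sum_piAntidiag (univ : Finset (Fin S)) p n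
  rw [hp1, one_pow] at key
  rw [← Finset.sum_filter, key]
  refine Finset.sum_nbij' (fun x i => ((x i : ℕ))) (fun k i => (⟨min (k i) n, by omega⟩ : Fin (n+1)))
    ?_ ?_ ?_ ?_ ?_
  · intro x hx
    rw [Finset.mem_filter] at hx
    rw [Finset.mem_piAntidiag]
    exact ⟨hx.2, fun i _ => Finset.mem_univ i⟩
  · intro k hk
    rw [Finset.mem_piAntidiag] at hk
    have hle : ∀ i, k i ≤ n := by
      intro i
      have h2 := Finset.single_le_sum (f := k) (fun j _ => Nat.zero_le _) (mem_univ i)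
      have h3 : (∑ x : Fin S, k x) = n := hk.1
      omega
    rw [Finset.mem_filter]
    refine ⟨mem_univ _, ?_⟩
    exact (Finset.sum_congr rfl fun i _ => by simp [min_eq_left (hle i)]).trans hk.1
  · intro x hx
    funext i
    exact Fin.ext (by simp [Nat.min_eq_left (Nat.lt_succ_iff.mp (x i).isLt)])
  · intro k hk
    rw [Finset.mem_piAntidiag] at hk
    have hle : ∀ i, k i ≤ n := by
      intro i
      have h2 := Finset.single_le_sum (f := k) (fun j _ => Nat.zero_le _) (mem_univ i)
      have h3 : (∑ x : Fin S, k x) = n := hk.1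
      omega
    funext i
    simp [min_eq_left (hle i)]
  · intro x hx
    rw [Finset.mem_filter] at hx
    congr 1
    have hspec := Nat.multinomial_spec (univ : Finset (Fin S)) (fun i => ((x i : ℕ)))
    rw [hx.2] at hspec
    have hprod : (0:ℝ) < ∏ i, (((x i : ℕ).factorial : ℝ)) :=
      Finset.prod_pos fun i _ => by exact_mod_cast (x i : ℕ).factorial_pos
    rw [div_eq_iff hprod.ne', mul_comm]
    exact_mod_cast hspec.symm

lemma le_mExp {n S : ℕ} (p : Fin S → ℝ) (hp : ∀ i, 0 ≤ p i) (hp1 : ∑ i, p i = 1)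
    {g : (Fin S → ℕ) → ℝ} {c : ℝ} (hc : 0 ≤ c)
    (hg : ∀ x : Fin S → ℕ, (∑ i, x i) = n → c ≤ g x) :
    c ≤ mExp n S p g := by
  have key := sum_multinomial p hp1 (n := n)
  calc c = (∑ x : Fin S → Fin (n + 1),
      (if (∑ i, ((x i : ℕ))) = n then
        ((n.factorial : ℝ) / ∏ i, ((x i : ℕ).factorial : ℝ)) * (∏ i, p i ^ (x i : ℕ))
      else 0)) * c := by rw [key, one_mul]
  _ = ∑ x : Fin S → Fin (n + 1),
      (if (∑ i, ((x i : ℕ))) = n then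
        (((n.factorial : ℝ) / ∏ i, ((x i : ℕ).factorial : ℝ)) * (∏ i, p i ^ (x i : ℕ))) * c
      else 0) := by
        rw [Finset.sum_mul]
        exact Finset.sum_congr rfl fun x _ => by rw [ite_mul, zero_mul]
  _ ≤ mExp n S p g := by
      apply Finset.sum_le_sum
      intro x _
      split
      · rename_i h
        apply mul_le_mul_of_nonneg_left (hg _ h)
        have h1 : (0:ℝ) ≤ (n.factorial : ℝ) / ∏ i, ((x i : ℕ).factorial : ℝ) := by positivity
        have h2 : (0:ℝ) ≤ ∏ i, p i ^ (x i : ℕ) :=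
          Finset.prod_nonneg fun i _ => pow_nonneg (hp i) _
        positivity
      · exact le_rfl

lemma hbayes_le {n S : ℕ} (hn : 1 ≤ n) (hS : 1 ≤ S) {a : ℝ} (ha : 0 < a)
    (hna : (S : ℝ) * a ≤ n) (x : Fin S → ℕ) (hx : (∑ i, x i) = n) :
    HBayes n S a x ≤ 1 + Real.log (2 * n + 1) := by
  have hn1 : (1:ℝ) ≤ n := by exact_mod_cast hn
  have hSa : (0:ℝ) < (S:ℝ) * a := by
    have : (1:ℝ) ≤ S := by exact_mod_cast hS
    nlinarith
  have hden : (0:ℝ) < (S:ℝ) * a + n := by linarith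
  have h1 : digamma ((S:ℝ) * a + n + 1) ≤ Real.log (2 * n + 1) := by
    refine (digamma_le_log (by linarith)).trans (Real.log_le_log (by linarith) (by linarith))
  have h2 : ∀ i, -(((a + (x i : ℝ)) / ((S:ℝ) * a + n)) * digamma (a + (x i : ℝ) + 1))
      ≤ (a + (x i : ℝ)) / ((S:ℝ) * a + n) := by
    intro i
    have hw : (0:ℝ) ≤ (a + (x i : ℝ)) / ((S:ℝ) * a + n) := by positivity
    have hd : -1 ≤ digamma (a + (x i : ℝ) + 1) := by
      apply neg_one_le_digamma
      have : (0:ℝ) ≤ (x i : ℝ) := Nat.cast_nonneg _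
      linarith
    nlinarith
  have h3 : (∑ i, (a + (x i : ℝ)) / ((S:ℝ) * a + n)) = 1 := by
    rw [← Finset.sum_div, div_eq_one_iff_eq hden.ne']
    rw [Finset.sum_add_distrib, Finset.sum_const, card_univ, Fintype.card_fin]
    have : (∑ i, ((x i : ℝ))) = (n : ℝ) := by exact_mod_cast congrArg (Nat.cast (R := ℝ)) hx
    rw [this]
    push_cast
    ring
  have h4 : -(∑ i, ((a + (x i : ℝ)) / ((S:ℝ) * a + n)) * digamma (a + (x i : ℝ) + 1)) ≤ 1 := by
    have h4 := Finset.sum_le_sum (fun i _ => h2 i) (s := univ)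
    rw [h3] at h4
    rw [← Finset.sum_neg_distrib]
    exact h4
  unfold HBayes
  push_cast
  linarith

lemma entropy_nonneg {S : ℕ} (p : Fin S → ℝ) (hp : ∀ i, 0 ≤ p i) (hp1 : ∑ i, p i = 1) :
    0 ≤ -∑ i, p i * Real.log (p i) := by
  rw [neg_nonneg]
  apply Finset.sum_nonpos
  intro i _
  have hle : p i ≤ 1 := hp1 ▸ Finset.single_le_sum (fun j _ => hp j) (mem_univ i)
  exact mul_nonpos_of_nonneg_of_nonpos (hp i) (Real.log_nonpos (hp i) hle)

lemma entropy_le {S : ℕ} (p : Fin S → ℝ) (hp : ∀ i, 0 ≤ p i) :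
    -∑ i, p i * Real.log (p i) ≤ S := by
  have h : ∀ i ∈ (univ : Finset (Fin S)), -1 ≤ p i * Real.log (p i) := by
    intro i _
    rcases eq_or_lt_of_le (hp i) with h0 | h0
    · simp [← h0]
    · have := Real.log_le_sub_one_of_pos (inv_pos.mpr h0)
      rw [Real.log_inv] at this
      have h2 : p i * (-Real.log (p i)) ≤ p i * ((p i)⁻¹ - 1) :=
        mul_le_mul_of_nonneg_left this (hp i)
      rw [mul_sub, mul_inv_cancel₀ h0.ne'] at h2
      nlinarith
  have := Finset.sum_le_sum h
  simp only [Finset.sum_const, card_univ, Fintype.card_fin, nsmul_eq_mul, mul_neg, mul_one] at this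
  linarith

lemma abs_HBayes_le {n S : ℕ} (hn : 1 ≤ n) (hS : 1 ≤ S) {a : ℝ} (ha : 0 < a)
    (hna : (S : ℝ) * a ≤ n) (x : Fin S → ℕ) (hx : ∀ i, x i ≤ n) :
    |HBayes n S a x| ≤ ((S : ℝ) + 1) * (1 + Real.log (2 * n + 1)) := by
  have hn1 : (1:ℝ) ≤ n := by exact_mod_cast hn
  have hS1 : (1:ℝ) ≤ S := by exact_mod_cast hS
  have haS : a ≤ (S:ℝ) * a := by nlinarith
  have haN : a ≤ (n:ℝ) := by nlinarith
  have hden : (0:ℝ) < (S:ℝ) * a + n := by nlinarith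
  set L := 1 + Real.log (2 * (n:ℝ) + 1) with hL
  have hL0 : 0 ≤ L := by
    have : (0:ℝ) ≤ Real.log (2 * (n:ℝ) + 1) := Real.log_nonneg (by linarith)
    linarith
  have h0 : |digamma ((S:ℝ) * a + n + 1)| ≤ L :=
    abs_digamma_le (by nlinarith) (by nlinarith)
  have hterm : ∀ i, |((a + (x i : ℝ)) / ((S:ℝ) * a + n)) * digamma (a + (x i : ℝ) + 1)| ≤ L := by
    intro i
    have hxi : (x i : ℝ) ≤ n := by exact_mod_cast hx i
    have hxi0 : (0:ℝ) ≤ (x i : ℝ) := Nat.cast_nonneg _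
    have hw : |(a + (x i : ℝ)) / ((S:ℝ) * a + n)| ≤ 1 := by
      rw [abs_of_nonneg (by positivity), div_le_one hden]
      linarith
    have hd : |digamma (a + (x i : ℝ) + 1)| ≤ L :=
      abs_digamma_le (by linarith) (by linarith)
    calc |((a + (x i : ℝ)) / ((S:ℝ) * a + n)) * digamma (a + (x i : ℝ) + 1)|
        = |(a + (x i : ℝ)) / ((S:ℝ) * a + n)| * |digamma (a + (x i : ℝ) + 1)| := abs_mul _ _
      _ ≤ 1 * L := mul_le_mul hw hd (abs_nonneg _) zero_le_one
      _ = L := one_mul L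
  have hsum : |∑ i, ((a + (x i : ℝ)) / ((S:ℝ) * a + n)) * digamma (a + (x i : ℝ) + 1)|
      ≤ (S:ℝ) * L := by
    calc |∑ i, ((a + (x i : ℝ)) / ((S:ℝ) * a + n)) * digamma (a + (x i : ℝ) + 1)|
        ≤ ∑ i, |((a + (x i : ℝ)) / ((S:ℝ) * a + n)) * digamma (a + (x i : ℝ) + 1)| :=
          Finset.abs_sum_le_sum_abs _ _
      _ ≤ ∑ _i : Fin S, L := Finset.sum_le_sum fun i _ => hterm i
      _ = (S:ℝ) * L := by rw [Finset.sum_const, card_univ, Fintype.card_fin, nsmul_eq_mul]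
  unfold HBayes
  calc |digamma ((S:ℝ) * a + n + 1) -
        ∑ i, ((a + (x i:ℝ)) / ((S:ℝ) * a + n)) * digamma (a + (x i:ℝ) + 1)|
      ≤ |digamma ((S:ℝ) * a + n + 1)| +
        |∑ i, ((a + (x i:ℝ)) / ((S:ℝ) * a + n)) * digamma (a + (x i:ℝ) + 1)| := abs_sub _ _
    _ ≤ L + (S:ℝ) * L := add_le_add h0 hsum
    _ = ((S:ℝ) + 1) * L := by ring

/-- If n ≥ Sa and S ≥ e(2n+1), then
sup_P E_P[(Ĥ^Bayes - H(P))²] ≥ (ln(S/(e(2n+1))))². -/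
theorem stmt17 (n S : ℕ) (hn : 1 ≤ n) (hS : 2 ≤ S) (a : ℝ) (ha : 0 < a)
    (hna : (S : ℝ) * a ≤ n)
    (hSn : Real.exp 1 * (2 * (n : ℝ) + 1) ≤ S) :
    sSup {r : ℝ | ∃ p : Fin S → ℝ, (∀ i, 0 ≤ p i) ∧ (∑ i, p i = 1) ∧
        r = mExp n S p (fun x =>
          (HBayes n S a x - (-∑ i, p i * Real.log (p i))) ^ 2)}
      ≥ (Real.log ((S : ℝ) / (Real.exp 1 * (2 * (n : ℝ) + 1)))) ^ 2 := by
  have hS1 : 1 ≤ S := le_trans one_le_two hS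
  have hSpos : (0:ℝ) < S := by exact_mod_cast Nat.lt_of_lt_of_le Nat.zero_lt_two hS
  have hepos : (0:ℝ) < Real.exp 1 * (2 * (n:ℝ) + 1) := by positivity
  set c : ℝ := Real.log ((S : ℝ) / (Real.exp 1 * (2 * (n : ℝ) + 1))) with hcdef
  have hc0 : 0 ≤ c := Real.log_nonneg ((one_le_div hepos).mpr hSn)
  have hceq : c = Real.log S - (1 + Real.log (2 * (n:ℝ) + 1)) := by
    rw [hcdef, Real.log_div hSpos.ne' hepos.ne',
      Real.log_mul (Real.exp_ne_zero 1) (by positivity), Real.log_exp]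
  -- uniform distribution
  set p : Fin S → ℝ := fun _ => (S:ℝ)⁻¹ with hpdef
  have hp0 : ∀ i, 0 ≤ p i := fun i => by positivity
  have hp1 : ∑ i, p i = 1 := by
    rw [hpdef, Finset.sum_const, card_univ, Fintype.card_fin, nsmul_eq_mul,
      mul_inv_cancel₀ hSpos.ne']
  have hH : (-∑ i, p i * Real.log (p i)) = Real.log S := by
    rw [hpdef]
    simp only [Real.log_inv]
    rw [Finset.sum_const, card_univ, Fintype.card_fin, nsmul_eq_mul]
    have hh : (S:ℝ) * ((S:ℝ)⁻¹ * -Real.log S) = -Real.log S := by field_simp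
    rw [hh, neg_neg]
  -- the member value
  have hmem : mExp n S p (fun x =>
      (HBayes n S a x - (-∑ i, p i * Real.log (p i))) ^ 2) ∈
      {r : ℝ | ∃ p : Fin S → ℝ, (∀ i, 0 ≤ p i) ∧ (∑ i, p i = 1) ∧
        r = mExp n S p (fun x =>
          (HBayes n S a x - (-∑ i, p i * Real.log (p i))) ^ 2)} :=
    ⟨p, hp0, hp1, rfl⟩
  -- lower bound for the member
  have hlow : c ^ 2 ≤ mExp n S p (fun x =>
      (HBayes n S a x - (-∑ i, p i * Real.log (p i))) ^ 2) := by
    apply le_mExp p hp0 hp1 (by positivity)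
    intro x hx
    have hb := hbayes_le hn hS1 ha hna x hx
    have hkey : c ≤ Real.log S - HBayes n S a x := by rw [hceq]; linarith
    have := pow_le_pow_left₀ hc0 hkey 2
    calc c ^ 2 ≤ (Real.log S - HBayes n S a x) ^ 2 := this
      _ = (HBayes n S a x - (-∑ i, p i * Real.log (p i))) ^ 2 := by rw [hH]; ring
  -- bounded above
  have hbdd : BddAbove {r : ℝ | ∃ p : Fin S → ℝ, (∀ i, 0 ≤ p i) ∧ (∑ i, p i = 1) ∧
      r = mExp n S p (fun x =>
        (HBayes n S a x - (-∑ i, p i * Real.log (p i))) ^ 2)} := by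
    set M : ℝ := ((S : ℝ) + 1) * (1 + Real.log (2 * n + 1)) + S with hM
    refine ⟨((n+1 : ℝ))^S * ((n.factorial : ℝ) * M ^ 2), ?_⟩
    rintro r ⟨q, hq0, hq1, rfl⟩
    have hM0 : 0 ≤ M := by
      have h1 : (0:ℝ) ≤ Real.log (2 * (n:ℝ) + 1) := Real.log_nonneg (by
        have : (1:ℝ) ≤ n := by exact_mod_cast hn
        linarith)
      have : (0:ℝ) ≤ (S:ℝ) := le_of_lt hSpos
      rw [hM]; nlinarith
    have hEb := entropy_nonneg q hq0 hq1
    have hEu := entropy_le q hq0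
    unfold mExp
    have hbound : ∀ x : Fin S → Fin (n+1), (if (∑ i, ((x i : ℕ))) = n then
        ((n.factorial : ℝ) / ∏ i, ((x i : ℕ).factorial : ℝ)) *
          (∏ i, q i ^ (x i : ℕ)) *
          ((fun x => (HBayes n S a x - (-∑ i, q i * Real.log (q i))) ^ 2) (fun i => (x i : ℕ)))
      else 0) ≤ (n.factorial : ℝ) * M ^ 2 := by
      intro x
      have hnf : (1:ℝ) ≤ (n.factorial : ℝ) := by exact_mod_cast Nat.one_le_iff_ne_zero.mpr n.factorial_ne_zero
      split
      · have hA : ((n.factorial : ℝ) / ∏ i, ((x i : ℕ).factorial : ℝ)) ≤ (n.factorial : ℝ) := by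
          apply div_le_self (by positivity)
          calc (1:ℝ) = ∏ _i : Fin S, (1:ℝ) := by simp
            _ ≤ ∏ i, (((x i : ℕ).factorial : ℝ)) := Finset.prod_le_prod (by simp)
                (fun i _ => by exact_mod_cast (x i : ℕ).factorial_pos)
        have hA0 : (0:ℝ) ≤ ((n.factorial : ℝ) / ∏ i, ((x i : ℕ).factorial : ℝ)) := by positivity
        have hB : (∏ i, q i ^ (x i : ℕ)) ≤ 1 := by
          apply Finset.prod_le_one
          · exact fun i _ => pow_nonneg (hq0 i) _
          · intro i _
            apply pow_le_one₀ (hq0 i)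
            exact hq1 ▸ Finset.single_le_sum (fun j _ => hq0 j) (mem_univ i)
        have hB0 : (0:ℝ) ≤ ∏ i, q i ^ (x i : ℕ) :=
          Finset.prod_nonneg fun i _ => pow_nonneg (hq0 i) _
        have hG : ((HBayes n S a (fun i => (x i : ℕ)) - (-∑ i, q i * Real.log (q i))) ^ 2) ≤ M ^ 2 := by
          have habs := abs_HBayes_le hn hS1 ha hna (fun i => (x i : ℕ))
            (fun i => Nat.lt_succ_iff.mp (x i).isLt)
          rw [abs_le] at habs
          apply sq_le_sq'
          · rw [hM]; linarith [habs.1, habs.2, hEb, hEu]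
          · rw [hM]; linarith [habs.1, habs.2, hEb, hEu]
        calc ((n.factorial : ℝ) / ∏ i, ((x i : ℕ).factorial : ℝ)) *
              (∏ i, q i ^ (x i : ℕ)) *
              ((HBayes n S a (fun i => (x i : ℕ)) - (-∑ i, q i * Real.log (q i))) ^ 2)
            ≤ (n.factorial : ℝ) * 1 * M ^ 2 := by
              apply mul_le_mul (mul_le_mul hA hB hB0 (by positivity)) hG (by positivity)
              positivity
          _ = (n.factorial : ℝ) * M ^ 2 := by ring
      · positivity
    calc (∑ x : Fin S → Fin (n + 1),
          if (∑ i, ((x i : ℕ))) = n then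
            ((n.factorial : ℝ) / ∏ i, ((x i : ℕ).factorial : ℝ)) *
              (∏ i, q i ^ (x i : ℕ)) *
              ((fun x => (HBayes n S a x - (-∑ i, q i * Real.log (q i))) ^ 2) (fun i => (x i : ℕ)))
          else 0)
        ≤ ∑ _x : Fin S → Fin (n + 1), (n.factorial : ℝ) * M ^ 2 :=
          Finset.sum_le_sum fun x _ => hbound x
      _ = ((n+1 : ℝ))^S * ((n.factorial : ℝ) * M ^ 2) := by
          rw [Finset.sum_const, card_univ, Fintype.card_fun, Fintype.card_fin, Fintype.card_fin,
            nsmul_eq_mul]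
          push_cast
          ring
  exact le_trans hlow (le_csSup hbdd hmem)
end
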